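/- arXiv:1604.06286 — 11 statements merged into one kernel-verified Lean document; each statement's English description precedes it below -/
import Mathlib

section
/- Let n ≥ 1, let A be the Cartan matrix of type A_n, and let σ be any permutation of {1,…,n}. Then the kernel of B_σ, viewed as a linear map ℚⁿ → ℚⁿ, has dimension 0 if n is even and dimension 1 if n is odd. -/
open Matrix

/-- The Cartan matrix of type `Aₙ` (nodes indexed `0, …, n-1`). -/
def cartanA (n : ℕ) : Matrix (Fin n) (Fin n) ℚ :=
  fun i j => if i = j then 2
    else if i.val + 1 = j.val ∨ j.val + 1 = i.val then -1 else 0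

/-- The acyclic exchange matrix `B_σ` attached to a Cartan matrix `A` and a permutation `σ`
(recording the order of the simple reflections in the Coxeter element):
`b i i = 0`, `b i j = -a i j` if `σ i < σ j`, and `b i j = a i j` if `σ i > σ j`. -/
def Bmat {n : ℕ} (A : Matrix (Fin n) (Fin n) ℚ) (σ : Equiv.Perm (Fin n)) :
    Matrix (Fin n) (Fin n) ℚ :=
  fun i j => if i = j then 0 else if σ i < σ j then -A i j else A i j

namespace BAux

def cs (n : ℕ) (σ : Equiv.Perm (Fin n)) (j : ℕ) : ℚ :=
  if h : j + 1 < n then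
    (if σ ⟨j, Nat.lt_of_succ_lt h⟩ < σ ⟨j + 1, h⟩ then 1 else -1) else 1

lemma cs_mul_self (n : ℕ) (σ : Equiv.Perm (Fin n)) (j : ℕ) :
    cs n σ j * cs n σ j = 1 := by
  unfold cs
  split
  · split <;> norm_num
  · norm_num

lemma cs_ne_zero (n : ℕ) (σ : Equiv.Perm (Fin n)) (j : ℕ) : cs n σ j ≠ 0 := by
  intro h
  have := cs_mul_self n σ j
  rw [h] at this; norm_num at this

lemma Bmat_entry {n : ℕ} (σ : Equiv.Perm (Fin n)) (i j : Fin n) :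
    Bmat (cartanA n) σ i j =
      (if (i : ℕ) + 1 = (j : ℕ) then cs n σ i else 0)
      + (if (j : ℕ) + 1 = (i : ℕ) then -cs n σ j else 0) := by
  rcases eq_or_ne i j with rfl | hne
  · simp [Bmat]
  · have hne' : (i:ℕ) ≠ (j:ℕ) := fun h => hne (Fin.ext h)
    unfold Bmat cartanA cs
    simp only [if_neg hne]
    by_cases h1 : (i:ℕ) + 1 = (j:ℕ)
    · have hj : (i:ℕ) + 1 < n := h1 ▸ j.2
      have h2 : ¬ ((j:ℕ) + 1 = (i:ℕ)) := by omega
      have e2 : (⟨(i:ℕ) + 1, hj⟩ : Fin n) = j := Fin.ext h1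
      simp only [if_pos h1, if_neg h2,
        if_pos (show (i:ℕ) + 1 = (j:ℕ) ∨ (j:ℕ) + 1 = (i:ℕ) from Or.inl h1),
        dif_pos hj, add_zero, Fin.eta, e2]
      split <;> norm_num
    · by_cases h2 : (j:ℕ) + 1 = (i:ℕ)
      · have hi : (j:ℕ) + 1 < n := h2 ▸ i.2
        have e2 : (⟨(j:ℕ) + 1, hi⟩ : Fin n) = i := Fin.ext h2
        simp only [if_neg h1, if_pos h2,
          if_pos (show (i:ℕ) + 1 = (j:ℕ) ∨ (j:ℕ) + 1 = (i:ℕ) from Or.inr h2),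
          dif_pos hi, zero_add, Fin.eta, e2]
        have hσ : σ i ≠ σ j := fun h => hne (σ.injective h)
        rcases lt_or_gt_of_ne hσ with h | h
        · rw [if_pos h, if_neg (asymm h)] <;> norm_num
        · rw [if_neg (asymm h), if_pos h] <;> norm_num
      · simp only [if_neg h1, if_neg h2, if_neg (not_or.mpr ⟨h1, h2⟩), add_zero]
        split <;> norm_num

lemma sum_ite_val {m : ℕ} (t : ℕ) (g : Fin m → ℚ) :
    (∑ j : Fin m, if (j : ℕ) = t then g j else 0) =
      if h : t < m then g ⟨t, h⟩ else 0 := by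
  split
  · next h =>
    rw [Finset.sum_eq_single (⟨t, h⟩ : Fin m)]
    · simp
    · intro j _ hj
      rw [if_neg (fun hc => hj (Fin.ext hc))]
    · intro hmem; exact absurd (Finset.mem_univ _) hmem
  · next h =>
    apply Finset.sum_eq_zero
    intro j _
    have hj := j.2
    rw [if_neg (by omega)]

lemma mulVec_Bmat {n : ℕ} (σ : Equiv.Perm (Fin n)) (v : Fin n → ℚ) (i : Fin n) :
    (Bmat (cartanA n) σ).mulVec v i =
      (if h : (i : ℕ) + 1 < n then cs n σ i * v ⟨(i:ℕ) + 1, h⟩ else 0)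
      - (if h : 0 < (i : ℕ) then
          cs n σ ((i:ℕ) - 1) * v ⟨(i:ℕ) - 1, lt_of_le_of_lt (Nat.pred_le _) i.2⟩ else 0) := by
  unfold mulVec dotProduct
  simp only [Bmat_entry σ, add_mul, Finset.sum_add_distrib]
  have S1 : (∑ j : Fin n, (if (i : ℕ) + 1 = (j : ℕ) then cs n σ i else 0) * v j)
      = if h : (i : ℕ) + 1 < n then cs n σ i * v ⟨(i:ℕ) + 1, h⟩ else 0 := by
    rw [show (fun j : Fin n => (if (i : ℕ) + 1 = (j : ℕ) then cs n σ i else 0) * v j)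
        = fun j : Fin n => if (j : ℕ) = (i:ℕ) + 1 then cs n σ i * v j else 0 from ?_]
    · exact sum_ite_val _ _
    · funext j
      by_cases h : (i:ℕ) + 1 = (j:ℕ)
      · rw [if_pos h, if_pos h.symm]
      · rw [if_neg h, if_neg (fun hc => h hc.symm), zero_mul]
  have S2 : (∑ j : Fin n, (if (j : ℕ) + 1 = (i : ℕ) then -cs n σ j else 0) * v j)
      = -(if h : 0 < (i : ℕ) then
          cs n σ ((i:ℕ) - 1) * v ⟨(i:ℕ) - 1, lt_of_le_of_lt (Nat.pred_le _) i.2⟩ else 0) := by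
    rw [show (fun j : Fin n => (if (j : ℕ) + 1 = (i : ℕ) then -cs n σ j else 0) * v j)
        = fun j : Fin n => if (j : ℕ) = (i:ℕ) - 1 then
            (if 0 < (i:ℕ) then -(cs n σ ((i:ℕ)-1) * v j) else 0) else 0 from ?_]
    · rw [sum_ite_val]
      by_cases h : 0 < (i:ℕ)
      · have hlt : (i:ℕ) - 1 < n := lt_of_le_of_lt (Nat.pred_le _) i.2
        rw [dif_pos hlt, if_pos h, dif_pos h]
      · rw [dif_neg h, neg_zero]
        split <;> simp [h]
    · funext j
      by_cases h : (j:ℕ) + 1 = (i:ℕ)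
      · have h0 : 0 < (i:ℕ) := by omega
        have hj : (j:ℕ) = (i:ℕ) - 1 := by omega
        rw [if_pos h, if_pos hj, if_pos h0, hj, neg_mul]
      · rw [if_neg h, zero_mul]
        by_cases hj : (j:ℕ) = (i:ℕ) - 1
        · rw [if_pos hj, if_neg (by omega)]
        · rw [if_neg hj]
  rw [S1, S2, sub_eq_add_neg]

end BAux

namespace BAux

def P (n : ℕ) (σ : Equiv.Perm (Fin n)) (k : ℕ) : ℚ := ∏ j ∈ Finset.range k, cs n σ j

lemma P_mul_self (n : ℕ) (σ : Equiv.Perm (Fin n)) (k : ℕ) : P n σ k * P n σ k = 1 := by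
  unfold P
  rw [← Finset.prod_mul_distrib]
  exact Finset.prod_eq_one fun j _ => cs_mul_self n σ j

lemma P_ne_zero (n : ℕ) (σ : Equiv.Perm (Fin n)) (k : ℕ) : P n σ k ≠ 0 := by
  intro h
  have := P_mul_self n σ k
  rw [h] at this; norm_num at this

lemma P_succ (n : ℕ) (σ : Equiv.Perm (Fin n)) (k : ℕ) :
    P n σ (k + 1) = P n σ k * cs n σ k := Finset.prod_range_succ _ _

def w (n : ℕ) (σ : Equiv.Perm (Fin n)) : Fin n → ℚ :=
  fun i => if Even (i : ℕ) then P n σ i else 0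

lemma ker_struct {n : ℕ} (hn : 0 < n) (σ : Equiv.Perm (Fin n)) (v : Fin n → ℚ)
    (hv : (Bmat (cartanA n) σ).mulVec v = 0) :
    ∀ k : ℕ, ∀ hk : k < n, v ⟨k, hk⟩ = v ⟨0, hn⟩ * w n σ ⟨k, hk⟩ := by
  intro k
  induction k using Nat.strong_induction_on with
  | _ k ih =>
    intro hk
    match k, hk with
    | 0, hk => simp [w, P]
    | 1, hk =>
      have h0 := congrFun hv ⟨0, hn⟩
      rw [mulVec_Bmat, Pi.zero_apply] at h0
      simp only [dif_pos (show (0:ℕ) + 1 < n from hk), dif_neg (lt_irrefl 0)] at h0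
      rw [sub_zero] at h0
      have hv1 : v ⟨1, hk⟩ = 0 := by
        rcases mul_eq_zero.mp h0 with h | h
        · exact absurd h (cs_ne_zero n σ 0)
        · exact h
      rw [hv1]
      simp [w]
    | (k+2), hk =>
      have hk1 : k + 1 < n := by omega
      have h0 := congrFun hv ⟨k + 1, hk1⟩
      rw [mulVec_Bmat, Pi.zero_apply] at h0
      simp only [dif_pos (show (k + 1) + 1 < n from hk), dif_pos (Nat.succ_pos k),
        Nat.add_sub_cancel] at h0
      have heq : v ⟨k + 2, hk⟩ = cs n σ (k + 1) * (cs n σ k * v ⟨k, by omega⟩) := by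
        have h1 : cs n σ (k + 1) * v ⟨k + 2, hk⟩ = cs n σ k * v ⟨k, by omega⟩ :=
          sub_eq_zero.mp h0
        have := congrArg (fun x => cs n σ (k + 1) * x) h1
        simpa [← mul_assoc, cs_mul_self n σ (k + 1)] using this
      rw [heq, ih k (by omega) (by omega)]
      unfold w
      have hpar : Even (k + 2) ↔ Even k := by simp [Nat.even_add]
      by_cases he : Even k
      · rw [if_pos he, if_pos (hpar.mpr he)]
        show cs n σ (k+1) * (cs n σ k * (v ⟨0, hn⟩ * P n σ k)) = v ⟨0, hn⟩ * P n σ (k+2)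
        rw [P_succ, P_succ]
        ring
      · rw [if_neg he, if_neg (fun h => he (hpar.mp h))]
        ring

lemma w_ker {n : ℕ} (hodd : ¬ Even n) (σ : Equiv.Perm (Fin n)) :
    (Bmat (cartanA n) σ).mulVec (w n σ) = 0 := by
  funext i
  rw [mulVec_Bmat, Pi.zero_apply]
  by_cases he : Even (i : ℕ)
  · have z1 : ∀ h : (i:ℕ) + 1 < n, w n σ ⟨(i:ℕ) + 1, h⟩ = 0 := by
      intro h
      have : ¬ Even ((i:ℕ) + 1) := by simp [Nat.even_add_one, Nat.not_odd_iff_even.mpr he]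
      simp only [w, if_neg this]
    have z2 : ∀ h : 0 < (i:ℕ), w n σ ⟨(i:ℕ) - 1, lt_of_le_of_lt (Nat.pred_le _) i.2⟩ = 0 := by
      intro h
      have : ¬ Even ((i:ℕ) - 1) := by
        rcases he with ⟨m, hm⟩
        rcases Nat.even_or_odd ((i:ℕ) - 1) with hE | hO
        · exfalso
          rcases hE with ⟨l, hl⟩
          omega
        · exact (Nat.not_even_iff_odd).mpr hO
      simp only [w, if_neg this]
    split
    · next h =>
      rw [z1 h, mul_zero, zero_sub, neg_eq_zero]
      split
      · next h2 => rw [z2 h2, mul_zero]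
      · rfl
    · next h =>
      rw [zero_sub, neg_eq_zero]
      split
      · next h2 => rw [z2 h2, mul_zero]
      · rfl
  · -- i odd
    have h0 : 0 < (i:ℕ) := by
      rcases Nat.eq_zero_or_pos (i:ℕ) with h | h
      · exact absurd (h ▸ Even.zero) he
      · exact h
    have h1 : (i:ℕ) + 1 < n := by
      rcases lt_or_eq_of_le (Nat.succ_le_of_lt i.2) with h | h
      · exact h
      · exfalso
        apply hodd
        rw [← h]
        simpa [Nat.even_add_one] using he
    rw [dif_pos h1, dif_pos h0]
    have e1 : Even ((i:ℕ) + 1) := by simpa [Nat.even_add_one] using he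
    have e2 : Even ((i:ℕ) - 1) := by
      rcases Nat.not_even_iff_odd.mp he with ⟨m, hm⟩
      exact ⟨m, by omega⟩
    simp only [w, if_pos e1, if_pos e2]
    have hstep : P n σ ((i:ℕ) + 1) = P n σ ((i:ℕ) - 1) * cs n σ ((i:ℕ) - 1) * cs n σ (i:ℕ) := by
      have hone : (i:ℕ) = ((i:ℕ) - 1) + 1 := by omega
      rw [P_succ, hone, P_succ, Nat.add_sub_cancel]
    rw [hstep]
    have := cs_mul_self n σ (i:ℕ)
    linear_combination (P n σ ((i:ℕ) - 1) * cs n σ ((i:ℕ) - 1)) * this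

end BAux

/-- In type `Aₙ`, the kernel of any acyclic exchange matrix `B_σ` has dimension `0`
if `n` is even and `1` if `n` is odd. -/
theorem kernel_dim_Bmat_typeA (n : ℕ) (hn : 1 ≤ n) (σ : Equiv.Perm (Fin n)) :
    Module.finrank ℚ (LinearMap.ker (Matrix.toLin' (Bmat (cartanA n) σ))) =
      if Even n then 0 else 1 := by
  have hn0 : 0 < n := hn
  by_cases hpar : Even n
  · rw [if_pos hpar]
    have hker : LinearMap.ker (Matrix.toLin' (Bmat (cartanA n) σ)) = ⊥ := by
      rw [Submodule.eq_bot_iff]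
      intro v hv
      rw [LinearMap.mem_ker, Matrix.toLin'_apply] at hv
      have hstruct := BAux.ker_struct hn0 σ v hv
      have h2 : 2 ≤ n := by
        rcases hpar with ⟨m, hm⟩; omega
      have hlast := congrFun hv ⟨n - 1, by omega⟩
      rw [BAux.mulVec_Bmat, Pi.zero_apply] at hlast
      simp only [dif_neg (show ¬ (n - 1 + 1 < n) by omega),
        dif_pos (show 0 < n - 1 by omega)] at hlast
      rw [zero_sub, neg_eq_zero] at hlast
      have hv2 : v ⟨n - 1 - 1, by omega⟩ = 0 := by
        rcases mul_eq_zero.mp hlast with h | h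
        · exact absurd h (BAux.cs_ne_zero n σ _)
        · exact h
      have heven : Even (n - 1 - 1) := by
        rcases hpar with ⟨m, hm⟩
        exact ⟨m - 1, by omega⟩
      have hv0 : v ⟨0, hn0⟩ = 0 := by
        have := hstruct (n - 1 - 1) (by omega)
        rw [hv2] at this
        unfold BAux.w at this
        rw [if_pos heven] at this
        rcases mul_eq_zero.mp this.symm with h | h
        · exact h
        · exact absurd h (BAux.P_ne_zero n σ _)
      funext i
      rcases i with ⟨k, hk⟩
      rw [Pi.zero_apply, hstruct k hk, hv0, zero_mul]
    rw [hker]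
    exact finrank_bot ℚ _
  · rw [if_neg hpar]
    have hker : LinearMap.ker (Matrix.toLin' (Bmat (cartanA n) σ)) = ℚ ∙ (BAux.w n σ) := by
      apply le_antisymm
      · intro v hv
        rw [LinearMap.mem_ker, Matrix.toLin'_apply] at hv
        have hstruct := BAux.ker_struct hn0 σ v hv
        rw [Submodule.mem_span_singleton]
        refine ⟨v ⟨0, hn0⟩, ?_⟩
        funext i
        rcases i with ⟨k, hk⟩
        rw [Pi.smul_apply, smul_eq_mul]
        exact (hstruct k hk).symm
      · rw [Submodule.span_singleton_le_iff_mem, LinearMap.mem_ker, Matrix.toLin'_apply]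
        exact BAux.w_ker hpar σ
    rw [hker]
    refine finrank_span_singleton ?_
    intro h
    have := congrFun h ⟨0, hn0⟩
    simp [BAux.w, BAux.P] at this
end

section
/- Let n ≥ 2, let A be the Cartan matrix of type B_n, and let σ be any permutation of {1,…,n}. Then the kernel of B_σ, viewed as a linear map ℚⁿ → ℚⁿ, has dimension 0 if n is even and dimension 1 if n is odd. -/
open Matrix

/-- The Cartan matrix of type `Bₙ` (nodes indexed `0, …, n-1`; the short root is the last
node): `a i i = 2`, consecutive nodes give `-1`, except `a (n-2) (n-1) = -2`. -/
def cartanB (n : ℕ) : Matrix (Fin n) (Fin n) ℚ :=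
  fun i j => if i = j then 2
    else if i.val + 1 = j.val then (if j.val = n - 1 then -2 else -1)
    else if j.val + 1 = i.val then -1 else 0

section Tri

variable {n : ℕ} (M : Matrix (Fin n) (Fin n) ℚ)

/-- Tridiagonal structure hypothesis. -/
def TriDiag : Prop :=
  (∀ i j : Fin n, ¬(i.val + 1 = j.val) → ¬(j.val + 1 = i.val) → M i j = 0) ∧
  (∀ i j : Fin n, i.val + 1 = j.val → M i j ≠ 0 ∧ M j i ≠ 0)

variable {M} {x : Fin n → ℚ}

lemma row_first (hM : TriDiag M) (hx : M.mulVec x = 0) (h1 : 1 < n) :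
    x ⟨1, h1⟩ = 0 := by
  have h := congrFun hx ⟨0, by omega⟩
  rw [Matrix.mulVec, dotProduct] at h
  rw [Finset.sum_eq_single_of_mem (⟨1, h1⟩ : Fin n) (Finset.mem_univ _)] at h
  · rcases (hM.2 ⟨0, by omega⟩ ⟨1, h1⟩ rfl).1 with hne
    rcases mul_eq_zero.1 h with h' | h'
    · exact absurd h' hne
    · exact h'
  · intro b _ hb
    have hb' : b.val ≠ 1 := fun hv => hb (Fin.ext hv)
    rw [hM.1 ⟨0, by omega⟩ b (by simp only [Fin.val_mk]; omega)
      (by simp only [Fin.val_mk]; omega), zero_mul]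

lemma row_two (hM : TriDiag M) (hx : M.mulVec x = 0) (t : ℕ) (ht : t + 2 < n) :
    M ⟨t+1, by omega⟩ ⟨t, by omega⟩ * x ⟨t, by omega⟩ +
    M ⟨t+1, by omega⟩ ⟨t+2, by omega⟩ * x ⟨t+2, by omega⟩ = 0 := by
  have h := congrFun hx ⟨t+1, by omega⟩
  rw [Matrix.mulVec, dotProduct] at h
  rw [Finset.sum_eq_add_of_mem (⟨t, by omega⟩ : Fin n) (⟨t+2, by omega⟩ : Fin n)
      (Finset.mem_univ _) (Finset.mem_univ _) (by simp [Fin.ext_iff])] at h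
  · exact h
  · intro c _ hc
    have h1 : c.val ≠ t := fun hv => hc.1 (Fin.ext hv)
    have h2 : c.val ≠ t + 2 := fun hv => hc.2 (Fin.ext hv)
    rw [hM.1 ⟨t+1, by omega⟩ c (by simp only [Fin.val_mk]; omega)
      (by simp only [Fin.val_mk]; omega), zero_mul]

/-- All odd-index entries of a kernel vector vanish. -/
lemma odd_zero (hM : TriDiag M) (hx : M.mulVec x = 0) :
    ∀ k, (hk : k < n) → k % 2 = 1 → x ⟨k, hk⟩ = 0 := by
  intro k
  induction k using Nat.strong_induction_on with
  | _ k ih =>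
    intro hk hodd
    match k, hodd with
    | 1, _ => exact row_first hM hx hk
    | (t+3), _ =>
      have h2 := row_two hM hx (t+1) hk
      have hxt : x ⟨t+1, by omega⟩ = 0 := ih (t+1) (by omega) (by omega) (by omega)
      rw [hxt, mul_zero, zero_add] at h2
      rcases mul_eq_zero.1 h2 with h' | h'
      · exact absurd h' (hM.2 ⟨t+2, by omega⟩ ⟨t+3, hk⟩ rfl).1
      · exact h'

/-- If the first entry of a kernel vector vanishes, all even-index entries vanish. -/
lemma evenIdx_zero (hM : TriDiag M) (hx : M.mulVec x = 0) (hn : 0 < n)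
    (h0 : x ⟨0, hn⟩ = 0) : ∀ k, (hk : k < n) → k % 2 = 0 → x ⟨k, hk⟩ = 0 := by
  intro k
  induction k using Nat.strong_induction_on with
  | _ k ih =>
    intro hk heven
    match k, heven with
    | 0, _ => exact h0
    | (t+2), _ =>
      have h2 := row_two hM hx t hk
      have hxt : x ⟨t, by omega⟩ = 0 := ih t (by omega) (by omega) (by omega)
      rw [hxt, mul_zero, zero_add] at h2
      rcases mul_eq_zero.1 h2 with h' | h'
      · exact absurd h' (hM.2 ⟨t+1, by omega⟩ ⟨t+2, hk⟩ rfl).1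
      · exact h'

lemma eq_zero_of_first (hM : TriDiag M) (hx : M.mulVec x = 0) (hn : 0 < n)
    (h0 : x ⟨0, hn⟩ = 0) : x = 0 := by
  funext k
  rcases Nat.even_or_odd k.val with he | ho
  · have := evenIdx_zero hM hx hn h0 k.val k.isLt (Nat.even_iff.1 he)
    simpa using this
  · have := odd_zero hM hx k.val k.isLt (Nat.odd_iff.1 ho)
    simpa using this

/-- The index-reversed matrix. -/
def revM (N : Matrix (Fin n) (Fin n) ℚ) : Matrix (Fin n) (Fin n) ℚ :=
  Matrix.of fun i j => N i.rev j.rev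

lemma triDiag_rev (hM : TriDiag M) : TriDiag (revM M) := by
  constructor
  · intro i j h1 h2
    have hi := i.isLt; have hj := j.isLt
    exact hM.1 i.rev j.rev (by simp only [Fin.val_rev]; omega)
      (by simp only [Fin.val_rev]; omega)
  · intro i j h
    have hi := i.isLt; have hj := j.isLt
    have h' : j.rev.val + 1 = i.rev.val := by simp only [Fin.val_rev]; omega
    exact ⟨(hM.2 j.rev i.rev h').2, (hM.2 j.rev i.rev h').1⟩

lemma mulVec_rev (hx : M.mulVec x = 0) : (revM M).mulVec (x ∘ Fin.rev) = 0 := by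
  funext i
  have h := congrFun hx i.rev
  rw [Matrix.mulVec, dotProduct] at h
  rw [Pi.zero_apply] at h ⊢
  rw [Matrix.mulVec, dotProduct]
  calc ∑ j, revM M i j * (x ∘ Fin.rev) j
      = ∑ j, M i.rev j * x j :=
        Fintype.sum_bijective Fin.rev Fin.rev_involutive.bijective _ _ (fun k => rfl)
    _ = 0 := h

end Tri

section Bfacts
variable {n : ℕ} (σ : Equiv.Perm (Fin n))

/-- The symmetrizing diagonal for type `Bₙ`. -/
noncomputable def dB (n : ℕ) : Fin n → ℚ := fun i => if i.val = n - 1 then 2 else 1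

lemma dB_ne_zero (i : Fin n) : dB n i ≠ 0 := by
  unfold dB; split <;> norm_num

lemma cartanB_sym (i j : Fin n) :
    dB n i * cartanB n i j = dB n j * cartanB n j i := by
  rcases eq_or_ne i j with he | hne
  · rw [he]
  · have hvne : i.val ≠ j.val := fun h => hne (Fin.ext h)
    by_cases h1 : i.val + 1 = j.val
    · have hi : i.val ≠ n - 1 := by have := j.isLt; omega
      have h2 : ¬ (j.val + 1 = i.val) := by omega
      simp only [cartanB, dB, if_neg hne, if_neg (Ne.symm hne), if_pos h1, if_neg h2,
        if_neg hi]
      split <;> norm_num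
    · by_cases h2 : j.val + 1 = i.val
      · have hj : j.val ≠ n - 1 := by have := i.isLt; omega
        simp only [cartanB, dB, if_neg hne, if_neg (Ne.symm hne), if_neg h1, if_pos h2,
          if_neg hj]
        split <;> norm_num
      · simp only [cartanB, if_neg hne, if_neg (Ne.symm hne), if_neg h1, if_neg h2]
        ring

lemma cartanB_adj_ne (i j : Fin n) (h : i.val + 1 = j.val) :
    cartanB n i j ≠ 0 ∧ cartanB n j i ≠ 0 := by
  have hij : i ≠ j := by intro he; rw [he] at h; omega
  have hji : ¬ (j.val + 1 = i.val) := by omega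
  constructor
  · simp only [cartanB, if_neg hij, if_pos h]
    split <;> norm_num
  · simp only [cartanB, if_neg (Ne.symm hij), if_neg hji, if_pos h]
    norm_num

lemma Bmat_zero (i j : Fin n) (h1 : ¬(i.val + 1 = j.val)) (h2 : ¬(j.val + 1 = i.val)) :
    Bmat (cartanB n) σ i j = 0 := by
  rcases eq_or_ne i j with he | hne
  · simp [Bmat, he]
  · have hA : cartanB n i j = 0 := by
      simp only [cartanB, if_neg hne, if_neg h1, if_neg h2]
    simp [Bmat, if_neg hne, hA]

lemma Bmat_adj_ne (i j : Fin n) (h : i.val + 1 = j.val) :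
    Bmat (cartanB n) σ i j ≠ 0 ∧ Bmat (cartanB n) σ j i ≠ 0 := by
  have hij : i ≠ j := by intro he; rw [he] at h; omega
  obtain ⟨hA1, hA2⟩ := cartanB_adj_ne i j h
  constructor
  · simp only [Bmat, if_neg hij]
    split
    · simpa using hA1
    · exact hA1
  · simp only [Bmat, if_neg (Ne.symm hij)]
    split
    · simpa using hA2
    · exact hA2

lemma triDiag_Bmat : TriDiag (Bmat (cartanB n) σ) :=
  ⟨Bmat_zero σ, Bmat_adj_ne σ⟩

lemma Bmat_skew (i j : Fin n) :
    dB n j * Bmat (cartanB n) σ j i = -(dB n i * Bmat (cartanB n) σ i j) := by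
  rcases eq_or_ne i j with he | hne
  · simp [Bmat, he]
  · have hσ : σ i ≠ σ j := fun h => hne (σ.injective h)
    have hsym := cartanB_sym i j
    simp only [Bmat, if_neg hne, if_neg (Ne.symm hne)]
    rcases lt_or_gt_of_ne hσ with h | h
    · rw [if_pos h, if_neg (not_lt.mpr h.le)]
      rw [mul_neg]
      linarith
    · rw [if_neg (not_lt.mpr h.le), if_pos h]
      rw [mul_neg]
      linarith

lemma det_Bmat_eq_zero (hodd : Odd n) : (Bmat (cartanB n) σ).det = 0 := by
  set B := Bmat (cartanB n) σ with hBdef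
  set S := Matrix.diagonal (dB n) * B with hSdef
  have hT : Sᵀ = -S := by
    ext i j
    simp only [hSdef, Matrix.transpose_apply, Matrix.diagonal_mul, Matrix.neg_apply]
    exact Bmat_skew σ i j
  have h1 : S.det = 0 := by
    have h2 : S.det = (-1 : ℚ) ^ (Fintype.card (Fin n)) * S.det := by
      conv_lhs => rw [← Matrix.det_transpose S, hT, Matrix.det_neg]
    rw [Fintype.card_fin, hodd.neg_one_pow] at h2
    linarith
  have h3 : S.det = (∏ i, dB n i) * B.det := by
    rw [hSdef, Matrix.det_mul, Matrix.det_diagonal]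
  have h4 : (∏ i, dB n i) ≠ 0 :=
    Finset.prod_ne_zero_iff.mpr (fun i _ => dB_ne_zero i)
  rw [h3] at h1
  exact (mul_eq_zero.mp h1).resolve_left h4

end Bfacts

/-- In type `Bₙ`, the kernel of any acyclic exchange matrix `B_σ` has dimension `0`
if `n` is even and `1` if `n` is odd. -/
theorem kernel_dim_Bmat_typeB (n : ℕ) (hn : 2 ≤ n) (σ : Equiv.Perm (Fin n)) :
    Module.finrank ℚ (LinearMap.ker (Matrix.toLin' (Bmat (cartanB n) σ))) =
      if Even n then 0 else 1 := by
  set B := Bmat (cartanB n) σ with hBdef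
  have hB : TriDiag B := triDiag_Bmat σ
  have hn0 : 0 < n := by omega
  have hmem : ∀ x : Fin n → ℚ, x ∈ LinearMap.ker (Matrix.toLin' B) ↔ B.mulVec x = 0 := by
    intro x
    rw [LinearMap.mem_ker, Matrix.toLin'_apply]
  rcases Nat.even_or_odd n with he | ho
  · rw [if_pos he]
    suffices h : LinearMap.ker (Matrix.toLin' B) = ⊥ by
      rw [h]; exact finrank_bot ℚ _
    rw [Submodule.eq_bot_iff]
    intro x hx
    rw [hmem] at hx
    -- first entry vanishes, via the reversed matrix
    have hx' := mulVec_rev hx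
    have hrev : (x ∘ Fin.rev) ⟨n - 1, by omega⟩ = 0 := by
      refine odd_zero (triDiag_rev hB) hx' (n - 1) (by omega) ?_
      obtain ⟨m, hm⟩ := he
      omega
    have h0 : x ⟨0, hn0⟩ = 0 := by
      have : (Fin.rev ⟨n - 1, by omega⟩ : Fin n) = ⟨0, hn0⟩ := by
        apply Fin.ext
        simp only [Fin.val_rev]
        omega
      rwa [Function.comp_apply, this] at hrev
    exact eq_zero_of_first hB hx hn0 h0
  · rw [if_neg (by simpa [Nat.not_even_iff_odd] using ho)]
    apply le_antisymm
    · -- dimension at most one: evaluation at 0 is injective on the kernel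
      have hfr : (1 : ℕ) = Module.finrank ℚ ℚ := (Module.finrank_self ℚ).symm
      rw [hfr]
      refine LinearMap.finrank_le_finrank_of_injective
        (f := (LinearMap.proj (⟨0, hn0⟩ : Fin n)).comp
          (LinearMap.ker (Matrix.toLin' B)).subtype) ?_
      rw [← LinearMap.ker_eq_bot, Submodule.eq_bot_iff]
      rintro ⟨x, hx⟩ hfx
      rw [hmem] at hx
      have h0 : x ⟨0, hn0⟩ = 0 := hfx
      have := eq_zero_of_first hB hx hn0 h0
      exact Subtype.ext this
    · -- dimension at least one: the determinant vanishes
      have hdet := det_Bmat_eq_zero σ ho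
      obtain ⟨v, hv0, hv⟩ := Matrix.exists_mulVec_eq_zero_iff.mpr hdet
      have hvmem : v ∈ LinearMap.ker (Matrix.toLin' B) := (hmem v).mpr hv
      have : Nontrivial (LinearMap.ker (Matrix.toLin' B)) :=
        ⟨⟨v, hvmem⟩, 0, by simp [Subtype.ext_iff, hv0]⟩
      exact Module.finrank_pos_iff.mpr this
end

section
/- Let n ≥ 4, let A be the Cartan matrix of type D_n, and let σ be any permutation of {1,…,n}. Then the kernel of B_σ, viewed as a linear map ℚⁿ → ℚⁿ, has dimension 2 if n is even and dimension 1 if n is odd. -/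
open Matrix

/-- The Cartan matrix of type `Dₙ` (nodes indexed `0, …, n-1`; the Dynkin diagram has
edges `{i, i+1}` for `i + 1 ≤ n - 2` and the edge `{n-3, n-1}`). -/
def cartanD (n : ℕ) : Matrix (Fin n) (Fin n) ℚ :=
  fun i j => if i = j then 2
    else if (i.val + 1 = j.val ∧ j.val ≤ n - 2) ∨ (j.val + 1 = i.val ∧ i.val ≤ n - 2) ∨
      (i.val = n - 3 ∧ j.val = n - 1) ∨ (i.val = n - 1 ∧ j.val = n - 3) then -1 else 0

namespace KerD

def Xv (n : ℕ) (x : Fin n → ℚ) (m : ℕ) : ℚ := if h : m < n then x ⟨m, h⟩ else 0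

lemma sum_indicator (n : ℕ) (x : Fin n → ℚ) (m : ℕ) (c : ℚ) :
    ∑ j : Fin n, (if (j : ℕ) = m then c * x j else 0) = c * Xv n x m := by
  rcases lt_or_ge m n with h | h
  · rw [Xv, dif_pos h, Finset.sum_eq_single (⟨m, h⟩ : Fin n)]
    · simp
    · intro b _ hb
      rw [if_neg]
      simpa [Fin.ext_iff] using hb
    · simp
  · rw [Xv, dif_neg (by omega), mul_zero]
    apply Finset.sum_eq_zero
    intro j _
    rw [if_neg (by omega)]

lemma sum_indicator' (n : ℕ) (x : Fin n → ℚ) (P : Prop) [Decidable P] (m : ℕ) (c : ℚ) :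
    ∑ j : Fin n, (if P ∧ (j : ℕ) = m then c * x j else 0)
      = if P then c * Xv n x m else 0 := by
  by_cases hP : P
  · simp only [hP, true_and, if_true]; exact sum_indicator n x m c
  · simp [hP]

lemma rowFormula {n : ℕ} (hn : 4 ≤ n) (x : Fin n → ℚ) (i : Fin n) :
    (Bmat (cartanD n) 1).mulVec x i =
      (if 1 ≤ i.val ∧ i.val ≤ n-2 then (-1) * Xv n x (i.val - 1) else 0)
      + (if i.val + 1 ≤ n-2 then (1:ℚ) * Xv n x (i.val + 1) else 0)
      + (if i.val = n-3 then (1:ℚ) * Xv n x (n-1) else 0)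
      + (if i.val = n-1 then (-1) * Xv n x (n-3) else 0) := by
  rw [← sum_indicator' n x _ (i.val - 1) (-1), ← sum_indicator' n x _ (i.val + 1) 1,
    ← sum_indicator' n x _ (n-1) 1, ← sum_indicator' n x _ (n-3) (-1),
    ← Finset.sum_add_distrib, ← Finset.sum_add_distrib, ← Finset.sum_add_distrib]
  rw [Matrix.mulVec, dotProduct]
  apply Finset.sum_congr rfl
  intro j _
  rcases i with ⟨iv, hi⟩
  rcases j with ⟨jv, hj⟩
  simp only [Bmat, cartanD, Equiv.Perm.coe_one, id_eq, Fin.mk_lt_mk, Fin.mk.injEq]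
  split_ifs <;> first | (exfalso; omega) | ring

end KerD

namespace KerD

variable {n : ℕ}

def vv (n : ℕ) : Fin n → ℚ := fun i => if i.val % 2 = 0 then 1 else 0
def ww (n : ℕ) : Fin n → ℚ := fun i => if i.val = n-1 then 1 else if i.val = n-2 then -1 else 0

lemma Xv_vv (m : ℕ) : Xv n (vv n) m = if m < n ∧ m % 2 = 0 then 1 else 0 := by
  unfold Xv vv
  rcases Nat.lt_or_ge m n with h | h
  · rw [dif_pos h]
    simp only [Fin.val_mk]
    split_ifs <;> first | rfl | (exfalso; omega)
  · rw [dif_neg (by omega), if_neg (by omega)]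

lemma Xv_ww (hn : 4 ≤ n) (m : ℕ) :
    Xv n (ww n) m = if m = n-1 then 1 else if m = n-2 then -1 else 0 := by
  unfold Xv ww
  rcases Nat.lt_or_ge m n with h | h
  · rw [dif_pos h]
  · rw [dif_neg (by omega), if_neg (by omega), if_neg (by omega)]

lemma Bvv (hn : 4 ≤ n) (hev : n % 2 = 0) (i : Fin n) :
    (Bmat (cartanD n) 1).mulVec (vv n) i = 0 := by
  rw [rowFormula hn]
  simp only [Xv_vv]
  have hi := i.isLt
  split_ifs <;> first | (exfalso; omega) | norm_num

lemma Bww (hn : 4 ≤ n) (i : Fin n) :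
    (Bmat (cartanD n) 1).mulVec (ww n) i = 0 := by
  rw [rowFormula hn]
  simp only [Xv_ww hn]
  have hi := i.isLt
  split_ifs <;> first | (exfalso; omega) | norm_num

end KerD

namespace KerD

variable {n : ℕ}

section descr

variable (hn : 4 ≤ n) (x : Fin n → ℚ) (hx : (Bmat (cartanD n) 1).mulVec x = 0)

include hn hx

lemma hRow : ∀ (k : ℕ) (hk : k < n),
    (if 1 ≤ k ∧ k ≤ n-2 then (-1) * Xv n x (k - 1) else 0)
      + (if k + 1 ≤ n-2 then (1:ℚ) * Xv n x (k + 1) else 0)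
      + (if k = n-3 then (1:ℚ) * Xv n x (n-1) else 0)
      + (if k = n-1 then (-1) * Xv n x (n-3) else 0) = 0 := by
  intro k hk
  have h := rowFormula hn x ⟨k, hk⟩
  simp only [Fin.val_mk] at h
  rw [← h]
  rw [hx]
  rfl

lemma hE1 : Xv n x 1 = 0 := by
  have h := hRow hn x hx 0 (by omega)
  rw [if_neg (by omega), if_pos (by omega), if_neg (by omega), if_neg (by omega)] at h
  norm_num at h
  exact h

lemma hE2 : ∀ k, 1 ≤ k → k ≤ n - 4 → Xv n x (k+1) = Xv n x (k-1) := by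
  intro k h1 h2
  have h := hRow hn x hx k (by omega)
  rw [if_pos (by omega), if_pos (by omega), if_neg (by omega), if_neg (by omega)] at h
  linarith

lemma hE3 : Xv n x (n-2) = Xv n x (n-4) - Xv n x (n-1) := by
  have h := hRow hn x hx (n-3) (by omega)
  rw [if_pos (by omega), if_pos (by omega), if_pos (by omega), if_neg (by omega)] at h
  rw [show n-3-1 = n-4 by omega, show n-3+1 = n-2 by omega] at h
  linarith

lemma hE4 : Xv n x (n-3) = 0 := by
  have h := hRow hn x hx (n-2) (by omega)
  rw [if_pos (by omega), if_neg (by omega), if_neg (by omega), if_neg (by omega)] at h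
  rw [show n-2-1 = n-3 by omega] at h
  linarith

lemma hprop : ∀ k, k ≤ n - 3 → Xv n x k = if k % 2 = 0 then Xv n x 0 else 0 := by
  intro k
  induction k using Nat.strong_induction_on with
  | _ k ih =>
    intro hk
    match k with
    | 0 => simp
    | 1 =>
      rw [if_neg (by omega)]
      exact hE1 hn x hx
    | (m+2) =>
      have h2 := hE2 hn x hx (m+1) (by omega) (by omega)
      rw [show m+1+1 = m+2 by omega, show m+1-1 = m by omega] at h2
      rw [h2, ih m (by omega) (by omega), show (m+2) % 2 = m % 2 by omega]

lemma descr_even (hev : n % 2 = 0) :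
    x = Xv n x 0 • vv n + Xv n x (n-1) • ww n := by
  funext i
  have hxk : x i = Xv n x i.val := by rw [Xv, dif_pos i.isLt]
  have hi := i.isLt
  simp only [Pi.add_apply, Pi.smul_apply, smul_eq_mul, vv, ww]
  rcases le_or_gt i.val (n-3) with hc | hc
  · rw [hxk, hprop hn x hx i.val hc, if_neg (by omega : ¬ i.val = n-1),
      if_neg (by omega : ¬ i.val = n-2)]
    split_ifs <;> ring
  · rcases (by omega : i.val = n-2 ∨ i.val = n-1) with hc2 | hc2
    · rw [hxk, hc2, hE3 hn x hx, hprop hn x hx (n-4) (by omega),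
        if_pos (by omega : (n-4) % 2 = 0), if_pos (by omega : (n-2) % 2 = 0),
        if_neg (by omega : ¬ n-2 = n-1), if_pos rfl]
      ring
    · rw [hxk, hc2, if_neg (by omega : ¬ (n-1) % 2 = 0), if_pos rfl]
      ring

lemma descr_odd (hodd : n % 2 = 1) :
    x = Xv n x (n-1) • ww n := by
  have hX0 : Xv n x 0 = 0 := by
    have h := hprop hn x hx (n-3) (by omega)
    rw [if_pos (by omega)] at h
    rw [← h, hE4 hn x hx]
  funext i
  have hxk : x i = Xv n x i.val := by rw [Xv, dif_pos i.isLt]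
  have hi := i.isLt
  simp only [Pi.smul_apply, smul_eq_mul, ww]
  rcases le_or_gt i.val (n-3) with hc | hc
  · rw [hxk, hprop hn x hx i.val hc, if_neg (by omega : ¬ i.val = n-1),
      if_neg (by omega : ¬ i.val = n-2)]
    split_ifs <;> simp [hX0]
  · rcases (by omega : i.val = n-2 ∨ i.val = n-1) with hc2 | hc2
    · rw [hxk, hc2, hE3 hn x hx, hprop hn x hx (n-4) (by omega),
        if_neg (by omega : ¬ (n-4) % 2 = 0),
        if_neg (by omega : ¬ n-2 = n-1), if_pos rfl]
      ring
    · rw [hxk, hc2, if_pos rfl]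
      ring

end descr

end KerD

namespace KerD

lemma ww_ne_zero {n : ℕ} (hn : 4 ≤ n) : ww n ≠ 0 := by
  intro h
  have := congrFun h ⟨n-1, by omega⟩
  rw [ww] at this
  simp only [Fin.val_mk, if_pos rfl, Pi.zero_apply] at this
  norm_num at this

lemma finrank_ker_B1 {n : ℕ} (hn : 4 ≤ n) :
    Module.finrank ℚ (LinearMap.ker (Matrix.toLin' (Bmat (cartanD n) 1))) =
      if n % 2 = 0 then 2 else 1 := by
  by_cases hev : n % 2 = 0
  · rw [if_pos hev]
    have hker : LinearMap.ker (Matrix.toLin' (Bmat (cartanD n) 1))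
        = Submodule.span ℚ {vv n, ww n} := by
      apply le_antisymm
      · intro x hx
        rw [LinearMap.mem_ker, Matrix.toLin'_apply] at hx
        rw [Submodule.mem_span_pair]
        exact ⟨Xv n x 0, Xv n x (n-1), (descr_even hn x hx hev).symm⟩
      · rw [Submodule.span_le]
        intro z hz
        simp only [Set.mem_insert_iff, Set.mem_singleton_iff] at hz
        rcases hz with rfl | rfl <;>
          · rw [SetLike.mem_coe, LinearMap.mem_ker, Matrix.toLin'_apply]
            funext i
            first
              | exact Bvv hn hev i
              | exact Bww hn i
    rw [hker]
    have hset : ({vv n, ww n} : Set (Fin n → ℚ)) = Set.range ![vv n, ww n] := by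
      simp [Matrix.range_cons, Matrix.range_empty, Set.pair_comm]
    rw [hset, finrank_span_eq_card ?_]
    · simp
    · rw [linearIndependent_fin2]
      constructor
      · show ww n ≠ 0
        exact ww_ne_zero hn
      · intro a h
        have h0 := congrFun h ⟨0, by omega⟩
        simp only [Matrix.cons_val_one, Matrix.head_cons, Matrix.cons_val_zero,
          Pi.smul_apply, smul_eq_mul, vv, ww, Fin.val_mk] at h0
        rw [if_neg (by omega : ¬ (0:ℕ) = n-1), if_neg (by omega : ¬ (0:ℕ) = n-2),
          if_pos (by norm_num)] at h0
        norm_num at h0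
  · rw [if_neg hev]
    have hodd : n % 2 = 1 := by omega
    have hker : LinearMap.ker (Matrix.toLin' (Bmat (cartanD n) 1))
        = Submodule.span ℚ {ww n} := by
      apply le_antisymm
      · intro x hx
        rw [LinearMap.mem_ker, Matrix.toLin'_apply] at hx
        rw [Submodule.mem_span_singleton]
        exact ⟨Xv n x (n-1), (descr_odd hn x hx hodd).symm⟩
      · rw [Submodule.span_le]
        intro z hz
        simp only [Set.mem_singleton_iff] at hz
        subst hz
        rw [SetLike.mem_coe, LinearMap.mem_ker, Matrix.toLin'_apply]
        funext i
        exact Bww hn i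
    rw [hker, finrank_span_singleton (ww_ne_zero hn)]

end KerD

namespace KerD

variable {n : ℕ}

def sgn (σ : Equiv.Perm (Fin n)) (a b : ℕ) : ℚ :=
  if h : a < n ∧ b < n then
    (if σ ⟨a, h.1⟩ < σ ⟨b, h.2⟩ then -1 else 1) * (if a < b then -1 else 1)
  else 1

def pp (σ : Equiv.Perm (Fin n)) : ℕ → ℚ
  | 0 => 1
  | k+1 => pp σ k * sgn σ k (k+1)

def eps (σ : Equiv.Perm (Fin n)) (i : Fin n) : ℚ :=
  if i.val = n-1 then pp σ (n-3) * sgn σ (n-3) (n-1) else pp σ i.val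

lemma sgn_sq (σ : Equiv.Perm (Fin n)) (a b : ℕ) : sgn σ a b * sgn σ a b = 1 := by
  unfold sgn; split_ifs <;> norm_num

lemma pp_sq (σ : Equiv.Perm (Fin n)) : ∀ k, pp σ k * pp σ k = 1
  | 0 => by simp [pp]
  | (k+1) => by
    have h1 := pp_sq σ k
    have h2 := sgn_sq σ k (k+1)
    rw [pp, show pp σ k * sgn σ k (k+1) * (pp σ k * sgn σ k (k+1))
      = (pp σ k * pp σ k) * (sgn σ k (k+1) * sgn σ k (k+1)) by ring, h1, h2, one_mul]

lemma eps_sq (σ : Equiv.Perm (Fin n)) (i : Fin n) : eps σ i * eps σ i = 1 := by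
  unfold eps
  split_ifs
  · rw [show pp σ (n-3) * sgn σ (n-3) (n-1) * (pp σ (n-3) * sgn σ (n-3) (n-1))
      = (pp σ (n-3) * pp σ (n-3)) * (sgn σ (n-3) (n-1) * sgn σ (n-3) (n-1)) by ring,
      pp_sq, sgn_sq, one_mul]
  · exact pp_sq σ _

lemma sgn_symm (σ : Equiv.Perm (Fin n)) (a b : ℕ) (ha : a < n) (hb : b < n) (hab : a ≠ b) :
    sgn σ a b = sgn σ b a := by
  unfold sgn
  rw [dif_pos ⟨ha, hb⟩, dif_pos ⟨hb, ha⟩]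
  have hne : ((σ ⟨a, ha⟩ : Fin n) : ℕ) ≠ ((σ ⟨b, hb⟩ : Fin n) : ℕ) := by
    intro h
    exact hab (by simpa [Fin.ext_iff] using σ.injective (Fin.ext h))
  show (if σ ⟨a, ha⟩ < σ ⟨b, hb⟩ then (-1:ℚ) else 1) * (if a < b then -1 else 1)
    = (if σ ⟨b, hb⟩ < σ ⟨a, ha⟩ then (-1:ℚ) else 1) * (if b < a then -1 else 1)
  simp only [Fin.lt_def]
  split_ifs <;> first | omega | norm_num

lemma Bcongr (σ : Equiv.Perm (Fin n)) (hn : 4 ≤ n) (i j : Fin n) :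
    Bmat (cartanD n) σ i j = eps σ i * Bmat (cartanD n) 1 i j * eps σ j := by
  by_cases hij : i = j
  · subst hij; simp [Bmat]
  by_cases hedge : (i.val + 1 = j.val ∧ j.val ≤ n - 2) ∨ (j.val + 1 = i.val ∧ i.val ≤ n - 2) ∨
      (i.val = n - 3 ∧ j.val = n - 1) ∨ (i.val = n - 1 ∧ j.val = n - 3)
  · have key : eps σ i * eps σ j = sgn σ i.val j.val := by
      have hppstep : ∀ k : ℕ, pp σ (k+1) = pp σ k * sgn σ k (k+1) := fun k => rfl
      rcases hedge with ⟨h1, h2⟩ | ⟨h1, h2⟩ | ⟨h1, h2⟩ | ⟨h1, h2⟩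
      · rw [eps, if_neg (by omega), eps, if_neg (by omega), ← h1, hppstep,
          show pp σ i.val * (pp σ i.val * sgn σ i.val (i.val+1))
            = (pp σ i.val * pp σ i.val) * sgn σ i.val (i.val+1) by ring, pp_sq, one_mul]
      · rw [eps, if_neg (by omega), eps, if_neg (by omega), ← h1, hppstep,
          show pp σ j.val * sgn σ j.val (j.val+1) * pp σ j.val
            = (pp σ j.val * pp σ j.val) * sgn σ j.val (j.val+1) by ring, pp_sq, one_mul,
          sgn_symm σ _ _ (by omega) (by omega) (by omega)]
      · rw [eps, if_neg (by omega), eps, if_pos h2, h1,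
          show pp σ (n-3) * (pp σ (n-3) * sgn σ (n-3) (n-1))
            = (pp σ (n-3) * pp σ (n-3)) * sgn σ (n-3) (n-1) by ring, pp_sq, one_mul, ← h2]
      · rw [eps, if_pos h1, eps, if_neg (by omega), h2,
          show pp σ (n-3) * sgn σ (n-3) (n-1) * pp σ (n-3)
            = (pp σ (n-3) * pp σ (n-3)) * sgn σ (n-3) (n-1) by ring, pp_sq, one_mul,
          sgn_symm σ _ _ (by omega) (by omega) (by omega), ← h1, ← h2]
    have hBσ : Bmat (cartanD n) σ i j = (if σ i < σ j then -1 else 1) * cartanD n i j := by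
      rw [Bmat, if_neg hij]; split_ifs <;> ring
    have hB1 : Bmat (cartanD n) 1 i j = (if i < j then -1 else 1) * cartanD n i j := by
      rw [Bmat, if_neg hij]
      simp only [Equiv.Perm.coe_one, id_eq, Equiv.Perm.one_apply]
      split_ifs <;> simp [*]
    have hs : sgn σ i.val j.val = (if σ i < σ j then -1 else 1) * (if i < j then -1 else 1) := by
      rw [sgn, dif_pos ⟨i.isLt, j.isLt⟩]
      simp only [Fin.eta]
      congr 1
    rw [hBσ, hB1,
      show eps σ i * ((if i < j then (-1:ℚ) else 1) * cartanD n i j) * eps σ j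
        = (eps σ i * eps σ j) * (if i < j then (-1:ℚ) else 1) * cartanD n i j by ring,
      key, hs]
    split_ifs <;> ring
  · have hA : cartanD n i j = 0 := by rw [cartanD, if_neg hij, if_neg hedge]
    have h1 : Bmat (cartanD n) σ i j = 0 := by
      rw [Bmat, if_neg hij]; split_ifs <;> simp [hA]
    have h2 : Bmat (cartanD n) 1 i j = 0 := by
      rw [Bmat, if_neg hij]; split_ifs <;> simp [hA]
    rw [h1, h2]; ring

end KerD

/-- In type `Dₙ` (`n ≥ 4`), the kernel of any acyclic exchange matrix `B_σ` has dimension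
`2` if `n` is even and `1` if `n` is odd. -/
theorem kernel_dim_Bmat_typeD (n : ℕ) (hn : 4 ≤ n) (σ : Equiv.Perm (Fin n)) :
    Module.finrank ℚ (LinearMap.ker (Matrix.toLin' (Bmat (cartanD n) σ))) =
      if Even n then 2 else 1 := by
  classical
  set D : Matrix (Fin n) (Fin n) ℚ := Matrix.diagonal (KerD.eps σ) with hD
  have hBD : Bmat (cartanD n) σ = D * (Bmat (cartanD n) 1 * D) := by
    ext i j
    rw [Matrix.diagonal_mul, Matrix.mul_diagonal, KerD.Bcongr σ hn i j, mul_assoc]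
  have hDD : D * D = 1 := by
    rw [hD, Matrix.diagonal_mul_diagonal,
      show (fun i => KerD.eps σ i * KerD.eps σ i) = fun _ => (1:ℚ) from
        funext (KerD.eps_sq σ), Matrix.diagonal_one]
  have hinj : Function.Injective (Matrix.toLin' D) := by
    have hli : Function.LeftInverse (Matrix.toLin' D) (Matrix.toLin' D) := by
      intro y
      rw [Matrix.toLin'_apply, Matrix.toLin'_apply, Matrix.mulVec_mulVec, hDD,
        Matrix.one_mulVec]
    exact hli.injective
  let e : (Fin n → ℚ) ≃ₗ[ℚ] (Fin n → ℚ) :=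
    LinearEquiv.ofLinear (Matrix.toLin' D) (Matrix.toLin' D)
      (by rw [← Matrix.toLin'_mul, hDD, Matrix.toLin'_one])
      (by rw [← Matrix.toLin'_mul, hDD, Matrix.toLin'_one])
  have hker : LinearMap.ker (Matrix.toLin' (Bmat (cartanD n) σ))
      = Submodule.comap (Matrix.toLin' D)
          (LinearMap.ker (Matrix.toLin' (Bmat (cartanD n) 1))) := by
    rw [hBD, Matrix.toLin'_mul, Matrix.toLin'_mul, LinearMap.ker_comp,
      LinearMap.ker_eq_bot_of_injective hinj, Submodule.comap_bot, LinearMap.ker_comp]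
  rw [hker, show Matrix.toLin' D = (e : (Fin n → ℚ) →ₗ[ℚ] (Fin n → ℚ)) from rfl,
    Submodule.comap_equiv_eq_map_symm, LinearEquiv.finrank_map_eq, KerD.finrank_ker_B1 hn]
  by_cases h : Even n
  · rw [if_pos (Nat.even_iff.mp h), if_pos h]
  · rw [if_neg (fun hc => h (Nat.even_iff.mpr hc)), if_neg h]
end

section
/- Let A be the standard Cartan matrix of type E₆, E₈, F₄, or G₂ (of size n = 6, 8, 4, 2 respectively), and let σ be any permutation of {1,…,n}. Then B_σ is invertible over ℚ (equivalently, det B_σ ≠ 0). -/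
open Matrix

/-- Integer version of `Bmat`. -/
def BmatZ {n : ℕ} (A : Matrix (Fin n) (Fin n) ℤ) (σ : Equiv.Perm (Fin n)) :
    Matrix (Fin n) (Fin n) ℤ :=
  fun i j => if i = j then 0 else if σ i < σ j then -A i j else A i j

lemma Bmat_map {n : ℕ} (A : Matrix (Fin n) (Fin n) ℤ) (σ : Equiv.Perm (Fin n)) :
    Bmat (A.map ((↑) : ℤ → ℚ)) σ = (BmatZ A σ).map ((↑) : ℤ → ℚ) := by
  funext i j
  simp only [Bmat, BmatZ, Matrix.map_apply]
  split_ifs <;> simp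

/-- Key lemma: if `A` has diagonal entries `2` and odd determinant, then every
`B_σ` has nonzero determinant, since `B_σ ≡ A (mod 2)`. -/
lemma key {n : ℕ} (A : Matrix (Fin n) (Fin n) ℤ) (h2 : ∀ i, A i i = 2)
    (hdet : (A.map ((↑) : ℤ → ZMod 2)).det = 1) (σ : Equiv.Perm (Fin n)) :
    (Bmat (A.map ((↑) : ℤ → ℚ)) σ).det ≠ 0 := by
  rw [Bmat_map]
  have hd : ((BmatZ A σ).map ((↑) : ℤ → ℚ)).det = (((BmatZ A σ).det : ℤ) : ℚ) :=
    (RingHom.map_det (Int.castRingHom ℚ) (BmatZ A σ)).symm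
  rw [hd]
  suffices h : (BmatZ A σ).det ≠ 0 by exact_mod_cast h
  intro h0
  have heq : (BmatZ A σ).map ((↑) : ℤ → ZMod 2) = A.map ((↑) : ℤ → ZMod 2) := by
    funext i j
    simp only [BmatZ, Matrix.map_apply]
    split_ifs with h1 h2'
    · subst h1; rw [h2 i]; decide
    · push_cast; ring_nf; exact (CharTwo.neg_eq _)
    · rfl
  have h3 : ((BmatZ A σ).map ((↑) : ℤ → ZMod 2)).det = (((BmatZ A σ).det : ℤ) : ZMod 2) :=
    (RingHom.map_det (Int.castRingHom (ZMod 2)) _).symm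
  rw [heq, hdet, h0] at h3
  simp at h3

lemma det_one_of_right_inv {n : ℕ} (A M : Matrix (Fin n) (Fin n) (ZMod 2))
    (h : A * M = 1) : A.det = 1 := by
  have h2 : A.det * M.det = 1 := by rw [← Matrix.det_mul, h, Matrix.det_one]
  have hx : ∀ x y : ZMod 2, x * y = 1 → x = 1 := by decide
  exact hx _ _ h2

set_option maxRecDepth 8000 in
lemma detE6 : ((CartanMatrix.E₆).map ((↑) : ℤ → ZMod 2)).det = 1 := by
  apply det_one_of_right_inv _ !![0,1,1,0,0,0; 1,0,0,1,0,1; 1,0,0,0,0,0;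
    0,1,0,0,0,0; 0,0,0,0,0,1; 0,1,0,0,1,0]
  decide

set_option maxRecDepth 8000 in
lemma detE8 : ((CartanMatrix.E₈).map ((↑) : ℤ → ZMod 2)).det = 1 := by
  apply det_one_of_right_inv _ !![0,1,1,0,0,0,0,0; 1,0,0,1,0,1,0,1; 1,0,0,0,0,0,0,0;
    0,1,0,0,0,0,0,0; 0,0,0,0,0,1,0,1; 0,1,0,0,1,0,0,0; 0,0,0,0,0,0,0,1; 0,1,0,0,1,0,1,0]
  decide

lemma detF4 : ((CartanMatrix.F₄).map ((↑) : ℤ → ZMod 2)).det = 1 := by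
  apply det_one_of_right_inv _ !![0,1,0,0; 1,0,0,0; 0,0,0,1; 1,0,1,0]
  decide

lemma detG2 : ((CartanMatrix.G₂).map ((↑) : ℤ → ZMod 2)).det = 1 := by
  apply det_one_of_right_inv _ !![0,1; 1,0]
  decide

/-- For the Cartan matrices of types `E₆`, `E₈`, `F₄` and `G₂`, every acyclic exchange
matrix `B_σ` is invertible over `ℚ`, i.e., has nonzero determinant. -/
theorem Bmat_det_ne_zero_E6_E8_F4_G2 :
    (∀ σ : Equiv.Perm (Fin 6),
      (Bmat (CartanMatrix.E₆.map ((↑) : ℤ → ℚ)) σ).det ≠ 0) ∧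
    (∀ σ : Equiv.Perm (Fin 8),
      (Bmat (CartanMatrix.E₈.map ((↑) : ℤ → ℚ)) σ).det ≠ 0) ∧
    (∀ σ : Equiv.Perm (Fin 4),
      (Bmat (CartanMatrix.F₄.map ((↑) : ℤ → ℚ)) σ).det ≠ 0) ∧
    (∀ σ : Equiv.Perm (Fin 2),
      (Bmat (CartanMatrix.G₂.map ((↑) : ℤ → ℚ)) σ).det ≠ 0) := by
  refine ⟨fun σ => key _ ?_ detE6 σ, fun σ => key _ ?_ detE8 σ,
    fun σ => key _ ?_ detF4 σ, fun σ => key _ ?_ detG2 σ⟩ <;> decide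
end

section
/- Let n = 2k+1 be odd with n ≥ 3, let A be the Cartan matrix of type A_n, and let σ be any permutation of {1,…,n}. Then the kernel of B_σ over ℚ is spanned by a single nonzero vector v whose support {i : v_i ≠ 0} is exactly the set of odd indices {1, 3, …, n}; in particular the support of v has exactly k+1 connected components in the Dynkin diagram of type A_n (a path on {1,…,n}). -/
open Matrix

namespace KGSaux

variable (n : ℕ) (σ : Equiv.Perm (Fin n))

lemma B_eq_zero (i j : Fin n) (h : ¬(i.val + 1 = j.val ∨ j.val + 1 = i.val)) :
    Bmat (cartanA n) σ i j = 0 := by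
  unfold Bmat cartanA
  by_cases hij : i = j
  · simp [hij]
  · rw [if_neg hij, if_neg hij, if_neg h]
    simp

lemma B_fwd (t : ℕ) (h : t + 1 < n) :
    Bmat (cartanA n) σ ⟨t, by omega⟩ ⟨t+1, h⟩ =
      if σ ⟨t, by omega⟩ < σ ⟨t+1, h⟩ then 1 else -1 := by
  unfold Bmat cartanA
  have hne : (⟨t, by omega⟩ : Fin n) ≠ ⟨t+1, h⟩ := by simp [Fin.ext_iff]
  rw [if_neg hne, if_neg hne, if_pos (Or.inl rfl)]
  split <;> norm_num

lemma B_skew (i j : Fin n) (hij : i ≠ j) :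
    Bmat (cartanA n) σ j i = - Bmat (cartanA n) σ i j := by
  have hA : cartanA n j i = cartanA n i j := by
    unfold cartanA
    rw [if_neg hij, if_neg hij.symm]
    by_cases hc : i.val + 1 = j.val ∨ j.val + 1 = i.val
    · rw [if_pos (by tauto), if_pos hc]
    · rw [if_neg (by tauto), if_neg hc]
  unfold Bmat
  rw [if_neg hij, if_neg hij.symm, hA]
  rcases lt_trichotomy (σ i) (σ j) with h | h | h
  · rw [if_neg (not_lt.mpr h.le), if_pos h, neg_neg]
  · exact absurd (σ.injective h) hij
  · rw [if_pos h, if_neg (not_lt.mpr h.le)]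

/-- The sign `ε_t = B_{t,t+1}` (and `1` out of range). -/
def eps (t : ℕ) : ℚ :=
  if h : t + 1 < n then Bmat (cartanA n) σ ⟨t, by omega⟩ ⟨t+1, h⟩ else 1

lemma eps_units (t : ℕ) : eps n σ t = 1 ∨ eps n σ t = -1 := by
  unfold eps
  split
  · rw [B_fwd]
    split
    · left; rfl
    · right; rfl
  · left; rfl

lemma eps_sq (t : ℕ) : eps n σ t * eps n σ t = 1 := by
  rcases eps_units n σ t with h | h <;> rw [h] <;> norm_num

lemma eps_ne (t : ℕ) : eps n σ t ≠ 0 := by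
  rcases eps_units n σ t with h | h <;> rw [h] <;> norm_num

lemma B_fwd' (m : ℕ) (hm : m + 1 < n) :
    Bmat (cartanA n) σ ⟨m, by omega⟩ ⟨m + 1, hm⟩ = eps n σ m := by
  unfold eps
  rw [dif_pos hm]

lemma B_bwd' (m : ℕ) (hm : m < n) (h : 0 < m) :
    Bmat (cartanA n) σ ⟨m, hm⟩ ⟨m - 1, by omega⟩ = - eps n σ (m - 1) := by
  have h1 : m - 1 + 1 < n := by omega
  have hne : (⟨m - 1, by omega⟩ : Fin n) ≠ ⟨m, hm⟩ := by
    simp only [ne_eq, Fin.ext_iff]; omega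
  rw [B_skew n σ ⟨m - 1, by omega⟩ ⟨m, hm⟩ hne]
  congr 1
  rw [show (⟨m, hm⟩ : Fin n) = ⟨m - 1 + 1, h1⟩ from Fin.ext (by simp; omega)]
  unfold eps
  rw [dif_pos h1]

/-- The kernel generator, as a function of the natural-number index. -/
def Vv (m : ℕ) : ℚ := if m % 2 = 0 then ∏ t ∈ Finset.range m, eps n σ t else 0

lemma Vv_zero : Vv n σ 0 = 1 := by simp [Vv]

lemma Vv_odd (m : ℕ) (h : m % 2 = 1) : Vv n σ m = 0 := by simp [Vv, h]

lemma Vv_ne (m : ℕ) (h : m % 2 = 0) : Vv n σ m ≠ 0 := by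
  simp only [Vv, if_pos h]
  exact Finset.prod_ne_zero_iff.mpr fun t _ => eps_ne n σ t

lemma Vv_rec (m : ℕ) : Vv n σ (m + 2) = eps n σ (m + 1) * eps n σ m * Vv n σ m := by
  unfold Vv
  rw [show (m + 2) % 2 = m % 2 from by omega]
  by_cases h : m % 2 = 0
  · rw [if_pos h, if_pos h, Finset.prod_range_succ, Finset.prod_range_succ]; ring
  · rw [if_neg h, if_neg h]; ring

lemma mulVec_apply (w : Fin n → ℚ) (m : ℕ) (hm : m < n) :
    (Bmat (cartanA n) σ).mulVec w ⟨m, hm⟩ =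
      (if h : 0 < m then
          Bmat (cartanA n) σ ⟨m, hm⟩ ⟨m - 1, by omega⟩ * w ⟨m - 1, by omega⟩ else 0)
      + (if h : m + 1 < n then
          Bmat (cartanA n) σ ⟨m, hm⟩ ⟨m + 1, h⟩ * w ⟨m + 1, h⟩ else 0) := by
  have hsplit : ∀ j : Fin n, Bmat (cartanA n) σ ⟨m, hm⟩ j * w j =
      (if j.val + 1 = m then Bmat (cartanA n) σ ⟨m, hm⟩ j * w j else 0)
      + (if m + 1 = j.val then Bmat (cartanA n) σ ⟨m, hm⟩ j * w j else 0) := by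
    intro j
    by_cases h1 : j.val + 1 = m
    · rw [if_pos h1, if_neg (by omega)]; ring
    · by_cases h2 : m + 1 = j.val
      · rw [if_neg h1, if_pos h2]; ring
      · rw [if_neg h1, if_neg h2,
          B_eq_zero n σ ⟨m, hm⟩ j (not_or.mpr ⟨h2, h1⟩)]
        ring
  show ∑ j, Bmat (cartanA n) σ ⟨m, hm⟩ j * w j = _
  rw [Finset.sum_congr rfl (fun j _ => hsplit j), Finset.sum_add_distrib]
  congr 1
  · by_cases h : 0 < m
    · rw [dif_pos h]
      calc ∑ j : Fin n, (if j.val + 1 = m then Bmat (cartanA n) σ ⟨m, hm⟩ j * w j else 0)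
          = ∑ j : Fin n, (if j = (⟨m - 1, by omega⟩ : Fin n)
              then Bmat (cartanA n) σ ⟨m, hm⟩ j * w j else 0) := by
            refine Finset.sum_congr rfl fun j _ => if_congr ?_ rfl rfl
            rw [Fin.ext_iff]
            show j.val + 1 = m ↔ j.val = m - 1
            omega
        _ = _ := by rw [Finset.sum_ite_eq']; simp
    · rw [dif_neg h]
      exact Finset.sum_eq_zero fun j _ => if_neg (by omega)
  · by_cases h : m + 1 < n
    · rw [dif_pos h]
      calc ∑ j : Fin n, (if m + 1 = j.val then Bmat (cartanA n) σ ⟨m, hm⟩ j * w j else 0)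
          = ∑ j : Fin n, (if j = (⟨m + 1, h⟩ : Fin n)
              then Bmat (cartanA n) σ ⟨m, hm⟩ j * w j else 0) := by
            refine Finset.sum_congr rfl fun j _ => if_congr ?_ rfl rfl
            rw [Fin.ext_iff]
            show m + 1 = j.val ↔ j.val = m + 1
            omega
        _ = _ := by rw [Finset.sum_ite_eq']; simp
    · rw [dif_neg h]
      refine Finset.sum_eq_zero fun j _ => if_neg ?_
      have := j.isLt
      omega

end KGSaux

/-- In type `Aₙ` with `n = 2k+1` odd, `n ≥ 3`, the kernel of any acyclic exchange matrix
`B_σ` is spanned by a single nonzero vector whose support is exactly the set of nodes with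
even `0`-indexed index (i.e. the odd nodes `1, 3, …, n` in `1`-indexed notation); in
particular the support has exactly `k+1` connected components in the Dynkin diagram of
type `Aₙ` (the path graph on the `n` nodes). -/
theorem kernel_gen_support_typeA (k : ℕ) (hk : 1 ≤ k) (σ : Equiv.Perm (Fin (2 * k + 1))) :
    ∃ v : Fin (2 * k + 1) → ℚ, v ≠ 0 ∧
      LinearMap.ker (Matrix.toLin' (Bmat (cartanA (2 * k + 1)) σ)) =
        Submodule.span ℚ {v} ∧
      {i : Fin (2 * k + 1) | v i ≠ 0} = {i : Fin (2 * k + 1) | i.val % 2 = 0} ∧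
      Nat.card
        ((SimpleGraph.pathGraph (2 * k + 1)).induce
          {i : Fin (2 * k + 1) | v i ≠ 0}).ConnectedComponent = k + 1 := by
  classical
  -- The generator.
  set v : Fin (2 * k + 1) → ℚ := fun i => KGSaux.Vv (2 * k + 1) σ i.val with hv
  -- supports
  have hsupp : {i : Fin (2 * k + 1) | v i ≠ 0} = {i : Fin (2 * k + 1) | i.val % 2 = 0} := by
    ext i
    simp only [Set.mem_setOf_eq, hv]
    constructor
    · intro h
      by_contra hodd
      exact h (KGSaux.Vv_odd _ σ i.val (by omega))
    · intro h
      exact KGSaux.Vv_ne _ σ i.val h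
  -- v is in the kernel
  have hBv : (Bmat (cartanA (2 * k + 1)) σ).mulVec v = 0 := by
    funext i
    obtain ⟨m, hm⟩ := i
    rw [KGSaux.mulVec_apply]
    simp only [Pi.zero_apply, hv]
    rcases Nat.eq_zero_or_pos m with h0 | hpos
    · subst h0
      rw [dif_neg (by omega), dif_pos (by omega),
        KGSaux.Vv_odd _ σ (0 + 1) (by norm_num), mul_zero, add_zero]
    · rw [dif_pos hpos]
      by_cases hpar : m % 2 = 0
      · rw [KGSaux.Vv_odd _ σ (m - 1) (by omega), mul_zero, zero_add]
        by_cases h2 : m + 1 < 2 * k + 1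
        · rw [dif_pos h2, KGSaux.Vv_odd _ σ (m + 1) (by omega), mul_zero]
        · rw [dif_neg h2]
      · have h2 : m + 1 < 2 * k + 1 := by omega
        rw [dif_pos h2, KGSaux.B_bwd' _ σ m hm hpos, KGSaux.B_fwd' _ σ m h2]
        have hrec : KGSaux.Vv (2 * k + 1) σ (m + 1)
            = KGSaux.eps (2 * k + 1) σ m * KGSaux.eps (2 * k + 1) σ (m - 1)
              * KGSaux.Vv (2 * k + 1) σ (m - 1) := by
          rw [show m + 1 = (m - 1) + 2 from by omega, KGSaux.Vv_rec,
            show m - 1 + 1 = m from by omega]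
        rw [hrec]
        have hsq := KGSaux.eps_sq (2 * k + 1) σ m
        linear_combination (KGSaux.eps (2 * k + 1) σ (m - 1)
          * KGSaux.Vv (2 * k + 1) σ (m - 1)) * hsq
  -- every kernel element is a multiple of v
  have hker : ∀ w : Fin (2 * k + 1) → ℚ, (Bmat (cartanA (2 * k + 1)) σ).mulVec w = 0 →
      ∀ m : ℕ, ∀ hm : m < 2 * k + 1,
        w ⟨m, hm⟩ = w ⟨0, by omega⟩ * KGSaux.Vv (2 * k + 1) σ m := by
    intro w hw m
    induction m using Nat.strong_induction_on with
    | _ m ih =>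
      intro hm
      match m, ih with
      | 0, _ => rw [KGSaux.Vv_zero, mul_one]
      | 1, _ =>
        have h0 := congrFun hw ⟨0, by omega⟩
        rw [KGSaux.mulVec_apply _ σ w 0 (by omega), dif_neg (by omega),
          dif_pos (show 0 + 1 < 2 * k + 1 by omega), KGSaux.B_fwd' _ σ 0 (by omega),
          Pi.zero_apply, zero_add] at h0
        have hw1 : w ⟨0 + 1, by omega⟩ = 0 := by
          rcases mul_eq_zero.mp h0 with h | h
          · exact absurd h (KGSaux.eps_ne _ σ 0)
          · exact h
        rw [KGSaux.Vv_odd _ σ 1 (by norm_num), mul_zero]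
        exact hw1
      | (t + 2), ih =>
        have hrow := congrFun hw ⟨t + 1, by omega⟩
        rw [KGSaux.mulVec_apply _ σ w (t + 1) (by omega), dif_pos (by omega),
          dif_pos (show t + 1 + 1 < 2 * k + 1 by omega),
          KGSaux.B_bwd' _ σ (t + 1) (by omega) (by omega),
          KGSaux.B_fwd' _ σ (t + 1) (by omega), Pi.zero_apply] at hrow
        simp only [Nat.add_sub_cancel] at hrow
        have hVt : w ⟨t, by omega⟩ = w ⟨0, by omega⟩ * KGSaux.Vv (2 * k + 1) σ t :=
          ih t (by omega) (by omega)
        have hsq := KGSaux.eps_sq (2 * k + 1) σ (t + 1)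
        rw [KGSaux.Vv_rec]
        have hgoal : w ⟨t + 1 + 1, by omega⟩ =
            w ⟨0, by omega⟩ * (KGSaux.eps (2 * k + 1) σ (t + 1) * KGSaux.eps (2 * k + 1) σ t
              * KGSaux.Vv (2 * k + 1) σ t) := by
          linear_combination KGSaux.eps (2 * k + 1) σ (t + 1) * hrow
            - w ⟨t + 1 + 1, by omega⟩ * hsq
            + KGSaux.eps (2 * k + 1) σ (t + 1) * KGSaux.eps (2 * k + 1) σ t * hVt
        convert hgoal using 2
  refine ⟨v, ?_, ?_, hsupp, ?_⟩
  · intro hcon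
    have h0 := congrFun hcon ⟨0, by omega⟩
    simp only [hv, Pi.zero_apply] at h0
    rw [KGSaux.Vv_zero] at h0
    exact one_ne_zero h0
  · apply le_antisymm
    · intro w hw
      rw [LinearMap.mem_ker, Matrix.toLin'_apply] at hw
      rw [Submodule.mem_span_singleton]
      refine ⟨w ⟨0, by omega⟩, ?_⟩
      funext i
      obtain ⟨m, hm⟩ := i
      simp only [Pi.smul_apply, smul_eq_mul, hv]
      exact (hker w hw m hm).symm
    · rw [Submodule.span_le, Set.singleton_subset_iff, SetLike.mem_coe,
        LinearMap.mem_ker, Matrix.toLin'_apply]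
      exact hBv
  · rw [hsupp]
    set E : Set (Fin (2 * k + 1)) := {i : Fin (2 * k + 1) | i.val % 2 = 0} with hE
    set G' := (SimpleGraph.pathGraph (2 * k + 1)).induce E with hG'
    have hadj : ∀ a b : ↥E, ¬ G'.Adj a b := by
      intro a b hab
      have h1 : (a : Fin (2 * k + 1)).val % 2 = 0 := a.2
      have h2 : (b : Fin (2 * k + 1)).val % 2 = 0 := b.2
      rw [hG', SimpleGraph.comap_adj, SimpleGraph.pathGraph_adj] at hab
      simp only [Function.Embedding.coe_subtype] at hab
      omega
    have hbij : Function.Bijective (SimpleGraph.connectedComponentMk G') := by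
      constructor
      · intro a b hab
        obtain ⟨p⟩ := SimpleGraph.ConnectedComponent.eq.mp hab
        cases p with
        | nil => rfl
        | cons h _ => exact absurd h (hadj _ _)
      · intro c
        exact c.exists_rep
    have e : ↥E ≃ Fin (k + 1) :=
      { toFun := fun i => ⟨(i : Fin (2 * k + 1)).val / 2, by
          have := (i : Fin (2 * k + 1)).isLt; omega⟩
        invFun := fun j => ⟨⟨2 * j.val, by have := j.isLt; omega⟩, by
          show (2 * j.val) % 2 = 0; omega⟩
        left_inv := fun i => by
          have h2 : (i : Fin (2 * k + 1)).val % 2 = 0 := i.2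
          apply Subtype.ext
          apply Fin.ext
          show 2 * ((i : Fin (2 * k + 1)).val / 2) = (i : Fin (2 * k + 1)).val
          omega
        right_inv := fun j => by
          apply Fin.ext
          show (2 * j.val) / 2 = j.val
          omega }
    rw [← Nat.card_eq_of_bijective _ hbij, Nat.card_congr e, Nat.card_eq_fintype_card,
      Fintype.card_fin]
end

section
/- Let n = 2k+1 be odd with n ≥ 3, let A be the Cartan matrix of type B_n, and let σ be any permutation of {1,…,n}. Then the kernel of B_σ over ℚ is spanned by a single nonzero vector v whose support {i : v_i ≠ 0} is exactly the set of odd indices {1, 3, …, n}; in particular the support of v has exactly k+1 connected components in the Dynkin diagram of type B_n (a path on {1,…,n}). -/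
open Matrix

namespace KGB

lemma B_zero {n : ℕ} (σ : Equiv.Perm (Fin n)) {i j : Fin n}
    (h1 : i.val + 1 ≠ j.val) (h2 : j.val + 1 ≠ i.val) :
    Bmat (cartanB n) σ i j = 0 := by
  by_cases h3 : i = j
  · simp [Bmat, h3]
  · simp [Bmat, cartanB, h1, h2, h3]

lemma B_ne {n : ℕ} (σ : Equiv.Perm (Fin n)) {i j : Fin n}
    (h : i.val + 1 = j.val ∨ j.val + 1 = i.val) :
    Bmat (cartanB n) σ i j ≠ 0 := by
  have h3 : i ≠ j := by rintro rfl; omega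
  have hc : cartanB n i j ≠ 0 := by
    rcases h with h | h
    · have h2 : j.val + 1 ≠ i.val := by omega
      simp only [cartanB, h3, h, if_true, if_false]
      split_ifs <;> norm_num
    · have h1 : i.val + 1 ≠ j.val := by omega
      simp [cartanB, h3, h, h1]
  simp only [Bmat, h3, if_false]
  split_ifs <;> simpa using hc

lemma sum_two {n : ℕ} (f : Fin n → ℚ) {i j : Fin n} (hij : i ≠ j)
    (h : ∀ l, l ≠ i → l ≠ j → f l = 0) : ∑ l, f l = f i + f j := by
  classical
  rw [← Finset.sum_subset (Finset.subset_univ ({i, j} : Finset (Fin n)))]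
  · exact Finset.sum_pair hij
  · intro x _ hx
    simp only [Finset.mem_insert, Finset.mem_singleton, not_or] at hx
    exact h x hx.1 hx.2

variable {k : ℕ}

/-- the ratio between consecutive even entries of the kernel vector -/
noncomputable def rr (σ : Equiv.Perm (Fin (2 * k + 1))) (m : ℕ) : ℚ :=
  if h : m < k then
    -(Bmat (cartanB (2 * k + 1)) σ ⟨2 * m + 1, by omega⟩ ⟨2 * m, by omega⟩) /
      (Bmat (cartanB (2 * k + 1)) σ ⟨2 * m + 1, by omega⟩ ⟨2 * m + 2, by omega⟩)
  else 1

noncomputable def cc (σ : Equiv.Perm (Fin (2 * k + 1))) (m : ℕ) : ℚ :=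
  ∏ j ∈ Finset.range m, rr σ j

/-- the kernel vector -/
noncomputable def vv (σ : Equiv.Perm (Fin (2 * k + 1))) : Fin (2 * k + 1) → ℚ :=
  fun i => if i.val % 2 = 0 then cc σ (i.val / 2) else 0

lemma rr_ne (σ : Equiv.Perm (Fin (2 * k + 1))) (m : ℕ) : rr σ m ≠ 0 := by
  unfold rr
  split_ifs with h
  · exact div_ne_zero (neg_ne_zero.mpr (B_ne σ (Or.inr rfl))) (B_ne σ (Or.inl rfl))
  · norm_num

lemma cc_ne (σ : Equiv.Perm (Fin (2 * k + 1))) (m : ℕ) : cc σ m ≠ 0 :=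
  Finset.prod_ne_zero_iff.mpr fun j _ => rr_ne σ j

lemma key (σ : Equiv.Perm (Fin (2 * k + 1))) {m : ℕ} (hm : m < k) :
    Bmat (cartanB (2 * k + 1)) σ ⟨2 * m + 1, by omega⟩ ⟨2 * m + 2, by omega⟩ * rr σ m
      = -(Bmat (cartanB (2 * k + 1)) σ ⟨2 * m + 1, by omega⟩ ⟨2 * m, by omega⟩) := by
  have hden : Bmat (cartanB (2 * k + 1)) σ ⟨2 * m + 1, by omega⟩ ⟨2 * m + 2, by omega⟩ ≠ 0 :=
    B_ne σ (Or.inl rfl)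
  rw [rr, dif_pos hm]
  field_simp

end KGB

set_option maxHeartbeats 1600000 in
/-- In type `Bₙ` with `n = 2k+1` odd, `n ≥ 3`, the kernel of any acyclic exchange matrix
`B_σ` is spanned by a single nonzero vector whose support is exactly the set of nodes with
even `0`-indexed index (i.e. the odd nodes `1, 3, …, n` in `1`-indexed notation); in
particular the support has exactly `k+1` connected components in the Dynkin diagram of
type `Bₙ` (the path graph on the `n` nodes). -/
theorem kernel_gen_support_typeB (k : ℕ) (hk : 1 ≤ k) (σ : Equiv.Perm (Fin (2 * k + 1))) :
    ∃ v : Fin (2 * k + 1) → ℚ, v ≠ 0 ∧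
      LinearMap.ker (Matrix.toLin' (Bmat (cartanB (2 * k + 1)) σ)) =
        Submodule.span ℚ {v} ∧
      {i : Fin (2 * k + 1) | v i ≠ 0} = {i : Fin (2 * k + 1) | i.val % 2 = 0} ∧
      Nat.card
        ((SimpleGraph.pathGraph (2 * k + 1)).induce
          {i : Fin (2 * k + 1) | v i ≠ 0}).ConnectedComponent = k + 1 := by
  classical
  have hlin : ∀ (w : Fin (2 * k + 1) → ℚ) (i : Fin (2 * k + 1)),
      Matrix.toLin' (Bmat (cartanB (2 * k + 1)) σ) w i
        = ∑ j, Bmat (cartanB (2 * k + 1)) σ i j * w j := by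
    intro w i
    simp [Matrix.toLin'_apply, Matrix.mulVec, dotProduct]
  have hvv_even : ∀ (m : ℕ) (hm : 2 * m < 2 * k + 1),
      KGB.vv σ ⟨2 * m, hm⟩ = KGB.cc σ m := by
    intro m hm
    simp only [KGB.vv]
    rw [if_pos (show (2 * m) % 2 = 0 by omega)]
    congr 1
    omega
  have hvv_odd : ∀ (m : ℕ) (hm : 2 * m + 1 < 2 * k + 1),
      KGB.vv σ ⟨2 * m + 1, hm⟩ = 0 := by
    intro m hm
    simp only [KGB.vv]
    rw [if_neg (show ¬ (2 * m + 1) % 2 = 0 by omega)]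
  -- the kernel vector is in the kernel
  have hvker : Matrix.toLin' (Bmat (cartanB (2 * k + 1)) σ) (KGB.vv σ) = 0 := by
    funext i
    rw [hlin, Pi.zero_apply]
    rcases Nat.mod_two_eq_zero_or_one i.val with hi | hi
    · apply Finset.sum_eq_zero
      intro j _
      by_cases h1 : i.val + 1 = j.val
      · have hj : KGB.vv σ j = 0 := by
          simp only [KGB.vv]
          rw [if_neg (show ¬ j.val % 2 = 0 by omega)]
        rw [hj, mul_zero]
      · by_cases h2 : j.val + 1 = i.val
        · have hj : KGB.vv σ j = 0 := by
            simp only [KGB.vv]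
            rw [if_neg (show ¬ j.val % 2 = 0 by omega)]
          rw [hj, mul_zero]
        · rw [KGB.B_zero σ h1 h2, zero_mul]
    · obtain ⟨m, hmk, him⟩ : ∃ m, m < k ∧ i.val = 2 * m + 1 :=
        ⟨i.val / 2, by omega, by omega⟩
      have hieq : i = ⟨2 * m + 1, by omega⟩ := Fin.ext him
      rw [hieq]
      have hij : (⟨2 * m, by omega⟩ : Fin (2 * k + 1)) ≠ ⟨2 * m + 2, by omega⟩ :=
        Fin.ne_of_val_ne (show (2 * m : ℕ) ≠ 2 * m + 2 by omega)
      have hz : ∀ l, l ≠ (⟨2 * m, by omega⟩ : Fin (2 * k + 1)) →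
          l ≠ (⟨2 * m + 2, by omega⟩ : Fin (2 * k + 1)) →
          Bmat (cartanB (2 * k + 1)) σ ⟨2 * m + 1, by omega⟩ l * KGB.vv σ l = 0 := by
        intro l h1 h2
        have hv1 : l.val ≠ 2 * m := fun e => h1 (Fin.ext e)
        have hv2 : l.val ≠ 2 * m + 2 := fun e => h2 (Fin.ext e)
        rw [KGB.B_zero σ (show 2 * m + 1 + 1 ≠ l.val by omega)
          (show l.val + 1 ≠ 2 * m + 1 by omega), zero_mul]
      have hv22 : KGB.vv σ (⟨2 * m + 2, by omega⟩ : Fin (2 * k + 1)) = KGB.cc σ (m + 1) :=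
        hvv_even (m + 1) (by omega)
      rw [KGB.sum_two _ hij hz, hvv_even m (by omega), hv22]
      rw [show KGB.cc σ (m + 1) = KGB.cc σ m * KGB.rr σ m from Finset.prod_range_succ _ _]
      linear_combination KGB.cc σ m * KGB.key σ hmk
  have hvne : KGB.vv σ ≠ 0 := by
    intro h
    have hb : 2 * 0 < 2 * k + 1 := by omega
    have h0 := congrFun h (⟨2 * 0, hb⟩ : Fin (2 * k + 1))
    rw [hvv_even 0 hb, Pi.zero_apply] at h0
    exact KGB.cc_ne σ 0 h0
  have hsupp : {i : Fin (2 * k + 1) | KGB.vv σ i ≠ 0}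
      = {i : Fin (2 * k + 1) | i.val % 2 = 0} := by
    ext i
    simp only [Set.mem_setOf_eq, KGB.vv]
    rcases Nat.mod_two_eq_zero_or_one i.val with hi | hi
    · simp [hi, KGB.cc_ne σ]
    · simp [hi]
  refine ⟨KGB.vv σ, hvne, ?_, hsupp, ?_⟩
  · -- kernel = span
    apply le_antisymm
    · intro w hw
      have hw0 : Matrix.toLin' (Bmat (cartanB (2 * k + 1)) σ) w = 0 := LinearMap.mem_ker.mp hw
      have row : ∀ i, ∑ j, Bmat (cartanB (2 * k + 1)) σ i j * w j = 0 := by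
        intro i
        rw [← hlin w i, hw0, Pi.zero_apply]
      have main : ∀ m (hmk : m ≤ k),
          w ⟨2 * m, by omega⟩ = w ⟨0, by omega⟩ * KGB.cc σ m ∧
          (∀ _ : m < k, w ⟨2 * m + 1, by omega⟩ = 0) := by
        intro m
        induction m with
        | zero =>
          intro _
          constructor
          · rw [show KGB.cc σ 0 = 1 from Finset.prod_range_zero _, mul_one]
          · intro _
            have h1 : ∑ j, Bmat (cartanB (2 * k + 1)) σ ⟨0, by omega⟩ j * w j
                = Bmat (cartanB (2 * k + 1)) σ ⟨0, by omega⟩ ⟨1, by omega⟩ * w ⟨1, by omega⟩ :=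
              Fintype.sum_eq_single _ (fun b hb => by
                have hbv : b.val ≠ 1 := fun e => hb (Fin.ext e)
                rw [KGB.B_zero σ (show 0 + 1 ≠ b.val by omega)
                  (show b.val + 1 ≠ 0 by omega), zero_mul])
            have h2 := row ⟨0, by omega⟩
            rw [h1] at h2
            exact (mul_eq_zero.mp h2).resolve_left (KGB.B_ne σ (Or.inl rfl))
        | succ m ih =>
          intro hmk1
          have hmk : m < k := by omega
          obtain ⟨he, ho⟩ := ih (by omega)
          have hodd := ho hmk
          have hij : (⟨2 * m, by omega⟩ : Fin (2 * k + 1)) ≠ ⟨2 * m + 2, by omega⟩ :=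
            Fin.ne_of_val_ne (show (2 * m : ℕ) ≠ 2 * m + 2 by omega)
          have hz : ∀ l, l ≠ (⟨2 * m, by omega⟩ : Fin (2 * k + 1)) →
              l ≠ (⟨2 * m + 2, by omega⟩ : Fin (2 * k + 1)) →
              Bmat (cartanB (2 * k + 1)) σ ⟨2 * m + 1, by omega⟩ l * w l = 0 := by
            intro l h1 h2
            have hv1 : l.val ≠ 2 * m := fun e => h1 (Fin.ext e)
            have hv2 : l.val ≠ 2 * m + 2 := fun e => h2 (Fin.ext e)
            rw [KGB.B_zero σ (show 2 * m + 1 + 1 ≠ l.val by omega)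
              (show l.val + 1 ≠ 2 * m + 1 by omega), zero_mul]
          have hsum : Bmat (cartanB (2 * k + 1)) σ ⟨2 * m + 1, by omega⟩ ⟨2 * m, by omega⟩
                * w ⟨2 * m, by omega⟩
              + Bmat (cartanB (2 * k + 1)) σ ⟨2 * m + 1, by omega⟩ ⟨2 * m + 2, by omega⟩
                * w ⟨2 * m + 2, by omega⟩ = 0 := by
            rw [← KGB.sum_two _ hij hz]
            exact row _
          constructor
          · show w ⟨2 * m + 2, by omega⟩ = _
            have hden : Bmat (cartanB (2 * k + 1)) σ ⟨2 * m + 1, by omega⟩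
                ⟨2 * m + 2, by omega⟩ ≠ 0 := KGB.B_ne σ (Or.inl rfl)
            have hkey := KGB.key σ hmk
            apply mul_left_cancel₀ hden
            rw [show KGB.cc σ (m + 1) = KGB.cc σ m * KGB.rr σ m from
              Finset.prod_range_succ _ _]
            linear_combination hsum
              - Bmat (cartanB (2 * k + 1)) σ ⟨2 * m + 1, by omega⟩ ⟨2 * m, by omega⟩ * he
              - w ⟨0, by omega⟩ * KGB.cc σ m * hkey
          · intro hk1
            show w ⟨2 * m + 3, by omega⟩ = 0
            have hij2 : (⟨2 * m + 1, by omega⟩ : Fin (2 * k + 1)) ≠ ⟨2 * m + 3, by omega⟩ :=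
              Fin.ne_of_val_ne (show (2 * m + 1 : ℕ) ≠ 2 * m + 3 by omega)
            have hz2 : ∀ l, l ≠ (⟨2 * m + 1, by omega⟩ : Fin (2 * k + 1)) →
                l ≠ (⟨2 * m + 3, by omega⟩ : Fin (2 * k + 1)) →
                Bmat (cartanB (2 * k + 1)) σ ⟨2 * m + 2, by omega⟩ l * w l = 0 := by
              intro l h1 h2
              have hv1 : l.val ≠ 2 * m + 1 := fun e => h1 (Fin.ext e)
              have hv2 : l.val ≠ 2 * m + 3 := fun e => h2 (Fin.ext e)
              rw [KGB.B_zero σ (show 2 * m + 2 + 1 ≠ l.val by omega)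
                (show l.val + 1 ≠ 2 * m + 2 by omega), zero_mul]
            have hsum2 : Bmat (cartanB (2 * k + 1)) σ ⟨2 * m + 2, by omega⟩
                  ⟨2 * m + 1, by omega⟩ * w ⟨2 * m + 1, by omega⟩
                + Bmat (cartanB (2 * k + 1)) σ ⟨2 * m + 2, by omega⟩
                  ⟨2 * m + 3, by omega⟩ * w ⟨2 * m + 3, by omega⟩ = 0 := by
              rw [← KGB.sum_two _ hij2 hz2]
              exact row _
            rw [show w ⟨2 * m + 1, by omega⟩ = 0 from hodd, mul_zero, zero_add] at hsum2
            exact (mul_eq_zero.mp hsum2).resolve_left (KGB.B_ne σ (Or.inl rfl))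
      refine Submodule.mem_span_singleton.mpr ⟨w ⟨0, by omega⟩, ?_⟩
      funext i
      rcases Nat.mod_two_eq_zero_or_one i.val with hi | hi
      · obtain ⟨m, hmk, him⟩ : ∃ m, m ≤ k ∧ i.val = 2 * m :=
          ⟨i.val / 2, by omega, by omega⟩
        have hieq : i = ⟨2 * m, by omega⟩ := Fin.ext him
        rw [hieq]
        have h1 := (main m hmk).1
        simp only [Pi.smul_apply, smul_eq_mul]
        rw [hvv_even m (by omega), h1]
      · obtain ⟨m, hmk, him⟩ : ∃ m, m < k ∧ i.val = 2 * m + 1 :=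
          ⟨i.val / 2, by omega, by omega⟩
        have hieq : i = ⟨2 * m + 1, by omega⟩ := Fin.ext him
        rw [hieq]
        have h1 := (main m (le_of_lt hmk)).2 hmk
        simp only [Pi.smul_apply, smul_eq_mul]
        rw [hvv_odd m (by omega), mul_zero, h1]
    · rw [Submodule.span_le, Set.singleton_subset_iff]
      exact LinearMap.mem_ker.mpr hvker
  · -- component count
    rw [hsupp]
    have hbot : (SimpleGraph.pathGraph (2 * k + 1)).induce
        {i : Fin (2 * k + 1) | i.val % 2 = 0} = ⊥ := by
      ext a b
      simp only [SimpleGraph.comap_adj, Function.Embedding.coe_subtype, SimpleGraph.bot_adj,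
        iff_false]
      intro hab
      rw [SimpleGraph.pathGraph_adj] at hab
      have ha : (a : Fin (2 * k + 1)).val % 2 = 0 := a.2
      have hb : (b : Fin (2 * k + 1)).val % 2 = 0 := b.2
      omega
    rw [hbot]
    have hbij : Function.Bijective
        ((⊥ : SimpleGraph {i : Fin (2 * k + 1) | i.val % 2 = 0}).connectedComponentMk) := by
      constructor
      · intro a b hab
        exact SimpleGraph.reachable_bot.mp (SimpleGraph.ConnectedComponent.exact hab)
      · exact SimpleGraph.ConnectedComponent.ind fun v => ⟨v, rfl⟩
    rw [← Nat.card_eq_of_bijective _ hbij]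
    have hf : Function.Bijective (fun m : Fin (k + 1) =>
        (⟨⟨2 * m.val, by omega⟩, show (2 * m.val) % 2 = 0 by omega⟩ :
          {i : Fin (2 * k + 1) | i.val % 2 = 0})) := by
      constructor
      · intro a b h
        have h2 : 2 * (a : ℕ) = 2 * (b : ℕ) :=
          congrArg (fun x : {i : Fin (2 * k + 1) | i.val % 2 = 0} =>
            (x : Fin (2 * k + 1)).val) h
        exact Fin.ext (by omega)
      · rintro ⟨i, hi⟩
        have hi' : i.val % 2 = 0 := hi
        refine ⟨⟨i.val / 2, by omega⟩, ?_⟩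
        apply Subtype.ext
        apply Fin.ext
        show 2 * (i.val / 2) = i.val
        omega
    rw [← Nat.card_eq_of_bijective _ hf, Nat.card_eq_fintype_card, Fintype.card_fin]
end

section
/- Let n = 2k+1 be odd with n ≥ 3, let A be the Cartan matrix of type C_n, and let σ be any permutation of {1,…,n}. Then the kernel of B_σ over ℚ is spanned by a single nonzero vector v whose support {i : v_i ≠ 0} is exactly the set of odd indices {1, 3, …, n}; in particular the support of v has exactly k+1 connected components in the Dynkin diagram of type C_n (a path on {1,…,n}). -/
open Matrix

/-- The Cartan matrix of type `Cₙ` (nodes indexed `0, …, n-1`; the long root is the last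
node): `a i i = 2`, consecutive nodes give `-1`, except `a (n-1) (n-2) = -2`. -/
def cartanC (n : ℕ) : Matrix (Fin n) (Fin n) ℚ :=
  fun i j => if i = j then 2
    else if i.val + 1 = j.val then -1
    else if j.val + 1 = i.val then (if i.val = n - 1 then -2 else -1) else 0

namespace KGSC

variable {n : ℕ}

/-- The sign `+1` if `σ t < σ (t+1)`, `-1` otherwise (junk value `1` out of range). -/
def sgn (σ : Equiv.Perm (Fin n)) (t : ℕ) : ℚ :=
  if h : t + 1 < n then
    (if σ ⟨t, Nat.lt_of_succ_lt h⟩ < σ ⟨t + 1, h⟩ then 1 else -1) else 1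

lemma sgn_mul_self (σ : Equiv.Perm (Fin n)) (t : ℕ) : sgn σ t * sgn σ t = 1 := by
  unfold sgn; split_ifs <;> norm_num

lemma sgn_ne_zero (σ : Equiv.Perm (Fin n)) (t : ℕ) : sgn σ t ≠ 0 := by
  unfold sgn; split_ifs <;> norm_num

/-- The kernel generator. -/
def kv (σ : Equiv.Perm (Fin n)) (i : Fin n) : ℚ :=
  if i.val % 2 = 0 then ∏ t ∈ Finset.range i.val, sgn σ t else 0

variable (σ : Equiv.Perm (Fin n))

lemma Bmat_zero (i j : Fin n) (h1 : i.val + 1 ≠ j.val)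
    (h2 : j.val + 1 ≠ i.val) : Bmat (cartanC n) σ i j = 0 := by
  by_cases hij : i = j
  · simp [Bmat, hij]
  · have hA : cartanC n i j = 0 := by simp [cartanC, hij, h1, h2]
    simp [Bmat, hA, hij]

lemma Bmat_succ (i j : Fin n) (h : i.val + 1 = j.val) :
    Bmat (cartanC n) σ i j = sgn σ i.val := by
  have hij : i ≠ j := by intro e; rw [e] at h; omega
  have h1 : ¬ (j.val + 1 = i.val) := by omega
  have hA : cartanC n i j = -1 := by simp [cartanC, hij, h]
  have hn : i.val + 1 < n := h ▸ j.isLt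
  have e1 : (⟨i.val, Nat.lt_of_succ_lt hn⟩ : Fin n) = i := rfl
  have e2 : (⟨i.val + 1, hn⟩ : Fin n) = j := Fin.ext h
  simp only [Bmat, hA, if_neg hij, sgn, dif_pos hn, e1, e2]
  split_ifs <;> norm_num

lemma Bmat_pred (i j : Fin n) (h : j.val + 1 = i.val) (hlast : i.val ≠ n - 1) :
    Bmat (cartanC n) σ i j = -sgn σ j.val := by
  have hij : i ≠ j := by intro e; rw [e] at h; omega
  have h1 : ¬ (i.val + 1 = j.val) := by omega
  have hA : cartanC n i j = -1 := by simp [cartanC, hij, h1, h, hlast]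
  have hn : j.val + 1 < n := h ▸ i.isLt
  have e1 : (⟨j.val, Nat.lt_of_succ_lt hn⟩ : Fin n) = j := rfl
  have e2 : (⟨j.val + 1, hn⟩ : Fin n) = i := Fin.ext h
  have hne : σ i ≠ σ j := fun e => hij (σ.injective e)
  simp only [Bmat, hA, if_neg hij, sgn, dif_pos hn, e1, e2]
  by_cases hlt : σ i < σ j
  · rw [if_pos hlt, if_neg (not_lt.mpr hlt.le)]
    try norm_num
  · have hgt : σ j < σ i := lt_of_le_of_ne (not_lt.mp hlt) (Ne.symm hne)
    rw [if_neg hlt, if_pos hgt]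
    try norm_num

lemma Bmat_last (i j : Fin n) (h : j.val + 1 = i.val) (hlast : i.val = n - 1) :
    Bmat (cartanC n) σ i j = -2 * sgn σ j.val := by
  have hij : i ≠ j := by intro e; rw [e] at h; omega
  have h1 : ¬ (i.val + 1 = j.val) := by omega
  have hA : cartanC n i j = -2 := by
    simp only [cartanC]
    rw [if_neg hij, if_neg h1, if_pos h, if_pos hlast]
  have hn : j.val + 1 < n := h ▸ i.isLt
  have e1 : (⟨j.val, Nat.lt_of_succ_lt hn⟩ : Fin n) = j := rfl
  have e2 : (⟨j.val + 1, hn⟩ : Fin n) = i := Fin.ext h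
  have hne : σ i ≠ σ j := fun e => hij (σ.injective e)
  simp only [Bmat, hA, if_neg hij, sgn, dif_pos hn, e1, e2]
  by_cases hlt : σ i < σ j
  · rw [if_pos hlt, if_neg (not_lt.mpr hlt.le)]
    try norm_num
  · have hgt : σ j < σ i := lt_of_le_of_ne (not_lt.mp hlt) (Ne.symm hne)
    rw [if_neg hlt, if_pos hgt]
    try norm_num

lemma mulVec_zero_row (h3 : 3 ≤ n) (w : Fin n → ℚ) :
    (Bmat (cartanC n) σ).mulVec w ⟨0, by omega⟩ = sgn σ 0 * w ⟨1, by omega⟩ := by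
  rw [Matrix.mulVec, dotProduct]
  rw [Finset.sum_eq_single (⟨1, by omega⟩ : Fin n)]
  · rw [Bmat_succ σ ⟨0, by omega⟩ ⟨1, by omega⟩ rfl]
  · intro c _ hc
    have hcv : c.val ≠ 1 := fun e => hc (Fin.ext e)
    rw [Bmat_zero σ ⟨0, by omega⟩ c (show 0 + 1 ≠ c.val by omega)
      (show c.val + 1 ≠ 0 by omega), zero_mul]
  · intro h; exact absurd (Finset.mem_univ _) h

lemma mulVec_mid_row (m : ℕ) (h1 : 1 ≤ m) (h2 : m + 1 < n) (w : Fin n → ℚ) :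
    (Bmat (cartanC n) σ).mulVec w ⟨m, by omega⟩ =
      -sgn σ (m - 1) * w ⟨m - 1, by omega⟩ + sgn σ m * w ⟨m + 1, by omega⟩ := by
  rw [Matrix.mulVec, dotProduct]
  rw [Finset.sum_eq_add_of_mem (⟨m - 1, by omega⟩ : Fin n) (⟨m + 1, by omega⟩ : Fin n)
      (Finset.mem_univ _) (Finset.mem_univ _)
      (Fin.ne_of_val_ne (show m - 1 ≠ m + 1 by omega))]
  · rw [Bmat_pred σ ⟨m, by omega⟩ ⟨m - 1, by omega⟩ (show m - 1 + 1 = m by omega)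
        (show m ≠ n - 1 by omega),
      Bmat_succ σ ⟨m, by omega⟩ ⟨m + 1, by omega⟩ rfl]
  · intro c _ hc
    obtain ⟨hc1, hc2⟩ := hc
    have e1 : c.val ≠ m - 1 := fun e => hc1 (Fin.ext e)
    have e2 : c.val ≠ m + 1 := fun e => hc2 (Fin.ext e)
    rw [Bmat_zero σ ⟨m, by omega⟩ c (show m + 1 ≠ c.val by omega)
      (show c.val + 1 ≠ m by omega), zero_mul]

lemma mulVec_last_row (h3 : 3 ≤ n) (w : Fin n → ℚ) :
    (Bmat (cartanC n) σ).mulVec w ⟨n - 1, by omega⟩ =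
      -2 * sgn σ (n - 2) * w ⟨n - 2, by omega⟩ := by
  rw [Matrix.mulVec, dotProduct]
  rw [Finset.sum_eq_single (⟨n - 2, by omega⟩ : Fin n)]
  · rw [Bmat_last σ ⟨n - 1, by omega⟩ ⟨n - 2, by omega⟩ (show n - 2 + 1 = n - 1 by omega) rfl]
  · intro c _ hc
    have hcv : c.val ≠ n - 2 := fun e => hc (Fin.ext e)
    have := c.isLt
    rw [Bmat_zero σ ⟨n - 1, by omega⟩ c (show n - 1 + 1 ≠ c.val by omega)
      (show c.val + 1 ≠ n - 1 by omega), zero_mul]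
  · intro h; exact absurd (Finset.mem_univ _) h

lemma kv_rec (m : ℕ) (h2 : m + 2 < n) :
    kv σ ⟨m + 2, h2⟩ = sgn σ m * sgn σ (m + 1) * kv σ ⟨m, by omega⟩ := by
  unfold kv
  rcases Nat.even_or_odd m with he | ho
  · have hm : m % 2 = 0 := Nat.even_iff.mp he
    rw [if_pos (show (m + 2) % 2 = 0 by omega), if_pos (show m % 2 = 0 from hm),
      Finset.prod_range_succ, Finset.prod_range_succ]
    ring
  · have hm : m % 2 = 1 := Nat.odd_iff.mp ho
    rw [if_neg (show ¬ (m + 2) % 2 = 0 by omega), if_neg (show ¬ m % 2 = 0 by omega)]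
    ring

lemma kv_ne_zero (i : Fin n) (h : i.val % 2 = 0) : kv σ i ≠ 0 := by
  unfold kv
  rw [if_pos h]
  exact Finset.prod_ne_zero_iff.mpr fun t _ => sgn_ne_zero σ t

lemma kv_eq_zero (i : Fin n) (h : i.val % 2 = 1) : kv σ i = 0 := by
  unfold kv; rw [if_neg (by omega)]

end KGSC

open KGSC in
/-- In type `Cₙ` with `n = 2k+1` odd, `n ≥ 3`, the kernel of any acyclic exchange matrix
`B_σ` is spanned by a single nonzero vector whose support is exactly the set of nodes with
even `0`-indexed index (i.e. the odd nodes `1, 3, …, n` in `1`-indexed notation); in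
particular the support has exactly `k+1` connected components in the Dynkin diagram of
type `Cₙ` (the path graph on the `n` nodes). -/
theorem kernel_gen_support_typeC (k : ℕ) (hk : 1 ≤ k) (σ : Equiv.Perm (Fin (2 * k + 1))) :
    ∃ v : Fin (2 * k + 1) → ℚ, v ≠ 0 ∧
      LinearMap.ker (Matrix.toLin' (Bmat (cartanC (2 * k + 1)) σ)) =
        Submodule.span ℚ {v} ∧
      {i : Fin (2 * k + 1) | v i ≠ 0} = {i : Fin (2 * k + 1) | i.val % 2 = 0} ∧
      Nat.card
        ((SimpleGraph.pathGraph (2 * k + 1)).induce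
          {i : Fin (2 * k + 1) | v i ≠ 0}).ConnectedComponent = k + 1 := by
  have h3 : 3 ≤ 2 * k + 1 := by omega
  have hset : {i : Fin (2 * k + 1) | kv σ i ≠ 0} = {i : Fin (2 * k + 1) | i.val % 2 = 0} := by
    ext i
    simp only [Set.mem_setOf_eq]
    constructor
    · intro h
      by_contra hodd
      exact h (kv_eq_zero σ i (by omega))
    · exact fun h => kv_ne_zero σ i h
  refine ⟨kv σ, ?_, ?_, hset, ?_⟩
  · intro h
    have h0 : kv σ ⟨0, by omega⟩ = 0 := by rw [h]; rfl
    exact kv_ne_zero σ ⟨0, by omega⟩ (show 0 % 2 = 0 from rfl) h0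
  · -- kernel = span
    have hker : ∀ w : Fin (2 * k + 1) → ℚ,
        Matrix.toLin' (Bmat (cartanC (2 * k + 1)) σ) w = 0 ↔
        ∀ i, (Bmat (cartanC (2 * k + 1)) σ).mulVec w i = 0 := by
      intro w
      rw [Matrix.toLin'_apply, funext_iff]
      simp
    have hkv_ker : Matrix.toLin' (Bmat (cartanC (2 * k + 1)) σ) (kv σ) = 0 := by
      rw [hker]
      intro i
      rcases Nat.eq_zero_or_pos i.val with h0 | h1
      · have hi : i = ⟨0, by omega⟩ := Fin.ext h0
        rw [hi, mulVec_zero_row σ h3,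
          kv_eq_zero σ ⟨1, by omega⟩ (show 1 % 2 = 1 from rfl), mul_zero]
      by_cases hlast : i.val = 2 * k + 1 - 1
      · have hi : i = ⟨2 * k + 1 - 1, by omega⟩ := Fin.ext hlast
        rw [hi, mulVec_last_row σ h3,
          kv_eq_zero σ ⟨2 * k + 1 - 2, by omega⟩ (show (2 * k + 1 - 2) % 2 = 1 by omega),
          mul_zero]
      · obtain ⟨r, hrm⟩ : ∃ r, i.val = r + 1 := ⟨i.val - 1, by omega⟩
        have hr2 : r + 2 < 2 * k + 1 := by have := i.isLt; omega
        have hi : i = ⟨r + 1, by omega⟩ := Fin.ext hrm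
        rw [hi, mulVec_mid_row σ (r + 1) (by omega) (by omega)]
        simp only [Nat.add_sub_cancel]
        rw [kv_rec σ r hr2]
        linear_combination sgn σ r * kv σ ⟨r, by omega⟩ * sgn_mul_self σ (r + 1)
    apply le_antisymm
    · intro w hw
      rw [LinearMap.mem_ker, hker] at hw
      have key : ∀ m (hm : m < 2 * k + 1),
          w ⟨m, hm⟩ = w ⟨0, by omega⟩ * kv σ ⟨m, hm⟩ := by
        intro m
        induction m using Nat.strong_induction_on with
        | _ m ih =>
          intro hm
          match m with
          | 0 => unfold kv; simp
          | 1 =>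
            have h0 := hw ⟨0, by omega⟩
            rw [mulVec_zero_row σ h3] at h0
            have hw1 : w ⟨1, by omega⟩ = 0 :=
              (mul_eq_zero.mp h0).resolve_left (sgn_ne_zero σ 0)
            rw [hw1, kv_eq_zero σ ⟨1, by omega⟩ (show 1 % 2 = 1 from rfl), mul_zero]
          | (r + 2) =>
            have hr := hw ⟨r + 1, by omega⟩
            rw [mulVec_mid_row σ (r + 1) (by omega) (by omega)] at hr
            simp only [Nat.add_sub_cancel] at hr
            have hw2 : w ⟨r + 2, hm⟩ = sgn σ r * sgn σ (r + 1) * w ⟨r, by omega⟩ := by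
              linear_combination sgn σ (r + 1) * hr - w ⟨r + 2, hm⟩ * sgn_mul_self σ (r + 1)
            rw [hw2, kv_rec σ r hm, ih r (by omega) (by omega)]
            ring
      have hweq : w = w ⟨0, by omega⟩ • kv σ := by
        funext i
        have hi : i = ⟨i.val, i.isLt⟩ := rfl
        rw [hi, key i.val i.isLt]
        simp [mul_comm]
      rw [hweq]
      exact Submodule.smul_mem _ _ (Submodule.mem_span_singleton_self _)
    · rw [Submodule.span_le, Set.singleton_subset_iff]
      exact hkv_ker
  · -- connected components count
    rw [hset]
    have hbot : (SimpleGraph.pathGraph (2 * k + 1)).induce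
        {i : Fin (2 * k + 1) | i.val % 2 = 0} = ⊥ := by
      ext a b
      simp only [SimpleGraph.comap_adj, SimpleGraph.bot_adj, iff_false]
      intro hadj
      rw [SimpleGraph.pathGraph_adj] at hadj
      simp only [Function.Embedding.coe_subtype] at hadj
      have ha := a.2
      have hb := b.2
      simp only [Set.mem_setOf_eq] at ha hb
      omega
    rw [hbot]
    have hequiv : (⊥ : SimpleGraph {i : Fin (2 * k + 1) | i.val % 2 = 0}).ConnectedComponent ≃
        {i : Fin (2 * k + 1) | i.val % 2 = 0} := by
      refine (Equiv.ofBijective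
        ((⊥ : SimpleGraph {i : Fin (2 * k + 1) | i.val % 2 = 0}).connectedComponentMk)
        ⟨?_, ?_⟩).symm
      · intro a b hab
        exact SimpleGraph.reachable_bot.mp (SimpleGraph.ConnectedComponent.exact hab)
      · intro c
        exact c.exists_rep
    rw [Nat.card_congr hequiv]
    have e : {i : Fin (2 * k + 1) | i.val % 2 = 0} ≃ Fin (k + 1) :=
      { toFun := fun i => ⟨i.1.val / 2, by
          have h2 := i.2
          have h1 := i.1.isLt
          simp only [Set.mem_setOf_eq] at h2
          omega⟩
        invFun := fun j => ⟨⟨2 * j.val, by have := j.isLt; omega⟩, by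
          simp only [Set.mem_setOf_eq]
          omega⟩
        left_inv := fun i => by
          have h2 := i.2
          simp only [Set.mem_setOf_eq] at h2
          ext
          simp only [Fin.val_mk]
          omega
        right_inv := fun j => by
          ext
          simp only [Fin.val_mk]
          omega }
    rw [Nat.card_congr e, Nat.card_eq_fintype_card, Fintype.card_fin]
end

section
/- Let n ≥ 5 be odd, let A be the Cartan matrix of type D_n, and let σ be any permutation of {1,…,n}. If σ(n−2) lies strictly between σ(n−1) and σ(n) (i.e., min{σ(n−1), σ(n)} < σ(n−2) < max{σ(n−1), σ(n)}), then the kernel of B_σ over ℚ is spanned by the vector e_{n−1} + e_n (corresponding to α_{n−1} + α_n); otherwise it is spanned by e_{n−1} − e_n (corresponding to α_{n−1} − α_n). Here e_i denotes the i-th standard basis vector of ℚⁿ. -/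
open Matrix

def Edge (n : ℕ) (i j : Fin n) : Prop :=
  (i.val + 1 = j.val ∧ j.val ≤ n - 2) ∨ (j.val + 1 = i.val ∧ i.val ≤ n - 2) ∨
    (i.val = n - 3 ∧ j.val = n - 1) ∨ (i.val = n - 1 ∧ j.val = n - 3)

lemma val_mk' {n a : ℕ} (h : a < n) : (⟨a, h⟩ : Fin n).val = a := rfl

lemma B_eq_zero {n : ℕ} (σ : Equiv.Perm (Fin n)) {i j : Fin n} (h : ¬ Edge n i j) :
    Bmat (cartanD n) σ i j = 0 := by
  by_cases hij : i = j
  · simp [Bmat, hij]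
  · unfold Edge at h
    simp only [Bmat, cartanD, if_neg hij, if_neg h]
    split <;> ring

lemma B_edge {n : ℕ} (σ : Equiv.Perm (Fin n)) {i j : Fin n} (hij : i ≠ j) (h : Edge n i j) :
    Bmat (cartanD n) σ i j = if σ i < σ j then 1 else -1 := by
  unfold Edge at h
  simp only [Bmat, cartanD, if_neg hij, if_pos h]
  split <;> ring

lemma row_eq {n : ℕ} (σ : Equiv.Perm (Fin n)) (x : Fin n → ℚ)
    (hx : Matrix.mulVec (Bmat (cartanD n) σ) x = 0) (i : Fin n) (S : Finset (Fin n))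
    (hS : ∀ j, j ∉ S → Bmat (cartanD n) σ i j * x j = 0) :
    ∑ j ∈ S, Bmat (cartanD n) σ i j * x j = 0 := by
  have h0 : ∑ j, Bmat (cartanD n) σ i j * x j = 0 := by
    have := congrFun hx i
    simpa [Matrix.mulVec, dotProduct] using this
  rw [← h0]
  exact Finset.sum_subset (Finset.subset_univ S) (fun j _ hj => hS j hj)

lemma sign_rel {a b : ℚ} {c c' : Prop} [Decidable c] [Decidable c']
    (h : (if c then (1:ℚ) else -1) * a + (if c' then (1:ℚ) else -1) * b = 0) :
    a = 0 ↔ b = 0 := by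
  split at h <;> split at h <;> constructor <;> intro h0 <;> linarith

lemma ker_vanish (n : ℕ) (hn : 5 ≤ n) (hodd : Odd n) (σ : Equiv.Perm (Fin n))
    (x : Fin n → ℚ) (hx : Matrix.mulVec (Bmat (cartanD n) σ) x = 0) :
    ∀ k (hk : k ≤ n - 3) (h : k < n), x ⟨k, h⟩ = 0 := by
  -- row 0 : x 1 = 0
  have h1 : x ⟨1, by omega⟩ = 0 := by
    have hS : ∀ j, j ∉ ({⟨1, by omega⟩} : Finset (Fin n)) →
        Bmat (cartanD n) σ ⟨0, by omega⟩ j * x j = 0 := by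
      intro j hj
      rw [B_eq_zero σ, zero_mul]
      simp only [Finset.mem_singleton] at hj
      have hj' : j.val ≠ 1 := fun h => hj (Fin.ext h)
      intro hE
      unfold Edge at hE
      simp only [val_mk'] at hE
      have := j.isLt
      omega
    have hr := row_eq σ x hx ⟨0, by omega⟩ _ hS
    rw [Finset.sum_singleton,
      B_edge σ (by simp only [ne_eq, Fin.mk.injEq] <;> omega)
        (by left; simp only [val_mk', true_and, and_true] <;> omega)] at hr
    split at hr <;> linarith
  -- row n-2 : x (n-3) = 0
  have h3 : x ⟨n - 3, by omega⟩ = 0 := by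
    have hS : ∀ j, j ∉ ({⟨n - 3, by omega⟩} : Finset (Fin n)) →
        Bmat (cartanD n) σ ⟨n - 2, by omega⟩ j * x j = 0 := by
      intro j hj
      rw [B_eq_zero σ, zero_mul]
      simp only [Finset.mem_singleton] at hj
      have hj' : j.val ≠ n - 3 := fun h => hj (Fin.ext h)
      intro hE
      unfold Edge at hE
      simp only [val_mk'] at hE
      have := j.isLt
      omega
    have hr := row_eq σ x hx ⟨n - 2, by omega⟩ _ hS
    rw [Finset.sum_singleton,
      B_edge σ (by simp only [ne_eq, Fin.mk.injEq] <;> omega)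
        (by right; left; simp only [val_mk', true_and, and_true] <;> omega)] at hr
    split at hr <;> linarith
  -- interior rows: x k = 0 ↔ x (k+2) = 0
  have step : ∀ k (hk : k + 2 ≤ n - 3),
      (x ⟨k, by omega⟩ = 0 ↔ x ⟨k + 2, by omega⟩ = 0) := by
    intro k hk
    have hS : ∀ j, j ∉ ({⟨k, by omega⟩, ⟨k + 2, by omega⟩} : Finset (Fin n)) →
        Bmat (cartanD n) σ ⟨k + 1, by omega⟩ j * x j = 0 := by
      intro j hj
      rw [B_eq_zero σ, zero_mul]
      simp only [Finset.mem_insert, Finset.mem_singleton] at hj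
      push_neg at hj
      have hj1 : j.val ≠ k := fun h => hj.1 (Fin.ext h)
      have hj2 : j.val ≠ k + 2 := fun h => hj.2 (Fin.ext h)
      intro hE
      unfold Edge at hE
      simp only [val_mk'] at hE
      have := j.isLt
      omega
    have hr := row_eq σ x hx ⟨k + 1, by omega⟩ _ hS
    rw [Finset.sum_pair (by simp only [ne_eq, Fin.mk.injEq] <;> omega),
      B_edge σ (by simp only [ne_eq, Fin.mk.injEq] <;> omega)
        (by right; left; simp only [val_mk', true_and, and_true] <;> omega),
      B_edge σ (by simp only [ne_eq, Fin.mk.injEq] <;> omega)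
        (by left; simp only [val_mk', true_and, and_true] <;> omega)] at hr
    exact sign_rel hr
  -- odd indices
  have hoddc : ∀ j (hj : 2 * j + 1 ≤ n - 3), x ⟨2 * j + 1, by omega⟩ = 0 := by
    intro j
    induction j with
    | zero => intro _; simpa using h1
    | succ j ih =>
      intro hj
      have h' : x ⟨2 * j + 1, by omega⟩ = 0 := ih (by omega)
      have := (step (2 * j + 1) (by omega)).mp h'
      have heq : (⟨2 * j + 1 + 2, by omega⟩ : Fin n) = ⟨2 * (j + 1) + 1, by omega⟩ := by
        simp only [Fin.mk.injEq]; omega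
      rwa [heq] at this
  -- even indices (downward from n-3)
  have hevenc : ∀ j (hj : 2 * j ≤ n - 3), x ⟨n - 3 - 2 * j, by omega⟩ = 0 := by
    intro j
    induction j with
    | zero => intro _; simpa using h3
    | succ j ih =>
      intro hj
      have h' : x ⟨n - 3 - 2 * j, by omega⟩ = 0 := ih (by omega)
      have hiff := step (n - 3 - 2 * (j + 1)) (by omega)
      have heq : (⟨n - 3 - 2 * (j + 1) + 2, by omega⟩ : Fin n) = ⟨n - 3 - 2 * j, by omega⟩ := by
        simp only [Fin.mk.injEq]; omega
      rw [heq] at hiff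
      exact hiff.mpr h'
  intro k hk h
  rcases Nat.even_or_odd k with ⟨m, hm⟩ | ⟨m, hm⟩
  · obtain ⟨t, ht⟩ := hodd
    have heq : (⟨k, h⟩ : Fin n) = ⟨n - 3 - 2 * ((n - 3 - k) / 2), by omega⟩ := by
      simp only [Fin.mk.injEq]; omega
    rw [heq]
    exact hevenc _ (by omega)
  · have heq : (⟨k, h⟩ : Fin n) = ⟨2 * m + 1, by omega⟩ := by
      simp only [Fin.mk.injEq]; omega
    rw [heq]
    exact hoddc _ (by omega)

lemma main_aux (n : ℕ) (hn : 5 ≤ n) (hodd : Odd n) (σ : Equiv.Perm (Fin n)) (ε : ℚ)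
    (hε : ε = 1 ∨ ε = -1)
    (hsign : (if σ ⟨n - 3, Nat.sub_lt (by omega) (by omega)⟩ < σ ⟨n - 2, Nat.sub_lt (by omega) (by omega)⟩ then (1:ℚ) else -1)
      + ε * (if σ ⟨n - 3, Nat.sub_lt (by omega) (by omega)⟩ < σ ⟨n - 1, Nat.sub_lt (by omega) (by omega)⟩ then (1:ℚ) else -1) = 0) :
    LinearMap.ker (Matrix.toLin' (Bmat (cartanD n) σ)) =
      Submodule.span ℚ ({Pi.single (⟨n - 2, Nat.sub_lt (by omega) (by omega)⟩ : Fin n) (1:ℚ) +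
        ε • (Pi.single (⟨n - 1, Nat.sub_lt (by omega) (by omega)⟩ : Fin n) (1:ℚ) : Fin n → ℚ)} : Set (Fin n → ℚ)) := by
  have hp1 : n - 1 < n := by omega
  have hp2 : n - 2 < n := by omega
  have hp3 : n - 3 < n := by omega
  have hp4 : n - 4 < n := by omega
  have hsign' : (if σ ⟨n - 3, hp3⟩ < σ ⟨n - 2, hp2⟩ then (1:ℚ) else -1)
      + ε * (if σ ⟨n - 3, hp3⟩ < σ ⟨n - 1, hp1⟩ then (1:ℚ) else -1) = 0 := hsign
  have hvec : (Pi.single (⟨n - 2, Nat.sub_lt (by omega) (by omega)⟩ : Fin n) (1:ℚ) +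
      ε • (Pi.single (⟨n - 1, Nat.sub_lt (by omega) (by omega)⟩ : Fin n) (1:ℚ) : Fin n → ℚ)) =
      (Pi.single (⟨n - 2, hp2⟩ : Fin n) (1:ℚ) +
      ε • (Pi.single (⟨n - 1, hp1⟩ : Fin n) (1:ℚ) : Fin n → ℚ)) := rfl
  rw [hvec]
  apply le_antisymm
  · intro x hx
    rw [LinearMap.mem_ker, Matrix.toLin'_apply] at hx
    have hvan := ker_vanish n hn hodd σ x hx
    have hS : ∀ j, j ∉ ({⟨n - 4, hp4⟩, ⟨n - 2, hp2⟩, ⟨n - 1, hp1⟩} :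
        Finset (Fin n)) → Bmat (cartanD n) σ ⟨n - 3, hp3⟩ j * x j = 0 := by
      intro j hj
      rw [B_eq_zero σ, zero_mul]
      simp only [Finset.mem_insert, Finset.mem_singleton] at hj
      push_neg at hj
      have hj1 : j.val ≠ n - 4 := fun h => hj.1 (Fin.ext h)
      have hj2 : j.val ≠ n - 2 := fun h => hj.2.1 (Fin.ext h)
      have hj3 : j.val ≠ n - 1 := fun h => hj.2.2 (Fin.ext h)
      intro hE
      unfold Edge at hE
      simp only [val_mk', true_and, and_true] at hE
      have := j.isLt
      omega
    have hr := row_eq σ x hx ⟨n - 3, hp3⟩ _ hS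
    rw [Finset.sum_insert (by simp only [Finset.mem_insert, Finset.mem_singleton, Fin.mk.injEq] <;> omega),
      Finset.sum_pair (by simp only [ne_eq, Fin.mk.injEq] <;> omega),
      B_edge σ (by simp only [ne_eq, Fin.mk.injEq] <;> omega) (by right; left; simp only [val_mk', true_and, and_true] <;> omega),
      B_edge σ (by simp only [ne_eq, Fin.mk.injEq] <;> omega) (by left; simp only [val_mk', true_and, and_true] <;> omega),
      B_edge σ (by simp only [ne_eq, Fin.mk.injEq] <;> omega) (by right; right; left; simp only [val_mk', true_and, and_true] <;> omega)] at hr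
    have h4 : x ⟨n - 4, hp4⟩ = 0 := hvan (n - 4) (by omega) hp4
    rw [h4, mul_zero, zero_add] at hr
    have hx1 : x ⟨n - 1, hp1⟩ = ε * x ⟨n - 2, hp2⟩ := by
      by_cases hc2 : σ ⟨n - 3, hp3⟩ < σ ⟨n - 2, hp2⟩ <;>
        by_cases hc1 : σ ⟨n - 3, hp3⟩ < σ ⟨n - 1, hp1⟩ <;>
        rcases hε with h | h <;> subst h <;>
        simp only [hc2, hc1, if_true, if_false, ite_true, ite_false] at hr hsign' <;>
        linarith
    rw [Submodule.mem_span_singleton]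
    refine ⟨x ⟨n - 2, hp2⟩, funext fun i => ?_⟩
    by_cases hi2 : i = ⟨n - 2, hp2⟩
    · subst hi2
      have e1 : (⟨n - 2, hp2⟩ : Fin n) ≠ ⟨n - 1, hp1⟩ := by
        simp only [ne_eq, Fin.mk.injEq] <;> omega
      simp [Pi.single_apply, e1]
    · by_cases hi1 : i = ⟨n - 1, hp1⟩
      · subst hi1
        have e1 : (⟨n - 1, hp1⟩ : Fin n) ≠ ⟨n - 2, hp2⟩ := by
          simp only [ne_eq, Fin.mk.injEq] <;> omega
        simp [Pi.single_apply, e1, hx1, mul_comm]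
      · have hv1 : i.val ≠ n - 2 := fun h => hi2 (Fin.ext h)
        have hv2 : i.val ≠ n - 1 := fun h => hi1 (Fin.ext h)
        have h0 : x i = 0 := by
          have := hvan i.val (by have := i.isLt; omega) i.isLt
          rwa [Fin.eta] at this
        simp only [Pi.smul_apply, Pi.add_apply, Pi.single_apply, smul_eq_mul, h0]
        rw [if_neg hi2, if_neg hi1]
        ring
  · rw [Submodule.span_le, Set.singleton_subset_iff, SetLike.mem_coe, LinearMap.mem_ker,
      Matrix.toLin'_apply]
    funext i
    have hsum : (Bmat (cartanD n) σ *ᵥ (Pi.single (⟨n - 2, hp2⟩ : Fin n) (1:ℚ) +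
        ε • (Pi.single (⟨n - 1, hp1⟩ : Fin n) (1:ℚ) : Fin n → ℚ))) i =
        Bmat (cartanD n) σ i ⟨n - 2, hp2⟩ +
          ε * Bmat (cartanD n) σ i ⟨n - 1, hp1⟩ := by
      simp [Matrix.mulVec, dotProduct, Pi.single_apply, mul_add, mul_ite,
        Finset.sum_add_distrib, mul_comm]
    rw [hsum]
    by_cases hi : i.val = n - 3
    · have hieq : i = ⟨n - 3, hp3⟩ := Fin.ext hi
      subst hieq
      rw [B_edge σ (by simp only [ne_eq, Fin.mk.injEq] <;> omega) (by left; simp only [val_mk', true_and, and_true] <;> omega),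
        B_edge σ (by simp only [ne_eq, Fin.mk.injEq] <;> omega) (by right; right; left; simp only [val_mk', true_and, and_true] <;> omega)]
      simpa using hsign'
    · rw [B_eq_zero σ, B_eq_zero σ]
      · simp
      · intro hE; unfold Edge at hE
        simp only [val_mk', true_and, and_true] at hE
        have := i.isLt; omega
      · intro hE; unfold Edge at hE
        simp only [val_mk', true_and, and_true] at hE
        have := i.isLt; omega

/-- In type `Dₙ` with `n ≥ 5` odd, the kernel of any acyclic exchange matrix `B_σ` is
spanned by `e_{n-2} + e_{n-1}` (in `0`-indexed notation, i.e. `α_{n-1} + α_n`) when the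
branching node `n-3` appears strictly between the two fork nodes `n-2` and `n-1` in the
order given by `σ`, and by `e_{n-2} - e_{n-1}` (i.e. `α_{n-1} - α_n`) otherwise. -/
theorem kernel_gen_typeD_odd (n : ℕ) (hn : 5 ≤ n) (hodd : Odd n)
    (σ : Equiv.Perm (Fin n)) :
    LinearMap.ker (Matrix.toLin' (Bmat (cartanD n) σ)) =
      Submodule.span ℚ
        {if min (σ ⟨n - 2, by omega⟩) (σ ⟨n - 1, by omega⟩) < σ ⟨n - 3, by omega⟩ ∧
            σ ⟨n - 3, by omega⟩ < max (σ ⟨n - 2, by omega⟩) (σ ⟨n - 1, by omega⟩) then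
          Pi.single (⟨n - 2, by omega⟩ : Fin n) (1 : ℚ) +
            Pi.single (⟨n - 1, by omega⟩ : Fin n) (1 : ℚ)
        else
          Pi.single (⟨n - 2, by omega⟩ : Fin n) (1 : ℚ) -
            Pi.single (⟨n - 1, by omega⟩ : Fin n) (1 : ℚ)} := by
  have hp1 : n - 1 < n := by omega
  have hp2 : n - 2 < n := by omega
  have hp3 : n - 3 < n := by omega
  -- injectivity facts
  have hne2 : (σ ⟨n - 3, hp3⟩).val ≠ (σ ⟨n - 2, hp2⟩).val := by
    intro h
    have h2 := σ.injective (Fin.ext h)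
    simp only [Fin.mk.injEq] at h2
    omega
  have hne1 : (σ ⟨n - 3, hp3⟩).val ≠ (σ ⟨n - 1, hp1⟩).val := by
    intro h
    have h2 := σ.injective (Fin.ext h)
    simp only [Fin.mk.injEq] at h2
    omega
  by_cases hC : min (σ ⟨n - 2, hp2⟩) (σ ⟨n - 1, hp1⟩) < σ ⟨n - 3, hp3⟩ ∧
      σ ⟨n - 3, hp3⟩ < max (σ ⟨n - 2, hp2⟩) (σ ⟨n - 1, hp1⟩)
  · rw [if_pos hC]
    have hkey : ¬(σ ⟨n - 3, hp3⟩ < σ ⟨n - 2, hp2⟩ ↔ σ ⟨n - 3, hp3⟩ < σ ⟨n - 1, hp1⟩) := by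
      rw [min_lt_iff, lt_max_iff] at hC
      simp only [Fin.lt_def] at hC ⊢
      omega
    have hsign : (if σ ⟨n - 3, hp3⟩ < σ ⟨n - 2, hp2⟩ then (1:ℚ) else -1)
        + 1 * (if σ ⟨n - 3, hp3⟩ < σ ⟨n - 1, hp1⟩ then (1:ℚ) else -1) = 0 := by
      by_cases h2 : σ ⟨n - 3, hp3⟩ < σ ⟨n - 2, hp2⟩ <;>
        by_cases h1 : σ ⟨n - 3, hp3⟩ < σ ⟨n - 1, hp1⟩ <;>
        simp [h2, h1] at hkey ⊢
    have := main_aux n hn hodd σ 1 (Or.inl rfl) hsign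
    rw [this]
    norm_num
  · rw [if_neg hC]
    have hkey : σ ⟨n - 3, hp3⟩ < σ ⟨n - 2, hp2⟩ ↔ σ ⟨n - 3, hp3⟩ < σ ⟨n - 1, hp1⟩ := by
      rw [min_lt_iff, lt_max_iff] at hC
      simp only [Fin.lt_def] at hC ⊢
      omega
    have hsign : (if σ ⟨n - 3, hp3⟩ < σ ⟨n - 2, hp2⟩ then (1:ℚ) else -1)
        + (-1) * (if σ ⟨n - 3, hp3⟩ < σ ⟨n - 1, hp1⟩ then (1:ℚ) else -1) = 0 := by
      by_cases h2 : σ ⟨n - 3, hp3⟩ < σ ⟨n - 2, hp2⟩ <;>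
        by_cases h1 : σ ⟨n - 3, hp3⟩ < σ ⟨n - 1, hp1⟩ <;>
        simp [h2, h1] at hkey ⊢
    have := main_aux n hn hodd σ (-1) (Or.inr rfl) hsign
    rw [this]
    congr 2
    rw [neg_one_smul]
    exact (sub_eq_add_neg _ _).symm
end

section
/- Let n = 2k ≥ 4 be even, let A be the Cartan matrix of type D_n, and let σ be any permutation of {1,…,n}. Then the kernel of B_σ over ℚ is two-dimensional and is spanned by the following two vectors: (1) the vector u equal to e_{n−1} + e_n if σ(n−2) lies strictly between σ(n−1) and σ(n), and equal to e_{n−1} − e_n otherwise; and (2) a vector w whose support {i : w_i ≠ 0} is exactly the set of odd indices {1, 3, …, n−1}; in particular the support of w has exactly k connected components in the Dynkin diagram of type D_n. Here e_i denotes the i-th standard basis vector of ℚⁿ. -/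
open Matrix

/-- The Dynkin diagram of type `Dₙ` as a graph on `Fin n`: edges `{i, i+1}` for
`i + 1 ≤ n - 2`, together with the edge `{n-3, n-1}`. -/
def dynkinGraphD (n : ℕ) : SimpleGraph (Fin n) :=
  SimpleGraph.fromRel fun i j =>
    (i.val + 1 = j.val ∧ j.val ≤ n - 2) ∨ (i.val = n - 3 ∧ j.val = n - 1)

namespace KerD

def econd (n : ℕ) (i j : Fin n) : Prop :=
  (i.val + 1 = j.val ∧ j.val ≤ n - 2) ∨ (j.val + 1 = i.val ∧ i.val ≤ n - 2) ∨
    (i.val = n - 3 ∧ j.val = n - 1) ∨ (i.val = n - 1 ∧ j.val = n - 3)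

instance (n : ℕ) (i j : Fin n) : Decidable (econd n i j) := by unfold econd; infer_instance

def sg {n : ℕ} (σ : Equiv.Perm (Fin n)) (i j : Fin n) : ℚ :=
  if σ i < σ j then 1 else -1

lemma sg_sq {n} (σ : Equiv.Perm (Fin n)) (i j : Fin n) : sg σ i j * sg σ i j = 1 := by
  unfold sg; split <;> norm_num

lemma sg_ne {n} (σ : Equiv.Perm (Fin n)) (i j : Fin n) : sg σ i j ≠ 0 := by
  unfold sg; split <;> norm_num

lemma B_apply {n} (σ : Equiv.Perm (Fin n)) (i j : Fin n) :
    Bmat (cartanD n) σ i j = if i = j then 0 else if econd n i j then sg σ i j else 0 := by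
  unfold Bmat cartanD econd sg
  by_cases h : i = j
  · simp [h]
  · simp only [h, if_false]
    split_ifs <;> norm_num

lemma fin_mk_eq {n a b : ℕ} {ha : a < n} {hb : b < n} (h : a = b) :
    (⟨a, ha⟩ : Fin n) = ⟨b, hb⟩ := by subst h; rfl

lemma cell_zero {n} (σ : Equiv.Perm (Fin n)) (i j : Fin n)
    (h : i.val = j.val ∨ ¬ econd n i j) :
    (if i = j then 0 else if econd n i j then sg σ i j else 0) = (0:ℚ) := by
  by_cases hij : i = j
  · simp [hij]
  · rw [if_neg hij, if_neg (h.resolve_left (fun hv => hij (Fin.ext hv)))]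

lemma mulVec_eq {n} (σ : Equiv.Perm (Fin n)) (x : Fin n → ℚ) (i : Fin n) :
    (Bmat (cartanD n) σ).mulVec x i =
      ∑ j, (if i = j then 0 else if econd n i j then sg σ i j else 0) * x j := by
  simp [Matrix.mulVec, dotProduct, B_apply]

lemma sum_pair' {n} {f : Fin n → ℚ} {a b : Fin n} (hab : a ≠ b)
    (h : ∀ j, j ≠ a → j ≠ b → f j = 0) : ∑ j, f j = f a + f b := by
  rw [← Finset.sum_pair hab]
  refine (Finset.sum_subset (Finset.subset_univ _) ?_).symm
  intro j _ hj
  simp only [Finset.mem_insert, Finset.mem_singleton, not_or] at hj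
  exact h j hj.1 hj.2

lemma sum_triple' {n} {f : Fin n → ℚ} {a b c : Fin n} (hab : a ≠ b) (hac : a ≠ c)
    (hbc : b ≠ c) (h : ∀ j, j ≠ a → j ≠ b → j ≠ c → f j = 0) :
    ∑ j, f j = f a + f b + f c := by
  have : ∑ j ∈ ({a, b, c} : Finset (Fin n)), f j = ∑ j, f j := by
    refine Finset.sum_subset (Finset.subset_univ _) ?_
    intro j _ hj
    simp only [Finset.mem_insert, Finset.mem_singleton, not_or] at hj
    exact h j hj.1 hj.2.1 hj.2.2
  rw [← this]
  rw [Finset.sum_insert (by simp [hab, hac]), Finset.sum_pair hbc, add_assoc]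

end KerD

namespace KerD

variable {k : ℕ}

lemma lt_sub2 (hk : 2 ≤ k) : 2*k-2 < 2*k := by omega

lemma lt_sub1 (hk : 2 ≤ k) : 2*k-1 < 2*k := by omega

lemma lt_sub3 (hk : 2 ≤ k) : 2*k-3 < 2*k := by omega

lemma row0 (hk : 2 ≤ k) (σ : Equiv.Perm (Fin (2*k))) (x : Fin (2*k) → ℚ) :
    (Bmat (cartanD (2*k)) σ).mulVec x ⟨0, by omega⟩ =
      sg σ ⟨0, by omega⟩ ⟨1, by omega⟩ * x ⟨1, by omega⟩ := by
  rw [mulVec_eq]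
  rw [Fintype.sum_eq_single (⟨1, by omega⟩ : Fin (2*k)) ?_]
  · rw [if_neg (by simp [Fin.ext_iff]), if_pos (by simp [econd, Fin.ext_iff, Fin.val_mk] <;> omega)]
  · intro j hj
    have hv : j.val ≠ 1 := fun hv => hj (Fin.ext hv)
    apply mul_eq_zero_of_left
    apply cell_zero
    rcases eq_or_ne j.val 0 with h | h
    · left; simp only [Fin.val_mk]; omega
    · right; simp [econd, Fin.ext_iff, Fin.val_mk] <;> omega

lemma row_mid (hk : 2 ≤ k) (σ : Equiv.Perm (Fin (2*k))) (x : Fin (2*k) → ℚ)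
    {a m b : ℕ} (ham : a + 1 = m) (hmb : m + 1 = b) (h1 : 1 ≤ m) (h2 : m ≤ 2*k - 4) :
    (Bmat (cartanD (2*k)) σ).mulVec x ⟨m, by omega⟩ =
      sg σ ⟨m, by omega⟩ ⟨a, by omega⟩ * x ⟨a, by omega⟩ +
      sg σ ⟨m, by omega⟩ ⟨b, by omega⟩ * x ⟨b, by omega⟩ := by
  rw [mulVec_eq]
  rw [sum_pair' (a := (⟨a, by omega⟩ : Fin (2*k))) (b := (⟨b, by omega⟩ : Fin (2*k)))
      (by simp [Fin.ext_iff, Fin.val_mk] <;> omega) ?_]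
  · rw [if_neg (by simp [Fin.ext_iff, Fin.val_mk] <;> omega), if_pos (by simp [econd, Fin.ext_iff, Fin.val_mk] <;> omega),
      if_neg (by simp [Fin.ext_iff, Fin.val_mk] <;> omega), if_pos (by simp [econd, Fin.ext_iff, Fin.val_mk] <;> omega)]
  · intro j hja hjb
    have hva : j.val ≠ a := fun hv => hja (Fin.ext hv)
    have hvb : j.val ≠ b := fun hv => hjb (Fin.ext hv)
    apply mul_eq_zero_of_left
    apply cell_zero
    rcases eq_or_ne j.val m with h | h
    · left; simp only [Fin.val_mk]; omega
    · right; simp [econd, Fin.ext_iff, Fin.val_mk] <;> omega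

lemma row_branch (hk : 2 ≤ k) (σ : Equiv.Perm (Fin (2*k))) (x : Fin (2*k) → ℚ) :
    (Bmat (cartanD (2*k)) σ).mulVec x ⟨2*k-3, lt_sub3 hk⟩ =
      sg σ ⟨2*k-3, lt_sub3 hk⟩ ⟨2*k-4, by omega⟩ * x ⟨2*k-4, by omega⟩ +
      sg σ ⟨2*k-3, lt_sub3 hk⟩ ⟨2*k-2, lt_sub2 hk⟩ * x ⟨2*k-2, lt_sub2 hk⟩ +
      sg σ ⟨2*k-3, lt_sub3 hk⟩ ⟨2*k-1, lt_sub1 hk⟩ * x ⟨2*k-1, lt_sub1 hk⟩ := by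
  rw [mulVec_eq]
  rw [sum_triple' (a := (⟨2*k-4, by omega⟩ : Fin (2*k)))
      (b := (⟨2*k-2, lt_sub2 hk⟩ : Fin (2*k))) (c := (⟨2*k-1, lt_sub1 hk⟩ : Fin (2*k)))
      (by simp [Fin.ext_iff, Fin.val_mk] <;> omega) (by simp [Fin.ext_iff, Fin.val_mk] <;> omega)
      (by simp [Fin.ext_iff, Fin.val_mk] <;> omega) ?_]
  · rw [if_neg (by simp [Fin.ext_iff, Fin.val_mk] <;> omega), if_pos (by simp [econd, Fin.ext_iff, Fin.val_mk] <;> omega),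
      if_neg (by simp [Fin.ext_iff, Fin.val_mk] <;> omega), if_pos (by simp [econd, Fin.ext_iff, Fin.val_mk] <;> omega),
      if_neg (by simp [Fin.ext_iff, Fin.val_mk] <;> omega), if_pos (by simp [econd, Fin.ext_iff, Fin.val_mk] <;> omega)]
  · intro j hja hjb hjc
    have hva : j.val ≠ 2*k-4 := fun hv => hja (Fin.ext hv)
    have hvb : j.val ≠ 2*k-2 := fun hv => hjb (Fin.ext hv)
    have hvc : j.val ≠ 2*k-1 := fun hv => hjc (Fin.ext hv)
    apply mul_eq_zero_of_left
    apply cell_zero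
    rcases eq_or_ne j.val (2*k-3) with h | h
    · left; simp only [Fin.val_mk]; omega
    · right; simp [econd, Fin.ext_iff, Fin.val_mk] <;> omega

lemma row_last2 (hk : 2 ≤ k) (σ : Equiv.Perm (Fin (2*k))) (x : Fin (2*k) → ℚ)
    {m : ℕ} (hm : m = 2*k-2 ∨ m = 2*k-1) :
    (Bmat (cartanD (2*k)) σ).mulVec x ⟨m, by omega⟩ =
      sg σ ⟨m, by omega⟩ ⟨2*k-3, lt_sub3 hk⟩ * x ⟨2*k-3, lt_sub3 hk⟩ := by
  rw [mulVec_eq]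
  rw [Fintype.sum_eq_single (⟨2*k-3, lt_sub3 hk⟩ : Fin (2*k)) ?_]
  · rw [if_neg (by simp [Fin.ext_iff, Fin.val_mk] <;> omega), if_pos (by simp [econd, Fin.ext_iff, Fin.val_mk] <;> omega)]
  · intro j hj
    have hv : j.val ≠ 2*k-3 := fun hv => hj (Fin.ext hv)
    apply mul_eq_zero_of_left
    apply cell_zero
    rcases eq_or_ne j.val m with h | h
    · left; simp only [Fin.val_mk]; omega
    · right; simp [econd, Fin.ext_iff, Fin.val_mk] <;> omega

end KerD

namespace KerD

variable {k : ℕ}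


def sgN (σ : Equiv.Perm (Fin (2*k))) (a b : ℕ) : ℚ :=
  if h : a < 2*k ∧ b < 2*k then sg σ ⟨a, h.1⟩ ⟨b, h.2⟩ else 1

def cc (σ : Equiv.Perm (Fin (2*k))) : ℕ → ℚ
  | 0 => 1
  | (j+1) => -(sgN σ (2*j+1) (2*j)) * sgN σ (2*j+1) (2*j+2) * cc σ j

lemma cc_unit (σ : Equiv.Perm (Fin (2*k))) (j : ℕ) : cc σ j = 1 ∨ cc σ j = -1 := by
  induction j with
  | zero => left; rfl
  | succ j ih =>
    have h1 : sgN σ (2*j+1) (2*j) = 1 ∨ sgN σ (2*j+1) (2*j) = -1 := by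
      unfold sgN; split
      · unfold sg; split
        · left; rfl
        · right; rfl
      · left; rfl
    have h2 : sgN σ (2*j+1) (2*j+2) = 1 ∨ sgN σ (2*j+1) (2*j+2) = -1 := by
      unfold sgN; split
      · unfold sg; split
        · left; rfl
        · right; rfl
      · left; rfl
    have hstep : cc σ (j+1) = -(sgN σ (2*j+1) (2*j)) * sgN σ (2*j+1) (2*j+2) * cc σ j := rfl
    rw [hstep]
    rcases h1 with h1 | h1 <;> rcases h2 with h2 | h2 <;> rcases ih with ih | ih <;>
      rw [h1, h2, ih] <;> norm_num

lemma cc_ne (σ : Equiv.Perm (Fin (2*k))) (j : ℕ) : cc σ j ≠ 0 := by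
  rcases cc_unit σ j with h | h <;> rw [h] <;> norm_num

lemma cc_succ' (σ : Equiv.Perm (Fin (2*k))) {a m b j : ℕ} (ea : a = 2*j) (em : m = 2*j+1)
    (eb : b = 2*j+2) (hb : b < 2*k) :
    cc σ (j+1) = -(sg σ ⟨m, by omega⟩ ⟨a, by omega⟩) * sg σ ⟨m, by omega⟩ ⟨b, by omega⟩
      * cc σ j := by
  subst ea em eb
  show -(sgN σ (2*j+1) (2*j)) * sgN σ (2*j+1) (2*j+2) * cc σ j = _
  unfold sgN
  rw [dif_pos ⟨by omega, by omega⟩, dif_pos ⟨by omega, by omega⟩]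

def wv (σ : Equiv.Perm (Fin (2*k))) : Fin (2*k) → ℚ :=
  fun i => if i.val % 2 = 0 then cc σ (i.val / 2) else 0

lemma wv_even (σ : Equiv.Perm (Fin (2*k))) {a j : ℕ} (e : a = 2*j) (ha : a < 2*k) :
    wv σ ⟨a, ha⟩ = cc σ j := by
  unfold wv
  rw [if_pos (by simp only [Fin.val_mk]; omega)]
  congr 1
  simp only [Fin.val_mk]; omega

lemma wv_odd (σ : Equiv.Perm (Fin (2*k))) {a : ℕ} (e : a % 2 = 1) (ha : a < 2*k) :
    wv σ ⟨a, ha⟩ = 0 := by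
  unfold wv
  rw [if_neg (by simp only [Fin.val_mk]; omega)]

lemma solve2 (s1 s2 p q : ℚ) (hsq : s2 * s2 = 1) (h : s1 * p + s2 * q = 0) :
    q = -(s1 * s2) * p := by
  linear_combination s2 * h - q * hsq

lemma tri (s1 s2 c : ℚ) (h : s2 * s2 = 1) : s1 * c + s2 * (-(s1) * s2 * c) = 0 := by
  linear_combination (-(s1) * c) * h

lemma tri3 (s1 s2 s3 c : ℚ) (h : s2 * s2 = 1) :
    s1 * c + s2 * (-(s1) * s2 * c) + s3 * 0 = 0 := by
  linear_combination (-(s1) * c) * h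

lemma B_mulVec_w (hk : 2 ≤ k) (σ : Equiv.Perm (Fin (2*k))) :
    (Bmat (cartanD (2*k)) σ).mulVec (wv σ) = 0 := by
  funext i
  obtain ⟨m, hm⟩ := i
  show (Bmat (cartanD (2*k)) σ).mulVec (wv σ) ⟨m, hm⟩ = 0
  rcases (by omega : m = 0 ∨ (1 ≤ m ∧ m ≤ 2*k-4) ∨ m = 2*k-3 ∨ m = 2*k-2 ∨ m = 2*k-1)
    with h | ⟨h1, h2⟩ | h | h | h
  · subst h
    rw [show (⟨0, hm⟩ : Fin (2*k)) = ⟨0, by omega⟩ from rfl, row0 hk σ]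
    rw [wv_odd σ (by omega), mul_zero]
  · rcases (by omega : m % 2 = 0 ∨ m % 2 = 1) with he | ho
    · obtain ⟨j, rfl⟩ : ∃ j, m = 2*j := ⟨m/2, by omega⟩
      rw [show (⟨2*j, hm⟩ : Fin (2*k)) = ⟨2*j, by omega⟩ from rfl,
        row_mid hk σ _ (a := 2*j-1) (b := 2*j+1) (by omega) (by omega) h1 h2]
      rw [wv_odd σ (by omega), wv_odd σ (by omega)]
      ring
    · obtain ⟨j, rfl⟩ : ∃ j, m = 2*j+1 := ⟨m/2, by omega⟩
      rw [show (⟨2*j+1, hm⟩ : Fin (2*k)) = ⟨2*j+1, by omega⟩ from rfl,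
        row_mid hk σ _ (a := 2*j) (b := 2*j+2) (by omega) (by omega) h1 h2]
      rw [wv_even σ (j := j) rfl, wv_even σ (j := j+1) (by ring),
        cc_succ' σ (j := j) rfl rfl rfl (by omega)]
      exact tri _ _ _ (sg_sq σ _ _)
  · subst h
    rw [row_branch hk σ]
    rw [wv_even σ (j := k-2) (by omega), wv_even σ (j := k-1) (by omega),
      wv_odd σ (by omega)]
    rw [show cc σ (k-1) = cc σ ((k-2)+1) from by congr 1; omega,
      cc_succ' σ (a := 2*k-4) (m := 2*k-3) (b := 2*k-2) (j := k-2)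
        (by omega) (by omega) (by omega) (by omega)]
    exact tri3 _ _ _ _ (sg_sq σ _ _)
  · subst h
    rw [row_last2 hk σ _ (Or.inl rfl), wv_odd σ (by omega), mul_zero]
  · subst h
    rw [row_last2 hk σ _ (Or.inr rfl), wv_odd σ (by omega), mul_zero]

end KerD

namespace KerD

variable {k : ℕ}

/-- abbreviation for the u vector with sign ε -/
def uvec (hk : 2 ≤ k) (ε : ℚ) : Fin (2*k) → ℚ := fun j =>
  (Pi.single (⟨2*k-2, lt_sub2 hk⟩ : Fin (2*k)) (1:ℚ) : Fin (2*k) → ℚ) j +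
    ε * (Pi.single (⟨2*k-1, lt_sub1 hk⟩ : Fin (2*k)) (1:ℚ) : Fin (2*k) → ℚ) j

lemma uvec_small (hk : 2 ≤ k) (ε : ℚ) {j : Fin (2*k)} (hj : j.val ≤ 2*k-3) :
    uvec hk ε j = 0 := by
  unfold uvec
  simp only [Pi.single_apply]
  rw [if_neg (fun h => by rw [h] at hj; simp only [Fin.val_mk] at hj; omega),
    if_neg (fun h => by rw [h] at hj; simp only [Fin.val_mk] at hj; omega)]
  ring

lemma uvec_a (hk : 2 ≤ k) (ε : ℚ) : uvec hk ε ⟨2*k-2, lt_sub2 hk⟩ = 1 := by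
  unfold uvec
  simp only [Pi.single_apply]
  rw [if_neg (show ¬(⟨2*k-2, lt_sub2 hk⟩ : Fin (2*k)) = ⟨2*k-1, lt_sub1 hk⟩ by
    simp [Fin.ext_iff]; omega)]
  simp

lemma uvec_b (hk : 2 ≤ k) (ε : ℚ) : uvec hk ε ⟨2*k-1, lt_sub1 hk⟩ = ε := by
  unfold uvec
  simp only [Pi.single_apply]
  rw [if_neg (show ¬(⟨2*k-1, lt_sub1 hk⟩ : Fin (2*k)) = ⟨2*k-2, lt_sub2 hk⟩ by
    simp [Fin.ext_iff]; omega)]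
  simp

lemma B_mulVec_u (hk : 2 ≤ k) (σ : Equiv.Perm (Fin (2*k))) (ε : ℚ)
    (heps : sg σ ⟨2*k-3, lt_sub3 hk⟩ ⟨2*k-2, lt_sub2 hk⟩ +
      ε * sg σ ⟨2*k-3, lt_sub3 hk⟩ ⟨2*k-1, lt_sub1 hk⟩ = 0) :
    (Bmat (cartanD (2*k)) σ).mulVec (uvec hk ε) = 0 := by
  funext i
  obtain ⟨m, hm⟩ := i
  show (Bmat (cartanD (2*k)) σ).mulVec (uvec hk ε) ⟨m, hm⟩ = 0
  rcases (by omega : m = 0 ∨ (1 ≤ m ∧ m ≤ 2*k-4) ∨ m = 2*k-3 ∨ m = 2*k-2 ∨ m = 2*k-1)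
    with h | ⟨h1, h2⟩ | h | h | h
  · subst h
    rw [show (⟨0, hm⟩ : Fin (2*k)) = ⟨0, by omega⟩ from rfl, row0 hk σ]
    rw [uvec_small hk ε (by simp only [Fin.val_mk]; omega), mul_zero]
  · rw [show (⟨m, hm⟩ : Fin (2*k)) = ⟨m, by omega⟩ from rfl,
      row_mid hk σ _ (a := m-1) (b := m+1) (by omega) (by omega) h1 h2]
    rw [uvec_small hk ε (by simp only [Fin.val_mk]; omega),
      uvec_small hk ε (by simp only [Fin.val_mk]; omega)]
    ring
  · subst h
    rw [row_branch hk σ]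
    rw [uvec_small hk ε (by simp only [Fin.val_mk]; omega), uvec_a hk ε, uvec_b hk ε]
    linear_combination heps
  · subst h
    rw [row_last2 hk σ _ (Or.inl rfl),
      uvec_small hk ε (by simp only [Fin.val_mk]; omega), mul_zero]
  · subst h
    rw [row_last2 hk σ _ (Or.inr rfl),
      uvec_small hk ε (by simp only [Fin.val_mk]; omega), mul_zero]

end KerD

namespace KerD

variable {k : ℕ}

lemma of_sg_mul {s t : ℚ} (hs : s ≠ 0) (h : s * t = 0) : t = 0 :=
  (mul_eq_zero.mp h).resolve_left hs

lemma eps_prop (hk : 2 ≤ k) (σ : Equiv.Perm (Fin (2*k))) :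
    sg σ ⟨2*k-3, lt_sub3 hk⟩ ⟨2*k-2, lt_sub2 hk⟩ +
      (if (min (σ ⟨2*k-2, lt_sub2 hk⟩) (σ ⟨2*k-1, lt_sub1 hk⟩) < σ ⟨2*k-3, lt_sub3 hk⟩ ∧
          σ ⟨2*k-3, lt_sub3 hk⟩ < max (σ ⟨2*k-2, lt_sub2 hk⟩) (σ ⟨2*k-1, lt_sub1 hk⟩)) then (1:ℚ)
        else -1) *
      sg σ ⟨2*k-3, lt_sub3 hk⟩ ⟨2*k-1, lt_sub1 hk⟩ = 0 := by
  have hpa : σ ⟨2*k-3, lt_sub3 hk⟩ ≠ σ ⟨2*k-2, lt_sub2 hk⟩ :=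
    σ.injective.ne (by simp [Fin.ext_iff]; omega)
  have hpb : σ ⟨2*k-3, lt_sub3 hk⟩ ≠ σ ⟨2*k-1, lt_sub1 hk⟩ :=
    σ.injective.ne (by simp [Fin.ext_iff]; omega)
  set p := σ ⟨2*k-3, lt_sub3 hk⟩ with hp
  set a := σ ⟨2*k-2, lt_sub2 hk⟩ with ha
  set b := σ ⟨2*k-1, lt_sub1 hk⟩ with hb
  unfold sg
  rw [← hp, ← ha, ← hb]
  rcases lt_or_gt_of_ne hpa with h1 | h1 <;> rcases lt_or_gt_of_ne hpb with h2 | h2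
  · rw [if_pos h1, if_pos h2,
      if_neg (fun hc => absurd hc.1 (not_lt.mpr (le_min h1.le h2.le)))]
    ring
  · rw [if_pos h1, if_neg (not_lt.mpr h2.le),
      if_pos ⟨lt_of_le_of_lt (min_le_right a b) h2, lt_of_lt_of_le h1 (le_max_left a b)⟩]
    ring
  · rw [if_neg (not_lt.mpr h1.le), if_pos h2,
      if_pos ⟨lt_of_le_of_lt (min_le_left a b) h1, lt_of_lt_of_le h2 (le_max_right a b)⟩]
    ring
  · rw [if_neg (not_lt.mpr h1.le), if_neg (not_lt.mpr h2.le),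
      if_neg (fun hc => absurd hc.2 (not_lt.mpr (max_le h1.le h2.le)))]
    ring

lemma ker_sub (hk : 2 ≤ k) (σ : Equiv.Perm (Fin (2*k))) (ε : ℚ)
    (heps : sg σ ⟨2*k-3, lt_sub3 hk⟩ ⟨2*k-2, lt_sub2 hk⟩ +
      ε * sg σ ⟨2*k-3, lt_sub3 hk⟩ ⟨2*k-1, lt_sub1 hk⟩ = 0)
    (heps2 : ε * ε = 1)
    (x : Fin (2*k) → ℚ) (hx : (Bmat (cartanD (2*k)) σ).mulVec x = 0) :
    x = x ⟨0, by omega⟩ • wv σ + (ε * x ⟨2*k-1, lt_sub1 hk⟩) • uvec hk ε := by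
  have hrow : ∀ i, (Bmat (cartanD (2*k)) σ).mulVec x i = 0 := fun i => congrFun hx i
  have h1 : x ⟨1, by omega⟩ = 0 :=
    of_sg_mul (sg_ne σ _ _) ((row0 hk σ x).symm.trans (hrow _))
  have hodd : ∀ j, ∀ _hj : 2*j+1 ≤ 2*k-3, x ⟨2*j+1, by omega⟩ = 0 := by
    intro j
    induction j with
    | zero => intro _; exact h1
    | succ j ih =>
      intro hj
      have hx1 : x ⟨2*j+1, by omega⟩ = 0 := ih (by omega)
      have h := (row_mid hk σ x (a := 2*j+1) (m := 2*j+2) (b := 2*j+3)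
        (by omega) (by omega) (by omega) (by omega)).symm.trans (hrow _)
      rw [hx1, mul_zero, zero_add] at h
      have h3 := of_sg_mul (sg_ne σ _ _) h
      rw [show (⟨2*(j+1)+1, by omega⟩ : Fin (2*k)) = ⟨2*j+3, by omega⟩ from
        fin_mk_eq (by omega)]
      exact h3
  have heven : ∀ j, ∀ _hj : 2*j ≤ 2*k-4, x ⟨2*j, by omega⟩ = x ⟨0, by omega⟩ * cc σ j := by
    intro j
    induction j with
    | zero =>
      intro _
      rw [show cc σ 0 = 1 from rfl, mul_one]
    | succ j ih =>
      intro hj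
      have hprev := ih (by omega)
      have h := (row_mid hk σ x (a := 2*j) (m := 2*j+1) (b := 2*j+2)
        (by omega) (by omega) (by omega) (by omega)).symm.trans (hrow _)
      have hs := solve2 _ _ _ _ (sg_sq σ ⟨2*j+1, by omega⟩ ⟨2*j+2, by omega⟩) h
      rw [hprev] at hs
      rw [show (⟨2*(j+1), by omega⟩ : Fin (2*k)) = ⟨2*j+2, by omega⟩ from
        fin_mk_eq (by omega), hs, cc_succ' σ (j := j) rfl rfl rfl (by omega)]
      ring
  have h4 : x ⟨2*k-4, by omega⟩ = x ⟨0, by omega⟩ * cc σ (k-2) := by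
    rw [show (⟨2*k-4, by omega⟩ : Fin (2*k)) = ⟨2*(k-2), by omega⟩ from
      fin_mk_eq (by omega)]
    exact heven (k-2) (by omega)
  have hc : cc σ (k-1) = -(sg σ ⟨2*k-3, lt_sub3 hk⟩ ⟨2*k-4, by omega⟩) *
      sg σ ⟨2*k-3, lt_sub3 hk⟩ ⟨2*k-2, lt_sub2 hk⟩ * cc σ (k-2) := by
    rw [show k-1 = (k-2)+1 by omega]
    exact cc_succ' σ (by omega) (by omega) (by omega) (by omega)
  have hb := (row_branch hk σ x).symm.trans (hrow _)
  rw [h4] at hb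
  have hs2 := sg_sq σ (⟨2*k-3, lt_sub3 hk⟩ : Fin (2*k)) ⟨2*k-2, lt_sub2 hk⟩
  have hs3 := sg_sq σ (⟨2*k-3, lt_sub3 hk⟩ : Fin (2*k)) ⟨2*k-1, lt_sub1 hk⟩
  have hA2 : x ⟨2*k-2, lt_sub2 hk⟩ = x ⟨0, by omega⟩ * cc σ (k-1) +
      ε * x ⟨2*k-1, lt_sub1 hk⟩ := by
    rw [hc]
    linear_combination (sg σ ⟨2*k-3, lt_sub3 hk⟩ ⟨2*k-2, lt_sub2 hk⟩) * hb -
      (x ⟨2*k-2, lt_sub2 hk⟩) * hs2 -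
      (x ⟨2*k-1, lt_sub1 hk⟩ * sg σ ⟨2*k-3, lt_sub3 hk⟩ ⟨2*k-1, lt_sub1 hk⟩) * heps +
      (ε * x ⟨2*k-1, lt_sub1 hk⟩) * hs3
  funext i
  obtain ⟨m, hm⟩ := i
  simp only [Pi.add_apply, Pi.smul_apply, smul_eq_mul]
  rcases (by omega : (m % 2 = 1 ∧ m ≤ 2*k-3) ∨ (m % 2 = 0 ∧ m ≤ 2*k-4) ∨
      m = 2*k-2 ∨ m = 2*k-1) with ⟨hpar, hle⟩ | ⟨hpar, hle⟩ | h | h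
  · obtain ⟨j, rfl⟩ : ∃ j, m = 2*j+1 := ⟨m/2, by omega⟩
    rw [show x (⟨2*j+1, hm⟩ : Fin (2*k)) = x ⟨2*j+1, by omega⟩ from rfl, hodd j (by omega)]
    rw [wv_odd σ (by omega) hm, uvec_small hk ε (by simp only [Fin.val_mk]; omega)]
    ring
  · obtain ⟨j, rfl⟩ : ∃ j, m = 2*j := ⟨m/2, by omega⟩
    rw [show x (⟨2*j, hm⟩ : Fin (2*k)) = x ⟨2*j, by omega⟩ from rfl, heven j (by omega)]
    rw [wv_even σ (j := j) rfl hm, uvec_small hk ε (by simp only [Fin.val_mk]; omega)]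
    ring
  · subst h
    rw [show x (⟨2*k-2, hm⟩ : Fin (2*k)) = x ⟨2*k-2, lt_sub2 hk⟩ from rfl, hA2]
    rw [wv_even σ (j := k-1) (by omega) hm,
      show uvec hk ε ⟨2*k-2, hm⟩ = 1 from uvec_a hk ε]
    ring
  · subst h
    rw [show uvec hk ε ⟨2*k-1, hm⟩ = ε from uvec_b hk ε,
      wv_odd σ (by omega) hm]
    have : x (⟨2*k-1, hm⟩ : Fin (2*k)) = x ⟨2*k-1, lt_sub1 hk⟩ := rfl
    rw [this]
    linear_combination (-(x ⟨2*k-1, lt_sub1 hk⟩)) * heps2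

end KerD


namespace KerD

variable {k : ℕ}

lemma induce_bot (hk : 2 ≤ k) :
    (dynkinGraphD (2*k)).induce {i : Fin (2*k) | i.val % 2 = 0} = ⊥ := by
  ext a b
  simp only [SimpleGraph.comap_adj, SimpleGraph.bot_adj, iff_false]
  intro hadj
  have ha : (a : Fin (2*k)).val % 2 = 0 := a.2
  have hb : (b : Fin (2*k)).val % 2 = 0 := b.2
  simp only [dynkinGraphD, SimpleGraph.fromRel_adj, Function.Embedding.coe_subtype] at hadj
  rcases hadj.2 with (⟨h, _⟩ | ⟨h1, h2⟩) | (⟨h, _⟩ | ⟨h1, h2⟩) <;> omega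

lemma card_components (hk : 2 ≤ k) :
    Nat.card ((dynkinGraphD (2*k)).induce
      {i : Fin (2*k) | i.val % 2 = 0}).ConnectedComponent = k := by
  rw [induce_bot hk]
  have hbij : Function.Bijective
      ((⊥ : SimpleGraph {i : Fin (2*k) | i.val % 2 = 0}).connectedComponentMk) := by
    constructor
    · intro a b hab
      exact (SimpleGraph.reachable_bot).mp (SimpleGraph.ConnectedComponent.exact hab)
    · intro c
      exact c.exists_rep
  rw [← Nat.card_eq_of_bijective _ hbij]
  have e : {i : Fin (2*k) | i.val % 2 = 0} ≃ Fin k := by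
    refine ⟨fun s => ⟨s.1.val / 2, ?_⟩, fun j => ⟨⟨2 * j.val, ?_⟩, ?_⟩, ?_, ?_⟩
    · have h2 : s.1.val % 2 = 0 := s.2
      have := s.1.isLt
      omega
    · have := j.isLt
      omega
    · simp only [Set.mem_setOf_eq, Fin.val_mk]
      omega
    · intro s
      apply Subtype.ext
      apply Fin.ext
      have h2 : s.1.val % 2 = 0 := s.2
      simp only [Fin.val_mk]
      omega
    · intro j
      apply Fin.ext
      simp only [Fin.val_mk]
      omega
  rw [Nat.card_congr e]
  simp

lemma wv_support (hk : 2 ≤ k) (σ : Equiv.Perm (Fin (2*k))) :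
    {i : Fin (2*k) | wv σ i ≠ 0} = {i : Fin (2*k) | i.val % 2 = 0} := by
  ext ⟨m, hm⟩
  simp only [Set.mem_setOf_eq]
  constructor
  · intro h
    by_contra hpar
    exact h (wv_odd σ (by omega) hm)
  · intro hpar
    rw [wv_even σ (j := m/2) (by omega) hm]
    exact cc_ne σ _

end KerD

namespace KerD

variable {k : ℕ}

lemma main_aux (hk : 2 ≤ k) (σ : Equiv.Perm (Fin (2*k))) (ε : ℚ)
    (heps : sg σ ⟨2*k-3, lt_sub3 hk⟩ ⟨2*k-2, lt_sub2 hk⟩ +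
      ε * sg σ ⟨2*k-3, lt_sub3 hk⟩ ⟨2*k-1, lt_sub1 hk⟩ = 0)
    (heps2 : ε * ε = 1) :
    LinearMap.ker (Matrix.toLin' (Bmat (cartanD (2*k)) σ)) =
      Submodule.span ℚ {uvec hk ε, wv σ} ∧
    Module.finrank ℚ
      (LinearMap.ker (Matrix.toLin' (Bmat (cartanD (2*k)) σ))) = 2 := by
  have hεne : ε ≠ 0 := fun h => by rw [h] at heps2; norm_num at heps2
  have hker : ∀ y : Fin (2*k) → ℚ,
      y ∈ LinearMap.ker (Matrix.toLin' (Bmat (cartanD (2*k)) σ)) ↔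
        (Bmat (cartanD (2*k)) σ).mulVec y = 0 := fun y => by
    rw [LinearMap.mem_ker, Matrix.toLin'_apply]
  have hspan : LinearMap.ker (Matrix.toLin' (Bmat (cartanD (2*k)) σ)) =
      Submodule.span ℚ {uvec hk ε, wv σ} := by
    apply le_antisymm
    · intro x hx
      have hx' : (Bmat (cartanD (2*k)) σ).mulVec x = 0 := (hker x).mp hx
      rw [Submodule.mem_span_pair]
      refine ⟨ε * x ⟨2*k-1, lt_sub1 hk⟩, x ⟨0, by omega⟩, ?_⟩
      have hrep := ker_sub hk σ ε heps heps2 x hx'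
      conv_rhs => rw [hrep]
      exact add_comm _ _
    · rw [Submodule.span_le]
      rintro y hy
      simp only [Set.mem_insert_iff, Set.mem_singleton_iff] at hy
      rcases hy with rfl | rfl
      · rw [SetLike.mem_coe, hker]; exact B_mulVec_u hk σ ε heps
      · rw [SetLike.mem_coe, hker]; exact B_mulVec_w hk σ
  refine ⟨hspan, ?_⟩
  have hli : LinearIndependent ℚ ![uvec hk ε, wv σ] := by
    rw [LinearIndependent.pair_iff]
    intro s t hst
    have h1 := congrFun hst (⟨2*k-1, lt_sub1 hk⟩ : Fin (2*k))
    have h2 := congrFun hst (⟨0, by omega⟩ : Fin (2*k))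
    simp only [Pi.add_apply, Pi.smul_apply, smul_eq_mul, Pi.zero_apply] at h1 h2
    rw [uvec_b hk ε, wv_odd σ (by omega)] at h1
    rw [uvec_small hk ε (by simp only [Fin.val_mk]; omega),
      wv_even σ (j := 0) (by omega)] at h2
    have hs : s = 0 := by
      have : s * ε = 0 := by linarith [h1]
      exact (mul_eq_zero.mp this).resolve_right hεne
    refine ⟨hs, ?_⟩
    rw [hs, show cc σ 0 = 1 from rfl] at h2
    linarith [h2]
  have hset : ({uvec hk ε, wv σ} : Set (Fin (2*k) → ℚ)) =
      Set.range ![uvec hk ε, wv σ] := by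
    rw [Matrix.range_cons, Matrix.range_cons, Matrix.range_empty]
    simp only [Set.union_empty, Set.union_singleton, Set.singleton_union]
    first
      | rfl
      | exact Set.pair_comm _ _
  rw [hspan, hset, finrank_span_eq_card hli]
  simp

end KerD

/-- In type `Dₙ` with `n = 2k` even, `n ≥ 4`, the kernel of any acyclic exchange matrix
`B_σ` is two-dimensional, spanned by the vector `u` (equal to `e_{n-2} + e_{n-1}` if the
branching node lies strictly between the two fork nodes in the order given by `σ`, and to
`e_{n-2} - e_{n-1}` otherwise; all `0`-indexed) together with a vector `w` supported
exactly on the nodes of even `0`-indexed index (the odd nodes `1, 3, …, n-1` in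
`1`-indexed notation); in particular the support of `w` has exactly `k` connected
components in the Dynkin diagram of type `Dₙ`. -/
theorem kernel_gens_typeD_even (k : ℕ) (hk : 2 ≤ k) (σ : Equiv.Perm (Fin (2 * k))) :
    Module.finrank ℚ
        (LinearMap.ker (Matrix.toLin' (Bmat (cartanD (2 * k)) σ))) = 2 ∧
    ∃ w : Fin (2 * k) → ℚ,
      LinearMap.ker (Matrix.toLin' (Bmat (cartanD (2 * k)) σ)) =
        Submodule.span ℚ
          {if min (σ ⟨2 * k - 2, by omega⟩) (σ ⟨2 * k - 1, by omega⟩) <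
                σ ⟨2 * k - 3, by omega⟩ ∧
              σ ⟨2 * k - 3, by omega⟩ <
                max (σ ⟨2 * k - 2, by omega⟩) (σ ⟨2 * k - 1, by omega⟩) then
            Pi.single (⟨2 * k - 2, by omega⟩ : Fin (2 * k)) (1 : ℚ) +
              Pi.single (⟨2 * k - 1, by omega⟩ : Fin (2 * k)) (1 : ℚ)
          else
            Pi.single (⟨2 * k - 2, by omega⟩ : Fin (2 * k)) (1 : ℚ) -
              Pi.single (⟨2 * k - 1, by omega⟩ : Fin (2 * k)) (1 : ℚ), w} ∧
      {i : Fin (2 * k) | w i ≠ 0} = {i : Fin (2 * k) | i.val % 2 = 0} ∧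
      Nat.card
        ((dynkinGraphD (2 * k)).induce
          {i : Fin (2 * k) | w i ≠ 0}).ConnectedComponent = k := by
  classical
  have heps := KerD.eps_prop hk σ
  set ε : ℚ := if (min (σ ⟨2*k-2, by omega⟩) (σ ⟨2*k-1, by omega⟩) < σ ⟨2*k-3, by omega⟩ ∧
      σ ⟨2*k-3, by omega⟩ < max (σ ⟨2*k-2, by omega⟩) (σ ⟨2*k-1, by omega⟩)) then (1:ℚ)
    else -1 with hεdef
  have heps2 : ε * ε = 1 := by rw [hεdef]; split_ifs <;> norm_num
  obtain ⟨hspan, hrank⟩ := KerD.main_aux hk σ ε heps heps2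
  have hueq : (if min (σ ⟨2 * k - 2, by omega⟩) (σ ⟨2 * k - 1, by omega⟩) <
                σ ⟨2 * k - 3, by omega⟩ ∧
              σ ⟨2 * k - 3, by omega⟩ <
                max (σ ⟨2 * k - 2, by omega⟩) (σ ⟨2 * k - 1, by omega⟩) then
            Pi.single (⟨2 * k - 2, by omega⟩ : Fin (2 * k)) (1 : ℚ) +
              Pi.single (⟨2 * k - 1, by omega⟩ : Fin (2 * k)) (1 : ℚ)
          else
            Pi.single (⟨2 * k - 2, by omega⟩ : Fin (2 * k)) (1 : ℚ) -
              Pi.single (⟨2 * k - 1, by omega⟩ : Fin (2 * k)) (1 : ℚ)) =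
      KerD.uvec hk ε := by
    rw [hεdef]
    unfold KerD.uvec
    split_ifs with h
    · funext j
      simp
    · funext j
      simp [sub_eq_add_neg]
  refine ⟨hrank, KerD.wv σ, ?_, KerD.wv_support hk σ, ?_⟩
  · rw [hspan, hueq]
  · rw [KerD.wv_support hk σ]
    exact KerD.card_components hk
end

section
/- Let n ≥ 2 and let α and β be any two positive roots of type B_n, written in simple-root coordinates. Then the support {i : α_i − β_i ≠ 0} of their difference α − β is a disjoint union of at most two sets of consecutive integers; equivalently, it has at most two connected components in the Dynkin diagram of type B_n (a path on {1,…,n}). -/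
/-- The positive roots of type `Bₙ` in simple-root coordinates (nodes `0`-indexed, the
short simple root being the last node): either `1` on an interval `[a, b]` and `0`
elsewhere, or `1` on `[a, b-1]`, `2` on `[b, n-1]` and `0` elsewhere (with `a < b`). -/
def IsPosRootB (n : ℕ) (v : Fin n → ℤ) : Prop :=
  (∃ a b : ℕ, a ≤ b ∧ b < n ∧
    v = fun i => if a ≤ i.val ∧ i.val ≤ b then 1 else 0) ∨
  (∃ a b : ℕ, a < b ∧ b < n ∧
    v = fun i => if b ≤ i.val then 2 else if a ≤ i.val then 1 else 0)

/-- A (possibly empty) set of consecutive indices in `Fin n`. -/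
def IsIntervalSet (n : ℕ) (S : Set (Fin n)) : Prop :=
  ∃ a b : ℕ, S = {i : Fin n | a ≤ i.val ∧ i.val ≤ b}

lemma isIv (n l r : ℕ) : IsIntervalSet n {i : Fin n | l ≤ i.val ∧ i.val < r} := by
  rcases r with _ | r
  · exact ⟨1, 0, by ext i; simp only [Set.mem_setOf_eq]; omega⟩
  · exact ⟨l, r, by ext i; simp only [Set.mem_setOf_eq]; omega⟩

lemma pack (n : ℕ) (f : Fin n → ℤ) (l1 r1 l2 r2 : ℕ)
    (hd : ∀ i : ℕ, ¬(l1 ≤ i ∧ i < r1 ∧ l2 ≤ i ∧ i < r2))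
    (he : ∀ i : Fin n, f i ≠ 0 ↔ (l1 ≤ i.val ∧ i.val < r1) ∨ (l2 ≤ i.val ∧ i.val < r2)) :
    ∃ S T : Set (Fin n), IsIntervalSet n S ∧ IsIntervalSet n T ∧ Disjoint S T ∧
      {i : Fin n | f i ≠ 0} = S ∪ T := by
  refine ⟨_, _, isIv n l1 r1, isIv n l2 r2, ?_, ?_⟩
  · rw [Set.disjoint_left]
    intro i hi1 hi2
    exact hd i.val ⟨hi1.1, hi1.2, hi2.1, hi2.2⟩
  · ext i
    simpa using he i

lemma sort2 (t1 t2 : ℕ) (e1 e2 : ℤ) :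
    ∃ s1 s2 : ℕ, ∃ d1 d2 : ℤ, s1 ≤ s2 ∧ ∀ i : ℕ,
      (if t1 ≤ i then e1 else 0) + (if t2 ≤ i then e2 else 0)
        = (if s1 ≤ i then d1 else 0) + (if s2 ≤ i then d2 else 0) := by
  rcases le_total t1 t2 with h | h
  · exact ⟨t1, t2, e1, e2, h, fun i => rfl⟩
  · exact ⟨t2, t1, e2, e1, h, fun i => add_comm _ _⟩

lemma sort3 (t1 t2 t3 : ℕ) (e1 e2 e3 : ℤ) :
    ∃ s1 s2 s3 : ℕ, ∃ d1 d2 d3 : ℤ, s1 ≤ s2 ∧ s2 ≤ s3 ∧ ∀ i : ℕ,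
      (if t1 ≤ i then e1 else 0) + (if t2 ≤ i then e2 else 0) + (if t3 ≤ i then e3 else 0)
        = (if s1 ≤ i then d1 else 0) + (if s2 ≤ i then d2 else 0) + (if s3 ≤ i then d3 else 0) := by
  obtain ⟨s2, s3, d2, d3, h23, heq⟩ := sort2 t2 t3 e2 e3
  rcases le_total t1 s2 with h1 | h1
  · exact ⟨t1, s2, s3, e1, d2, d3, h1, h23, fun i => by have := heq i; linarith⟩
  · rcases le_total t1 s3 with h2 | h2
    · exact ⟨s2, t1, s3, d2, e1, d3, h1, h2, fun i => by have := heq i; linarith⟩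
    · exact ⟨s2, s3, t1, d2, d3, e1, h23, h2, fun i => by have := heq i; linarith⟩

lemma sort4 (t1 t2 t3 t4 : ℕ) (e1 e2 e3 e4 : ℤ) :
    ∃ s1 s2 s3 s4 : ℕ, ∃ d1 d2 d3 d4 : ℤ, s1 ≤ s2 ∧ s2 ≤ s3 ∧ s3 ≤ s4 ∧ ∀ i : ℕ,
      (if t1 ≤ i then e1 else 0) + (if t2 ≤ i then e2 else 0)
        + (if t3 ≤ i then e3 else 0) + (if t4 ≤ i then e4 else 0)
        = (if s1 ≤ i then d1 else 0) + (if s2 ≤ i then d2 else 0)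
          + (if s3 ≤ i then d3 else 0) + (if s4 ≤ i then d4 else 0) := by
  obtain ⟨s2, s3, s4, d2, d3, d4, h23, h34, heq⟩ := sort3 t2 t3 t4 e2 e3 e4
  rcases le_total t1 s2 with h1 | h1
  · exact ⟨t1, s2, s3, s4, e1, d2, d3, d4, h1, h23, h34, fun i => by have := heq i; linarith⟩
  · rcases le_total t1 s3 with h2 | h2
    · exact ⟨s2, t1, s3, s4, d2, e1, d3, d4, h1, h2, h34, fun i => by have := heq i; linarith⟩
    · rcases le_total t1 s4 with h3 | h3
      · exact ⟨s2, s3, t1, s4, d2, d3, e1, d4, h23, h2, h3, fun i => by have := heq i; linarith⟩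
      · exact ⟨s2, s3, s4, t1, d2, d3, d4, e1, h23, h34, h3, fun i => by have := heq i; linarith⟩

lemma key_s13 (n : ℕ) (t1 t2 t3 t4 : ℕ) (e1 e2 e3 e4 : ℤ)
    (h12 : t1 ≤ t2) (h23 : t2 ≤ t3) (h34 : t3 ≤ t4) (f : Fin n → ℤ)
    (hf : ∀ i : Fin n, f i = (if t1 ≤ i.val then e1 else 0) + (if t2 ≤ i.val then e2 else 0)
      + (if t3 ≤ i.val then e3 else 0) + (if t4 ≤ i.val then e4 else 0)) :
    ∃ S T : Set (Fin n), IsIntervalSet n S ∧ IsIntervalSet n T ∧ Disjoint S T ∧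
      {i : Fin n | f i ≠ 0} = S ∪ T := by
  have tac : ∀ i : Fin n, i.val < n := fun i => i.isLt
  by_cases h2 : e1 = 0 <;> by_cases h3 : e1 + e2 = 0 <;>
    by_cases h4 : e1 + e2 + e3 = 0 <;> by_cases h5 : e1 + e2 + e3 + e4 = 0
  · exact pack n f 1 0 1 0 (by omega)
      (fun i => by rw [hf i]; have := i.isLt; split_ifs <;> omega)
  · exact pack n f t4 n 1 0 (by omega)
      (fun i => by rw [hf i]; have := i.isLt; split_ifs <;> omega)
  · exact pack n f t3 t4 1 0 (by omega)
      (fun i => by rw [hf i]; have := i.isLt; split_ifs <;> omega)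
  · exact pack n f t3 n 1 0 (by omega)
      (fun i => by rw [hf i]; have := i.isLt; split_ifs <;> omega)
  · exact pack n f t2 t3 1 0 (by omega)
      (fun i => by rw [hf i]; have := i.isLt; split_ifs <;> omega)
  · exact pack n f t2 t3 t4 n (by omega)
      (fun i => by rw [hf i]; have := i.isLt; split_ifs <;> omega)
  · exact pack n f t2 t4 1 0 (by omega)
      (fun i => by rw [hf i]; have := i.isLt; split_ifs <;> omega)
  · exact pack n f t2 n 1 0 (by omega)
      (fun i => by rw [hf i]; have := i.isLt; split_ifs <;> omega)
  · exact pack n f t1 t2 1 0 (by omega)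
      (fun i => by rw [hf i]; have := i.isLt; split_ifs <;> omega)
  · exact pack n f t1 t2 t4 n (by omega)
      (fun i => by rw [hf i]; have := i.isLt; split_ifs <;> omega)
  · exact pack n f t1 t2 t3 t4 (by omega)
      (fun i => by rw [hf i]; have := i.isLt; split_ifs <;> omega)
  · exact pack n f t1 t2 t3 n (by omega)
      (fun i => by rw [hf i]; have := i.isLt; split_ifs <;> omega)
  · exact pack n f t1 t3 1 0 (by omega)
      (fun i => by rw [hf i]; have := i.isLt; split_ifs <;> omega)
  · exact pack n f t1 t3 t4 n (by omega)
      (fun i => by rw [hf i]; have := i.isLt; split_ifs <;> omega)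
  · exact pack n f t1 t4 1 0 (by omega)
      (fun i => by rw [hf i]; have := i.isLt; split_ifs <;> omega)
  · exact pack n f t1 n 1 0 (by omega)
      (fun i => by rw [hf i]; have := i.isLt; split_ifs <;> omega)

lemma repr_root (n : ℕ) (v : Fin n → ℤ) (h : IsPosRootB n v) :
    ∃ t u : ℕ, ∃ e d : ℤ, ∀ i : Fin n,
      v i = (if t ≤ i.val then e else 0) + (if u ≤ i.val then d else 0) := by
  rcases h with ⟨a, b, hab, hb, hv⟩ | ⟨a, b, hab, hb, hv⟩
  · exact ⟨a, b + 1, 1, -1, fun i => by rw [hv]; dsimp only; split_ifs <;> omega⟩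
  · exact ⟨a, b, 1, 1, fun i => by rw [hv]; dsimp only; split_ifs <;> omega⟩

/-- The support of the difference of two positive roots of type `Bₙ` is a disjoint union
of at most two sets of consecutive integers (equivalently, it has at most two connected
components in the Dynkin diagram of type `Bₙ`, a path). -/
theorem support_diff_posRoots_typeB (n : ℕ) (hn : 2 ≤ n) (α β : Fin n → ℤ)
    (hα : IsPosRootB n α) (hβ : IsPosRootB n β) :
    ∃ S T : Set (Fin n), IsIntervalSet n S ∧ IsIntervalSet n T ∧ Disjoint S T ∧
      {i : Fin n | α i - β i ≠ 0} = S ∪ T := by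
  obtain ⟨t1, t2, e1, e2, hα'⟩ := repr_root n α hα
  obtain ⟨t3, t4, e3, e4, hβ'⟩ := repr_root n β hβ
  obtain ⟨s1, s2, s3, s4, d1, d2, d3, d4, h12, h23, h34, heq⟩ :=
    sort4 t1 t2 t3 t4 e1 e2 (-e3) (-e4)
  exact key_s13 n s1 s2 s3 s4 d1 d2 d3 d4 h12 h23 h34 (fun i => α i - β i)
    (fun i => by
      have h3' : (if t3 ≤ i.val then -e3 else 0) = -(if t3 ≤ i.val then e3 else 0) := by
        split_ifs <;> ring
      have h4' : (if t4 ≤ i.val then -e4 else 0) = -(if t4 ≤ i.val then e4 else 0) := by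
        split_ifs <;> ring
      have hh := heq i.val
      rw [h3', h4'] at hh
      show α i - β i = _
      rw [hα' i, hβ' i]
      linarith)
end

section
/- Let n ≥ 2 and let α and β be any two positive roots of type C_n, written in simple-root coordinates. Then the support {i : α_i − β_i ≠ 0} of their difference α − β is a disjoint union of at most two sets of consecutive integers; equivalently, it has at most two connected components in the Dynkin diagram of type C_n (a path on {1,…,n}). -/
/-- The positive roots of type `Cₙ` in simple-root coordinates (nodes `0`-indexed, the
long simple root being the last node): either `1` on an interval `[a, b]` and `0`
elsewhere, or `1` on `[a, b-1]`, `2` on `[b, n-2]`, `1` at `n-1` and `0` elsewhere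
(with `a ≤ b ≤ n-2`). -/
def IsPosRootC (n : ℕ) (v : Fin n → ℤ) : Prop :=
  (∃ a b : ℕ, a ≤ b ∧ b < n ∧
    v = fun i => if a ≤ i.val ∧ i.val ≤ b then 1 else 0) ∨
  (∃ a b : ℕ, a ≤ b ∧ b ≤ n - 2 ∧
    v = fun i => if i.val = n - 1 then 1
      else if b ≤ i.val then 2 else if a ≤ i.val then 1 else 0)

/-- A finite set of naturals containing no pattern `∈,∉,∈,∉,∈` is a union of two
disjoint integer intervals. -/
lemma nat_core (N : Finset ℕ)
    (hpat : ∀ m1 m2 m3 m4 m5 : ℕ, m1 < m2 → m2 < m3 → m3 < m4 → m4 < m5 →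
      m1 ∈ N → m2 ∉ N → m3 ∈ N → m4 ∉ N → m5 ∈ N → False) :
    ∃ a b c d : ℕ, (∀ m, ¬((a ≤ m ∧ m ≤ b) ∧ (c ≤ m ∧ m ≤ d))) ∧
      (∀ m, m ∈ N ↔ ((a ≤ m ∧ m ≤ b) ∨ (c ≤ m ∧ m ≤ d))) := by
  classical
  rcases N.eq_empty_or_nonempty with hN | hN
  · exact ⟨1, 0, 1, 0, fun m => by omega, fun m => by simp [hN]; omega⟩
  · set a := N.min' hN with ha
    have haN : a ∈ N := N.min'_mem hN
    have hamin : ∀ m ∈ N, a ≤ m := fun m hm => N.min'_le m hm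
    set Q := N.filter (fun j => ∀ k, a ≤ k → k ≤ j → k ∈ N) with hQdef
    have haQ : a ∈ Q := by
      simp only [hQdef, Finset.mem_filter]
      exact ⟨haN, fun k hk hk' => by rwa [le_antisymm hk' hk]⟩
    set q := Q.max' ⟨a, haQ⟩ with hq
    have hqQ : q ∈ Q := Q.max'_mem _
    have hqN : q ∈ N := (Finset.mem_filter.mp hqQ).1
    have hIcc : ∀ k, a ≤ k → k ≤ q → k ∈ N := by
      have := (Finset.mem_filter.mp hqQ).2
      exact this
    have hq1 : q + 1 ∉ N := by
      intro hmem
      have hQ1 : q + 1 ∈ Q := by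
        simp only [hQdef, Finset.mem_filter]
        refine ⟨hmem, fun k hk hk' => ?_⟩
        rcases Nat.lt_or_ge k (q + 1) with h | h
        · exact hIcc k hk (by omega)
        · have hk2 : k = q + 1 := by omega
          rwa [hk2]
      have := Q.le_max' _ hQ1
      omega
    set N' := N.filter (fun m => q < m) with hN'def
    rcases N'.eq_empty_or_nonempty with hN'e | hN'ne
    · refine ⟨a, q, 1, 0, fun m => by omega, fun m => ?_⟩
      constructor
      · intro hm
        have h1 := hamin m hm
        have h2 : ¬ q < m := by
          intro h
          have hmN' : m ∈ N' := by
            simp only [hN'def, Finset.mem_filter]; exact ⟨hm, h⟩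
          rw [hN'e] at hmN'
          simp at hmN'
        exact Or.inl ⟨h1, by omega⟩
      · rintro (⟨h1, h2⟩ | ⟨h1, h2⟩)
        · exact hIcc m h1 h2
        · omega
    · set r := N'.min' hN'ne with hr
      set s := N'.max' hN'ne with hs
      have hrN' : r ∈ N' := N'.min'_mem _
      have hsN' : s ∈ N' := N'.max'_mem _
      have hrN : r ∈ N := (Finset.mem_filter.mp hrN').1
      have hqr : q < r := (Finset.mem_filter.mp hrN').2
      have hsN : s ∈ N := (Finset.mem_filter.mp hsN').1
      have hq1r : q + 1 < r := by
        rcases Nat.lt_or_ge (q + 1) r with h | h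
        · exact h
        · have hre : r = q + 1 := by omega
          rw [hre] at hrN; exact absurd hrN hq1
      have hfill : ∀ t, r ≤ t → t ≤ s → t ∈ N := by
        intro t h1 h2
        by_contra ht
        have h1' : r < t := lt_of_le_of_ne h1 (by rintro rfl; exact ht hrN)
        have h2' : t < s := lt_of_le_of_ne h2 (by rintro rfl; exact ht hsN)
        exact hpat q (q + 1) r t s (by omega) (by omega) h1' h2' hqN hq1 hrN ht hsN
      refine ⟨a, q, r, s, fun m => by omega, fun m => ?_⟩
      constructor
      · intro hm
        have h1 := hamin m hm
        rcases le_or_gt m q with h | h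
        · exact Or.inl ⟨h1, h⟩
        · have hmN' : m ∈ N' := by
            simp only [hN'def, Finset.mem_filter]; exact ⟨hm, h⟩
          exact Or.inr ⟨N'.min'_le m hmN', N'.le_max' m hmN'⟩
      · rintro (⟨h1, h2⟩ | ⟨h1, h2⟩)
        · exact hIcc m h1 h2
        · exact hfill m h1 h2

/-- A subset of `Fin n` containing no pattern `∈,∉,∈,∉,∈` is a disjoint union of two
interval sets. -/
lemma exists_two_intervals (n : ℕ) (X : Set (Fin n))
    (hpat : ∀ x1 x2 x3 x4 x5 : Fin n, x1 < x2 → x2 < x3 → x3 < x4 → x4 < x5 →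
      x1 ∈ X → x2 ∉ X → x3 ∈ X → x4 ∉ X → x5 ∈ X → False) :
    ∃ S T : Set (Fin n), IsIntervalSet n S ∧ IsIntervalSet n T ∧ Disjoint S T ∧
      X = S ∪ T := by
  classical
  set N : Finset ℕ :=
    (Finset.range n).filter (fun m => ∃ h : m < n, (⟨m, h⟩ : Fin n) ∈ X) with hNdef
  have hmemN : ∀ i : Fin n, i ∈ X ↔ i.val ∈ N := by
    intro i
    simp only [hNdef, Finset.mem_filter, Finset.mem_range]
    constructor
    · intro h
      exact ⟨i.isLt, i.isLt, by simpa using h⟩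
    · rintro ⟨-, h, hm⟩
      simpa using hm
  have hpat' : ∀ m1 m2 m3 m4 m5 : ℕ, m1 < m2 → m2 < m3 → m3 < m4 → m4 < m5 →
      m1 ∈ N → m2 ∉ N → m3 ∈ N → m4 ∉ N → m5 ∈ N → False := by
    intro m1 m2 m3 m4 m5 h12 h23 h34 h45 hm1 hm2 hm3 hm4 hm5
    have h5n : m5 < n := Finset.mem_range.mp (Finset.mem_filter.mp hm5).1
    have h1n : m1 < n := by omega
    have h2n : m2 < n := by omega
    have h3n : m3 < n := by omega
    have h4n : m4 < n := by omega
    exact hpat ⟨m1, h1n⟩ ⟨m2, h2n⟩ ⟨m3, h3n⟩ ⟨m4, h4n⟩ ⟨m5, h5n⟩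
      (by simpa [Fin.lt_def] using h12) (by simpa [Fin.lt_def] using h23)
      (by simpa [Fin.lt_def] using h34) (by simpa [Fin.lt_def] using h45)
      ((hmemN _).mpr hm1) (fun hx => hm2 ((hmemN _).mp hx))
      ((hmemN _).mpr hm3) (fun hx => hm4 ((hmemN _).mp hx))
      ((hmemN _).mpr hm5)
  obtain ⟨a, b, c, d, hd, hiff⟩ := nat_core N hpat'
  refine ⟨{i : Fin n | a ≤ i.val ∧ i.val ≤ b}, {i : Fin n | c ≤ i.val ∧ i.val ≤ d},
    ⟨a, b, rfl⟩, ⟨c, d, rfl⟩, ?_, ?_⟩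
  · rw [Set.disjoint_left]
    intro i hi hi'
    exact hd i.val ⟨hi, hi'⟩
  · ext i
    rw [Set.mem_union, hmemN i, hiff i]
    rfl

lemma ssne (a1 b1 a2 b2 : ℕ) (m : ℕ) :
    ((if a1 ≤ m ∧ m ≤ b1 then (1:ℤ) else 0) - (if a2 ≤ m ∧ m ≤ b2 then 1 else 0) ≠ 0) ↔
      ((a1 ≤ m ∧ m ≤ b1) ∧ ¬(a2 ≤ m ∧ m ≤ b2)) ∨
        (¬(a1 ≤ m ∧ m ≤ b1) ∧ (a2 ≤ m ∧ m ≤ b2)) := by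
  split_ifs <;> omega

lemma slne (n a1 b1 a2 b2 : ℕ) (m : ℕ) :
    ((if a1 ≤ m ∧ m ≤ b1 then (1:ℤ) else 0) -
      (if m = n - 1 then 1 else if b2 ≤ m then 2 else if a2 ≤ m then 1 else 0) ≠ 0) ↔
      ((m = n - 1 ∧ ¬(a1 ≤ m ∧ m ≤ b1)) ∨ (m ≠ n - 1 ∧ b2 ≤ m) ∨
        (m ≠ n - 1 ∧ m < b2 ∧ a2 ≤ m ∧ ¬(a1 ≤ m ∧ m ≤ b1)) ∨
        (m ≠ n - 1 ∧ m < b2 ∧ m < a2 ∧ (a1 ≤ m ∧ m ≤ b1))) := by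
  split_ifs <;> omega

lemma lsne (n a1 b1 a2 b2 : ℕ) (m : ℕ) :
    ((if m = n - 1 then (1:ℤ) else if b1 ≤ m then 2 else if a1 ≤ m then 1 else 0) -
      (if a2 ≤ m ∧ m ≤ b2 then 1 else 0) ≠ 0) ↔
      ((m = n - 1 ∧ ¬(a2 ≤ m ∧ m ≤ b2)) ∨ (m ≠ n - 1 ∧ b1 ≤ m) ∨
        (m ≠ n - 1 ∧ m < b1 ∧ a1 ≤ m ∧ ¬(a2 ≤ m ∧ m ≤ b2)) ∨
        (m ≠ n - 1 ∧ m < b1 ∧ m < a1 ∧ (a2 ≤ m ∧ m ≤ b2))) := by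
  split_ifs <;> omega

lemma llne (n a1 b1 a2 b2 : ℕ) (m : ℕ) :
    ((if m = n - 1 then (1:ℤ) else if b1 ≤ m then 2 else if a1 ≤ m then 1 else 0) -
      (if m = n - 1 then 1 else if b2 ≤ m then 2 else if a2 ≤ m then 1 else 0) ≠ 0) ↔
      (m ≠ n - 1 ∧ ((b1 ≤ m ∧ m < b2) ∨ (b2 ≤ m ∧ m < b1) ∨
        (m < b1 ∧ m < b2 ∧ ((a1 ≤ m ∧ m < a2) ∨ (a2 ≤ m ∧ m < a1))))) := by
  split_ifs <;> omega

/-- The support of the difference of two positive roots of type `Cₙ` is a disjoint union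
of at most two sets of consecutive integers (equivalently, it has at most two connected
components in the Dynkin diagram of type `Cₙ`, a path). -/
theorem support_diff_posRoots_typeC (n : ℕ) (hn : 2 ≤ n) (α β : Fin n → ℤ)
    (hα : IsPosRootC n α) (hβ : IsPosRootC n β) :
    ∃ S T : Set (Fin n), IsIntervalSet n S ∧ IsIntervalSet n T ∧ Disjoint S T ∧
      {i : Fin n | α i - β i ≠ 0} = S ∪ T := by
  apply exists_two_intervals
  intro x1 x2 x3 x4 x5 h12 h23 h34 h45 hm1 hm2 hm3 hm4 hm5
  simp only [Set.mem_setOf_eq] at hm1 hm2 hm3 hm4 hm5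
  rw [Fin.lt_def] at h12 h23 h34 h45
  have i1 := x1.isLt
  have i2 := x2.isLt
  have i3 := x3.isLt
  have i4 := x4.isLt
  have i5 := x5.isLt
  rcases hα with ⟨a1, b1, hab1, hb1, rfl⟩ | ⟨a1, b1, hab1, hb1, rfl⟩ <;>
    rcases hβ with ⟨a2, b2, hab2, hb2, rfl⟩ | ⟨a2, b2, hab2, hb2, rfl⟩
  · simp only [ssne] at hm1 hm2 hm3 hm4 hm5
    omega
  · simp only [slne] at hm1 hm2 hm3 hm4 hm5
    omega
  · simp only [lsne] at hm1 hm2 hm3 hm4 hm5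
    omega
  · simp only [llne] at hm1 hm2 hm3 hm4 hm5
    omega
end
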